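/- arXiv:1912.12625 — 6 statements merged into one kernel-verified Lean document; each statement's English description precedes it below -/
import Mathlib

section
/- Let λ > 0, c > 0, t > 0, and define p(u,t) = (e^{−λt}/c) [ −λ F(u,t) + (∂F/∂t)(u,t) + (2/λ)(∂²F/∂t²)(u,t) ], where F(u,t) = ∑_{k=0}^∞ (λ/(2c))^{2k} (c²t² − u²)^k / (k!)². Then p(u,t) ≥ 0 for all u with 0 ≤ u < ct. -/
/-- `F(u,t) = ∑_{k=0}^∞ (λ/(2c))^{2k} (c²t² − u²)^k / (k!)²`,
which equals `I₀((λ/c)√(c²t² − u²))` for `|u| ≤ ct`. -/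
noncomputable def F (lam c u t : ℝ) : ℝ :=
  ∑' k : ℕ, (lam / (2 * c)) ^ (2 * k) * (c ^ 2 * t ^ 2 - u ^ 2) ^ k /
    ((Nat.factorial k : ℝ)) ^ 2

/-- The density of the absolutely continuous component of the planar cyclic motion:
`p(u,t) = (e^{−λt}/c)[−λF + ∂F/∂t + (2/λ)∂²F/∂t²]`. -/
noncomputable def planarDensity (lam c u t : ℝ) : ℝ :=
  Real.exp (-(lam * t)) / c *
    (-(lam * F lam c u t) + deriv (fun s => F lam c u s) t +
      2 / lam * iteratedDeriv 2 (fun s => F lam c u s) t)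

open Nat

namespace PlanarAux

/-- term of the series -/
noncomputable def fk (q c u : ℝ) (k : ℕ) (s : ℝ) : ℝ :=
  q ^ k * (c ^ 2 * s ^ 2 - u ^ 2) ^ k / ((k ! : ℝ)) ^ 2

/-- first derivative term -/
noncomputable def f1 (q c u : ℝ) (k : ℕ) (s : ℝ) : ℝ :=
  q ^ k * k * (2 * c ^ 2) / ((k ! : ℝ)) ^ 2 * ((c ^ 2 * s ^ 2 - u ^ 2) ^ (k - 1) * s)

/-- second derivative term -/
noncomputable def f2 (q c u : ℝ) (k : ℕ) (s : ℝ) : ℝ :=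
  q ^ k * k * (2 * c ^ 2) / ((k ! : ℝ)) ^ 2 *
    (((k - 1 : ℕ) : ℝ) * (c ^ 2 * s ^ 2 - u ^ 2) ^ (k - 1 - 1) * (2 * c ^ 2 * s) * s
      + (c ^ 2 * s ^ 2 - u ^ 2) ^ (k - 1))

lemma hasDerivAt_A (c u s : ℝ) :
    HasDerivAt (fun s : ℝ => c ^ 2 * s ^ 2 - u ^ 2) (2 * c ^ 2 * s) s := by
  have h := ((hasDerivAt_pow 2 s).const_mul (c ^ 2)).sub_const (u ^ 2)
  refine h.congr_deriv ?_
  push_cast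
  ring

lemma hasDerivAt_fk (q c u : ℝ) (k : ℕ) (s : ℝ) :
    HasDerivAt (fk q c u k) (f1 q c u k s) s := by
  have h := (((hasDerivAt_A c u s).pow k).const_mul (q ^ k)).div_const ((k ! : ℝ) ^ 2)
  have h2 : q ^ k * (↑k * (c ^ 2 * s ^ 2 - u ^ 2) ^ (k - 1) * (2 * c ^ 2 * s)) / ((k ! : ℝ)) ^ 2
      = f1 q c u k s := by unfold f1; ring
  rw [← h2]; exact h

lemma hasDerivAt_f1 (q c u : ℝ) (k : ℕ) (s : ℝ) :
    HasDerivAt (f1 q c u k) (f2 q c u k s) s := by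
  have h := (((hasDerivAt_A c u s).pow (k - 1)).mul (hasDerivAt_id s)).const_mul
    (q ^ k * k * (2 * c ^ 2) / ((k ! : ℝ)) ^ 2)
  have h2 : q ^ k * ↑k * (2 * c ^ 2) / ((k ! : ℝ)) ^ 2 *
      (↑(k - 1) * (c ^ 2 * s ^ 2 - u ^ 2) ^ (k - 1 - 1) * (2 * c ^ 2 * s) * s
        + (c ^ 2 * s ^ 2 - u ^ 2) ^ (k - 1) * 1) = f2 q c u k s := by unfold f2; ring
  rw [← h2]; exact h

lemma summable_Cpow (C x : ℝ) : Summable (fun k : ℕ => C * x ^ k / (k ! : ℝ)) := by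
  simpa [mul_div_assoc] using (Real.summable_pow_div_factorial x).mul_left C

lemma summable_of_bound (g : ℕ → ℝ) (C x : ℝ)
    (h : ∀ k, |g k| ≤ C * x ^ k / (k ! : ℝ)) : Summable g :=
  Summable.of_norm_bounded (summable_Cpow C x) h

lemma nat_le_two_pow (k : ℕ) : (k : ℝ) ≤ 2 ^ k := by
  exact_mod_cast (Nat.lt_two_pow_self (n := k)).le

lemma one_le_fact (k : ℕ) : (1 : ℝ) ≤ (k ! : ℝ) := by
  exact_mod_cast Nat.one_le_iff_ne_zero.mpr k.factorial_ne_zero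

lemma fact_le_fact_sq (k : ℕ) : (k ! : ℝ) ≤ (k ! : ℝ) ^ 2 :=
  le_self_pow₀ (one_le_fact k) two_ne_zero

lemma abs_mul_le {a b a' b' : ℝ} (h : |a| ≤ a') (h' : |b| ≤ b') : |a * b| ≤ a' * b' := by
  rw [abs_mul]
  exact mul_le_mul h h' (abs_nonneg _) ((abs_nonneg a).trans h)

/-- bound for `fk` -/
lemma fk_bound {q c u M : ℝ} (hq : 0 ≤ q) (hM : 1 ≤ M) {s : ℝ}
    (hA : |c ^ 2 * s ^ 2 - u ^ 2| ≤ M) (k : ℕ) :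
    |fk q c u k s| ≤ 1 * (q * M) ^ k / (k ! : ℝ) := by
  have hfk : (0:ℝ) < (k ! : ℝ) := by positivity
  calc |fk q c u k s| = q ^ k * |c ^ 2 * s ^ 2 - u ^ 2| ^ k / ((k ! : ℝ)) ^ 2 := by
        unfold fk
        rw [abs_div, abs_mul, abs_pow, abs_pow, abs_of_nonneg hq,
          abs_of_nonneg (by positivity : (0:ℝ) ≤ (k ! : ℝ) ^ 2)]
    _ ≤ q ^ k * M ^ k / ((k ! : ℝ)) ^ 2 := by
        gcongr
    _ ≤ q ^ k * M ^ k / (k ! : ℝ) := by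
        gcongr <;> first | positivity | exact fact_le_fact_sq k
    _ = 1 * (q * M) ^ k / (k ! : ℝ) := by rw [mul_pow]; ring

/-- bound for `f1` -/
lemma f1_bound {q c u M R : ℝ} (hq : 0 ≤ q) (hM : 1 ≤ M) (hR : 0 ≤ R) {s : ℝ}
    (hs : |s| ≤ R) (hA : |c ^ 2 * s ^ 2 - u ^ 2| ≤ M) (k : ℕ) :
    |f1 q c u k s| ≤ (2 * c ^ 2 * R) * (2 * (q * M)) ^ k / (k ! : ℝ) := by
  have hfk : (0:ℝ) < (k ! : ℝ) := by positivity
  have hC : (0:ℝ) ≤ q ^ k * ↑k * (2 * c ^ 2) / ((k ! : ℝ)) ^ 2 := by positivity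
  calc |f1 q c u k s|
      = q ^ k * ↑k * (2 * c ^ 2) / ((k ! : ℝ)) ^ 2 * |(c ^ 2 * s ^ 2 - u ^ 2) ^ (k - 1) * s| := by
        unfold f1; rw [abs_mul, abs_of_nonneg hC]
    _ ≤ q ^ k * ↑k * (2 * c ^ 2) / ((k ! : ℝ)) ^ 2 * (M ^ (k - 1) * R) := by
        refine mul_le_mul_of_nonneg_left ?_ hC
        refine abs_mul_le ?_ hs
        rw [abs_pow]
        exact pow_le_pow_left₀ (abs_nonneg _) hA _
    _ = (2 * c ^ 2 * R) * ((k : ℝ) * (q ^ k * M ^ (k - 1))) / ((k ! : ℝ)) ^ 2 := by ring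
    _ ≤ (2 * c ^ 2 * R) * ((2:ℝ) ^ k * (q ^ k * M ^ k)) / ((k ! : ℝ)) ^ 2 := by
        gcongr <;>
          first
            | positivity
            | exact nat_le_two_pow k
            | exact hM | omega
    _ ≤ (2 * c ^ 2 * R) * ((2:ℝ) ^ k * (q ^ k * M ^ k)) / (k ! : ℝ) := by
        gcongr <;> first | positivity | exact fact_le_fact_sq k
    _ = (2 * c ^ 2 * R) * (2 * (q * M)) ^ k / (k ! : ℝ) := by
        rw [mul_pow, mul_pow]
        try ring

/-- bound for `f2` -/
lemma f2_bound {q c u M R : ℝ} (hq : 0 ≤ q) (hc : 0 ≤ c) (hM : 1 ≤ M) (hR : 1 ≤ R) {s : ℝ}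
    (hs : |s| ≤ R) (hA : |c ^ 2 * s ^ 2 - u ^ 2| ≤ M) (k : ℕ) :
    |f2 q c u k s| ≤ (2 * c ^ 2 * (2 * c ^ 2 * R * R + 1)) * (4 * (q * M)) ^ k / (k ! : ℝ) := by
  have hfk : (0:ℝ) < (k ! : ℝ) := by positivity
  have hC : (0:ℝ) ≤ q ^ k * ↑k * (2 * c ^ 2) / ((k ! : ℝ)) ^ 2 := by positivity
  have hR0 : (0:ℝ) ≤ R := by linarith
  have hAp : ∀ m : ℕ, |(c ^ 2 * s ^ 2 - u ^ 2) ^ m| ≤ M ^ m := fun m => by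
    rw [abs_pow]; exact pow_le_pow_left₀ (abs_nonneg _) hA _
  have h2cs : |2 * c ^ 2 * s| ≤ 2 * c ^ 2 * R := by
    rw [abs_mul, abs_of_nonneg (by positivity : (0:ℝ) ≤ 2 * c ^ 2)]
    exact mul_le_mul_of_nonneg_left hs (by positivity)
  have hkk : |((k - 1 : ℕ) : ℝ)| ≤ ((k - 1 : ℕ) : ℝ) := le_of_eq (abs_of_nonneg (by positivity))
  have hkk2 : ((k - 1 : ℕ) : ℝ) ≤ (2:ℝ) ^ k := by
    calc ((k - 1 : ℕ) : ℝ) ≤ (k : ℝ) := by exact_mod_cast Nat.sub_le k 1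
      _ ≤ (2:ℝ) ^ k := nat_le_two_pow k
  have hk4 : (k : ℝ) ≤ (4:ℝ) ^ k := by
    calc (k : ℝ) ≤ (2:ℝ) ^ k := nat_le_two_pow k
      _ ≤ (4:ℝ) ^ k := by gcongr <;> norm_num
  calc |f2 q c u k s|
      = q ^ k * ↑k * (2 * c ^ 2) / ((k ! : ℝ)) ^ 2 *
          |((k - 1 : ℕ) : ℝ) * (c ^ 2 * s ^ 2 - u ^ 2) ^ (k - 1 - 1) * (2 * c ^ 2 * s) * s
            + (c ^ 2 * s ^ 2 - u ^ 2) ^ (k - 1)| := by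
        unfold f2; rw [abs_mul, abs_of_nonneg hC]
    _ ≤ q ^ k * ↑k * (2 * c ^ 2) / ((k ! : ℝ)) ^ 2 *
          (((k - 1 : ℕ) : ℝ) * M ^ (k - 1 - 1) * (2 * c ^ 2 * R) * R + M ^ (k - 1)) := by
        refine mul_le_mul_of_nonneg_left ((abs_add_le _ _).trans (add_le_add ?_ (hAp _))) hC
        exact abs_mul_le (abs_mul_le (abs_mul_le hkk (hAp _)) h2cs) hs
    _ = q ^ k / ((k ! : ℝ)) ^ 2 * (2 * c ^ 2) *
          ((k : ℝ) * ((k - 1 : ℕ) : ℝ) * M ^ (k - 1 - 1) * (2 * c ^ 2 * R) * R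
            + (k : ℝ) * M ^ (k - 1)) := by ring
    _ ≤ q ^ k / ((k ! : ℝ)) ^ 2 * (2 * c ^ 2) *
          ((2:ℝ) ^ k * (2:ℝ) ^ k * M ^ k * (2 * c ^ 2 * R) * R
            + (4:ℝ) ^ k * M ^ k) := by
        gcongr <;>
          first
            | positivity
            | exact nat_le_two_pow k
            | exact hkk2
            | exact hk4
            | exact hM | omega
    _ ≤ q ^ k / (k ! : ℝ) * (2 * c ^ 2) *
          ((2:ℝ) ^ k * (2:ℝ) ^ k * M ^ k * (2 * c ^ 2 * R) * R
            + (4:ℝ) ^ k * M ^ k) := by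
        gcongr <;> first | positivity | exact fact_le_fact_sq k
    _ = (2 * c ^ 2 * (2 * c ^ 2 * R * R + 1)) * (4 * (q * M)) ^ k / (k ! : ℝ) := by
        have h4 : (4:ℝ) ^ k = 2 ^ k * 2 ^ k := by rw [← mul_pow]; norm_num
        have h4' : (4 * (q * M)) ^ k = 4 ^ k * (q ^ k * M ^ k) := by
          simp [mul_pow]
        rw [h4', h4]; ring

/-- The key termwise inequality after index shift. -/
lemma key (q lam c t u : ℝ) (hlam : 0 < lam) (hc : 0 < c) (ht : 0 < t)
    (hq : q = lam ^ 2 / (4 * c ^ 2)) (hA : 0 < c ^ 2 * t ^ 2 - u ^ 2) (k : ℕ) :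
    lam * fk q c u k t ≤ f1 q c u (k + 1) t + 2 / lam * f2 q c u (k + 1) t := by
  set A := c ^ 2 * t ^ 2 - u ^ 2 with hAdef
  have hAle : A ≤ c ^ 2 * t ^ 2 := by
    rw [hAdef]; nlinarith [sq_nonneg u]
  have hfac : (((k + 1)! : ℕ) : ℝ) = ((k : ℝ) + 1) * (k ! : ℝ) := by
    rw [Nat.factorial_succ]; push_cast; ring
  have hfk : (0:ℝ) < (k ! : ℝ) := by positivity
  have hk1 : (0:ℝ) < (k : ℝ) + 1 := by positivity
  have core : (k : ℝ) * A ^ k ≤ 2 * (k : ℝ) * (c ^ 2 * t ^ 2) * A ^ (k - 1) := by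
    cases k with
    | zero => simp
    | succ m =>
      rw [pow_succ]
      simp only [Nat.add_sub_cancel]
      have hAm : (0:ℝ) ≤ A ^ m := pow_nonneg hA.le m
      have hm1 : (0:ℝ) ≤ ((m : ℝ) + 1) := by positivity
      have step : A ^ m * A ≤ A ^ m * (c ^ 2 * t ^ 2) := mul_le_mul_of_nonneg_left hAle hAm
      have hct0 : (0:ℝ) ≤ c ^ 2 * t ^ 2 := by positivity
      push_cast
      calc ((m:ℝ) + 1) * (A ^ m * A) ≤ ((m:ℝ) + 1) * (A ^ m * (c ^ 2 * t ^ 2)) :=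
            mul_le_mul_of_nonneg_left step hm1
        _ ≤ 2 * ((m:ℝ) + 1) * (c ^ 2 * t ^ 2) * A ^ m := by
            nlinarith [mul_nonneg hm1 (mul_nonneg hAm hct0)]
  have main : ((k : ℝ) + 1) * A ^ k ≤
      lam * t * A ^ k / 2 + 2 * (k : ℝ) * (c ^ 2 * t ^ 2) * A ^ (k - 1) + A ^ k := by
    have h0 : (0:ℝ) ≤ lam * t * A ^ k / 2 := by positivity
    nlinarith [core]
  have hLHS : lam * fk q c u k t =
      (lam * (q ^ k / (((k : ℝ) + 1) * (k ! : ℝ) ^ 2))) * (((k : ℝ) + 1) * A ^ k) := by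
    unfold fk
    field_simp
    ring
  have hRHS : f1 q c u (k + 1) t + 2 / lam * f2 q c u (k + 1) t =
      (lam * (q ^ k / (((k : ℝ) + 1) * (k ! : ℝ) ^ 2))) *
        (lam * t * A ^ k / 2 + 2 * (k : ℝ) * (c ^ 2 * t ^ 2) * A ^ (k - 1) + A ^ k) := by
    unfold f1 f2
    simp only [Nat.add_sub_cancel, hfac]
    rw [hq, pow_succ]
    push_cast
    field_simp
    ring
  have hq0 : (0:ℝ) ≤ q := by rw [hq]; positivity
  rw [hLHS, hRHS]
  exact mul_le_mul_of_nonneg_left main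
    (mul_nonneg hlam.le (div_nonneg (pow_nonneg hq0 k) (by positivity)))

end PlanarAux

open PlanarAux

theorem planarDensity_nonneg
    (lam c t : ℝ) (hlam : 0 < lam) (hc : 0 < c) (ht : 0 < t) :
    ∀ u : ℝ, 0 ≤ u → u < c * t → 0 ≤ planarDensity lam c u t := by
  intro u hu hut
  have hc2 : (0:ℝ) < c ^ 2 := by positivity
  set q : ℝ := lam ^ 2 / (4 * c ^ 2) with hq
  have hq0 : (0:ℝ) ≤ q := by positivity
  set R : ℝ := t + 1 with hR
  have hR1 : (1:ℝ) ≤ R := by rw [hR]; linarith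
  set M : ℝ := c ^ 2 * R ^ 2 + u ^ 2 + 1 with hM
  have hM1 : (1:ℝ) ≤ M := by
    rw [hM]; nlinarith [sq_nonneg u, sq_nonneg (c * R)]
  set I : Set ℝ := Set.Ioo (-R) R with hI
  have htI : t ∈ I := by
    constructor <;> simp only [hR] <;> linarith
  have hIopen : IsOpen I := isOpen_Ioo
  have hIconn : IsPreconnected I := (convex_Ioo _ _).isPreconnected
  have hbound : ∀ s ∈ I, |s| ≤ R ∧ |c ^ 2 * s ^ 2 - u ^ 2| ≤ M := by
    intro s hs
    have h1 : |s| ≤ R := abs_le.mpr ⟨hs.1.le, hs.2.le⟩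
    refine ⟨h1, ?_⟩
    have h2 : s ^ 2 ≤ R ^ 2 := by
      rw [← sq_abs]
      exact pow_le_pow_left₀ (abs_nonneg s) h1 2
    rw [abs_sub_le_iff]
    constructor
    · rw [hM]; nlinarith [sq_nonneg u]
    · rw [hM]; nlinarith [sq_nonneg s, sq_nonneg u, mul_nonneg hc2.le (sq_nonneg s)]
  -- summability data
  have hsum_u1 : Summable (fun k : ℕ => (2 * c ^ 2 * R) * (2 * (q * M)) ^ k / (k ! : ℝ)) :=
    summable_Cpow _ _
  have hsum_u2 : Summable
      (fun k : ℕ => (2 * c ^ 2 * (2 * c ^ 2 * R * R + 1)) * (4 * (q * M)) ^ k / (k ! : ℝ)) :=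
    summable_Cpow _ _
  have hsum_fkt : Summable (fun k => fk q c u k t) :=
    summable_of_bound _ 1 (q * M) (fun k => fk_bound hq0 hM1 (hbound t htI).2 k)
  have hsum_f1t : Summable (fun k => f1 q c u k t) :=
    summable_of_bound _ _ _
      (fun k => f1_bound hq0 hM1 (by linarith) (hbound t htI).1 (hbound t htI).2 k)
  have hsum_f2t : Summable (fun k => f2 q c u k t) :=
    summable_of_bound _ _ _
      (fun k => f2_bound hq0 hc.le hM1 hR1 (hbound t htI).1 (hbound t htI).2 k)
  -- termwise derivatives
  have hd1 : ∀ y ∈ I, HasDerivAt (fun z => ∑' k, fk q c u k z) (∑' k, f1 q c u k y) y := by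
    intro y hy
    refine hasDerivAt_tsum_of_isPreconnected hsum_u1 hIopen hIconn
      (fun k z _ => hasDerivAt_fk q c u k z) ?_ htI hsum_fkt hy
    intro k z hz
    exact f1_bound hq0 hM1 (by linarith) (hbound z hz).1 (hbound z hz).2 k
  have hd2 : ∀ y ∈ I, HasDerivAt (fun z => ∑' k, f1 q c u k z) (∑' k, f2 q c u k y) y := by
    intro y hy
    refine hasDerivAt_tsum_of_isPreconnected hsum_u2 hIopen hIconn
      (fun k z _ => hasDerivAt_f1 q c u k z) ?_ htI hsum_f1t hy
    intro k z hz
    exact f2_bound hq0 hc.le hM1 hR1 (hbound z hz).1 (hbound z hz).2 k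
  -- rewrite F as the tsum of fk
  have hFeq : (fun s => F lam c u s) = fun s => ∑' k, fk q c u k s := by
    funext s
    refine tsum_congr fun k => ?_
    unfold fk
    rw [pow_mul]
    congr 2
    rw [hq, div_pow]
    congr 1
    ring
  have hderiv1 : deriv (fun s => F lam c u s) t = ∑' k, f1 q c u k t := by
    rw [hFeq]; exact (hd1 t htI).deriv
  have hev : deriv (fun s => ∑' k, fk q c u k s) =ᶠ[nhds t] fun s => ∑' k, f1 q c u k s := by
    filter_upwards [hIopen.mem_nhds htI] with y hy using (hd1 y hy).deriv
  have hderiv2 : iteratedDeriv 2 (fun s => F lam c u s) t = ∑' k, f2 q c u k t := by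
    rw [hFeq, iteratedDeriv_succ, iteratedDeriv_one, hev.deriv_eq]
    exact (hd2 t htI).deriv
  have hF0 : F lam c u t = ∑' k, fk q c u k t := congrFun hFeq t
  unfold planarDensity
  rw [hF0, hderiv1, hderiv2]
  have hE : (0:ℝ) ≤ Real.exp (-(lam * t)) / c := by positivity
  refine mul_nonneg hE ?_
  have hAt : (0:ℝ) < c ^ 2 * t ^ 2 - u ^ 2 := by nlinarith [mul_pos hc ht]
  set p : ℕ → ℝ := fun k => f1 q c u k t + 2 / lam * f2 q c u k t with hp
  have hsum_p : Summable p := hsum_f1t.add (hsum_f2t.mul_left _)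
  have hp0 : p 0 = 0 := by simp [hp, f1, f2]
  have hkey : ∀ k, lam * fk q c u k t ≤ p (k + 1) :=
    fun k => key q lam c t u hlam hc ht hq hAt k
  have h1 : lam * (∑' k, fk q c u k t) = ∑' k, lam * fk q c u k t := tsum_mul_left.symm
  have h2 : (∑' k, f1 q c u k t) + 2 / lam * (∑' k, f2 q c u k t) = ∑' k, p k := by
    rw [← tsum_mul_left]
    exact (Summable.tsum_add hsum_f1t (hsum_f2t.mul_left _)).symm
  have h3 : (∑' k, p k) = ∑' k, p (k + 1) := by
    rw [Summable.tsum_eq_zero_add hsum_p, hp0, zero_add]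
  have h4 : (∑' k, lam * fk q c u k t) ≤ ∑' k, p (k + 1) :=
    Summable.tsum_le_tsum hkey (hsum_fkt.mul_left lam) ((summable_nat_add_iff 1).mpr hsum_p)
  have h5 : lam * (∑' k, fk q c u k t) ≤ (∑' k, f1 q c u k t) + 2 / lam * (∑' k, f2 q c u k t) := by
    rw [h1, h2, h3]; exact h4
  linarith
end

section
/- Let λ > 0, c > 0, t > 0, and define p(u,t) = (e^{−λt}/c) [ −λ F(u,t) + (∂F/∂t)(u,t) + (2/λ)(∂²F/∂t²)(u,t) ], where F(u,t) = ∑_{k=0}^∞ (λ/(2c))^{2k} (c²t² − u²)^k / (k!)². Then the mean value of the process 𝒰(t), namely ∫₀^{ct} u · p(u,t) du + ct · e^{−λt}(1 + λt) (the last term accounting for the singular mass at u = ct), equals e^{−λt} [ (ct + 2c/λ) I₀(λt) + ct I₁(λt) − 2c/λ ]. -/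
/-- The modified Bessel function of the first kind of order zero. -/
noncomputable def besselI0 (x : ℝ) : ℝ :=
  ∑' k : ℕ, (x / 2) ^ (2 * k) / ((Nat.factorial k : ℝ)) ^ 2

/-- The modified Bessel function of the first kind of order one. -/
noncomputable def besselI1 (x : ℝ) : ℝ :=
  ∑' k : ℕ, (x / 2) ^ (2 * k + 1) / ((Nat.factorial k : ℝ) * (Nat.factorial (k + 1) : ℝ))

open Filter MeasureTheory
open scoped Topology

-- ============ auxiliary machinery ============

def Gr (b : ℕ → ℝ) (M B : ℝ) : Prop := ∀ k : ℕ, |b k| ≤ M * B ^ k / (Nat.factorial k : ℝ)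

noncomputable def S (b : ℕ → ℝ) (c u s : ℝ) : ℝ := ∑' k : ℕ, b k * (c ^ 2 * s ^ 2 - u ^ 2) ^ k

lemma summable_bound (M B r : ℝ) :
    Summable (fun k : ℕ => M * B ^ k / (Nat.factorial k : ℝ) * r ^ k) :=
  ((Real.summable_pow_div_factorial (B * r)).mul_left M).congr
    (fun k => by rw [mul_pow]; ring)

lemma Gr.summable {b : ℕ → ℝ} {M B : ℝ} (hb : Gr b M B) (y : ℝ) :
    Summable fun k : ℕ => b k * y ^ k := by
  refine Summable.of_norm_bounded (summable_bound M B |y|) (fun k => ?_)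
  rw [norm_mul, norm_pow, Real.norm_eq_abs, Real.norm_eq_abs]
  exact mul_le_mul_of_nonneg_right (hb k) (by positivity)

lemma Gr.shift {b : ℕ → ℝ} {M B : ℝ} (hb : Gr b M B) :
    Gr (fun k => ((k : ℝ) + 1) * b (k + 1)) (M * B) B := by
  intro k
  have h := hb (k + 1)
  have hk : (0:ℝ) < (k:ℝ) + 1 := by positivity
  rw [abs_mul, abs_of_pos hk]
  calc ((k:ℝ) + 1) * |b (k+1)| ≤ ((k:ℝ)+1) * (M * B ^ (k+1) / (Nat.factorial (k+1) : ℝ)) := by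
        exact mul_le_mul_of_nonneg_left h hk.le
    _ = M * B * B ^ k / (Nat.factorial k : ℝ) := by
        rw [Nat.factorial_succ]
        push_cast
        have h1 : ((Nat.factorial k : ℝ)) ≠ 0 := Nat.cast_ne_zero.2 (Nat.factorial_ne_zero k)
        field_simp
        ring

lemma Gr.const_mul {b : ℕ → ℝ} {M B : ℝ} (hb : Gr b M B) (a : ℝ) :
    Gr (fun k => a * b k) (|a| * M) B := by
  intro k
  rw [abs_mul]
  calc |a| * |b k| ≤ |a| * (M * B ^ k / (Nat.factorial k : ℝ)) :=
        mul_le_mul_of_nonneg_left (hb k) (abs_nonneg a)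
    _ = |a| * M * B ^ k / (Nat.factorial k : ℝ) := by ring

lemma Gr.add {b b' : ℕ → ℝ} {M M' B : ℝ} (hb : Gr b M B) (hb' : Gr b' M' B) :
    Gr (fun k => b k + b' k) (M + M') B := by
  intro k
  calc |b k + b' k| ≤ |b k| + |b' k| := abs_add_le _ _
    _ ≤ M * B ^ k / (Nat.factorial k : ℝ) + M' * B ^ k / (Nat.factorial k : ℝ) :=
        add_le_add (hb k) (hb' k)
    _ = (M + M') * B ^ k / (Nat.factorial k : ℝ) := by ring

lemma hasDerivAt_term (b : ℕ → ℝ) (c u : ℝ) (k : ℕ) (x : ℝ) :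
    HasDerivAt (fun s => b k * (c ^ 2 * s ^ 2 - u ^ 2) ^ k)
      (b k * ((k : ℝ) * (c ^ 2 * x ^ 2 - u ^ 2) ^ (k - 1) * (2 * c ^ 2 * x))) x := by
  have h1 : HasDerivAt (fun s : ℝ => c ^ 2 * s ^ 2 - u ^ 2) (2 * c ^ 2 * x) x := by
    have h := ((hasDerivAt_pow 2 x).const_mul (c ^ 2)).sub_const (u ^ 2)
    refine h.congr_deriv ?_
    push_cast
    ring
  exact ((hasDerivAt_pow k _).comp x h1).const_mul (b k)

lemma hasDerivAt_S {b : ℕ → ℝ} {M B : ℝ} (hM : 0 ≤ M) (hB : 0 ≤ B)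
    (hb : Gr b M B) (c u t : ℝ) :
    HasDerivAt (fun s => S b c u s)
      (2 * c ^ 2 * t * S (fun k => ((k : ℝ) + 1) * b (k + 1)) c u t) t := by
  have hRpos : (0:ℝ) < |t| + 1 := by positivity
  have hr1 : (1:ℝ) ≤ c ^ 2 * (|t| + 1) ^ 2 + u ^ 2 + 1 := by
    nlinarith [sq_nonneg (c * (|t|+1)), sq_nonneg u]
  set R : ℝ := |t| + 1 with hRdef
  set r : ℝ := c ^ 2 * R ^ 2 + u ^ 2 + 1 with hrdef
  have hr0 : (0:ℝ) < r := lt_of_lt_of_le one_pos hr1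
  have hub_sum : Summable (fun k : ℕ =>
      2 * c ^ 2 * R * M * (2 * (B * r)) ^ k / (Nat.factorial k : ℝ)) :=
    ((Real.summable_pow_div_factorial (2 * (B * r))).mul_left (2 * c ^ 2 * R * M)).congr
      (fun k => by ring)
  have hX : ∀ x ∈ Metric.ball (0:ℝ) R, |c ^ 2 * x ^ 2 - u ^ 2| ≤ r := by
    intro x hx
    rw [Metric.mem_ball, Real.dist_eq, sub_zero] at hx
    have hx2 : x ^ 2 ≤ R ^ 2 := by
      rw [← sq_abs x]; exact pow_le_pow_left₀ (abs_nonneg x) hx.le 2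
    rw [abs_le]
    have hre : r = c ^ 2 * R ^ 2 + u ^ 2 + 1 := hrdef
    constructor <;> nlinarith [sq_nonneg x, sq_nonneg c, sq_nonneg u, sq_nonneg (c * x)]
  have hbound : ∀ (k : ℕ) (x : ℝ), x ∈ Metric.ball (0:ℝ) R →
      ‖b k * ((k : ℝ) * (c ^ 2 * x ^ 2 - u ^ 2) ^ (k - 1) * (2 * c ^ 2 * x))‖ ≤
        2 * c ^ 2 * R * M * (2 * (B * r)) ^ k / (Nat.factorial k : ℝ) := by
    intro k x hx
    have hxR : |x| ≤ R := by
      rw [Metric.mem_ball, Real.dist_eq, sub_zero] at hx; exact hx.le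
    have h2 : |c ^ 2 * x ^ 2 - u ^ 2| ^ (k - 1) ≤ r ^ k :=
      (pow_le_pow_left₀ (abs_nonneg _) (hX x hx) _).trans
        (pow_le_pow_right₀ hr1 (Nat.sub_le k 1))
    have hk2 : (k : ℝ) ≤ 2 ^ k := by exact_mod_cast (Nat.lt_two_pow_self (n := k)).le
    have e1 : 2 * c ^ 2 * R * M * (2 * (B * r)) ^ k / (Nat.factorial k : ℝ)
        = (M * B ^ k / (Nat.factorial k : ℝ)) * (((2:ℝ) ^ k * r ^ k) * (2 * c ^ 2 * R)) := by
      rw [mul_pow, mul_pow]; field_simp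
    rw [Real.norm_eq_abs, abs_mul, e1]
    refine mul_le_mul (hb k) ?_ (abs_nonneg _) (by positivity)
    rw [abs_mul, abs_mul]
    have h3 : |(k:ℝ)| * |c ^ 2 * x ^ 2 - u ^ 2| ^ (k - 1) ≤ (2:ℝ) ^ k * r ^ k := by
      rw [abs_of_nonneg (Nat.cast_nonneg k)]
      exact mul_le_mul hk2 h2 (by positivity) (by positivity)
    have h4 : |2 * c ^ 2 * x| ≤ 2 * c ^ 2 * R := by
      rw [abs_mul, abs_of_nonneg (by positivity : (0:ℝ) ≤ 2 * c ^ 2)]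
      exact mul_le_mul_of_nonneg_left hxR (by positivity)
    rw [abs_pow]
    exact mul_le_mul h3 h4 (abs_nonneg _) (by positivity)
  have hptwise : ∀ x ∈ Metric.ball (0:ℝ) R,
      Tendsto (fun N => ∑ k ∈ Finset.range N, b k * (c ^ 2 * x ^ 2 - u ^ 2) ^ k) atTop
        (𝓝 (S b c u x)) := fun x _ => (hb.summable _).hasSum.tendsto_sum_nat
  have hderiv : ∀ᶠ N in (atTop : Filter ℕ), ∀ x ∈ Metric.ball (0:ℝ) R,
      HasDerivAt (fun s => ∑ k ∈ Finset.range N, b k * (c ^ 2 * s ^ 2 - u ^ 2) ^ k)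
        (∑ k ∈ Finset.range N,
          b k * ((k : ℝ) * (c ^ 2 * x ^ 2 - u ^ 2) ^ (k - 1) * (2 * c ^ 2 * x))) x := by
    refine Eventually.of_forall (fun N x _ => ?_)
    exact HasDerivAt.fun_sum (fun k _ => hasDerivAt_term b c u k x)
  have huniform : TendstoUniformlyOn
      (fun N x => ∑ k ∈ Finset.range N,
        b k * ((k : ℝ) * (c ^ 2 * x ^ 2 - u ^ 2) ^ (k - 1) * (2 * c ^ 2 * x)))
      (fun x => ∑' k : ℕ, b k * ((k : ℝ) * (c ^ 2 * x ^ 2 - u ^ 2) ^ (k - 1) * (2 * c ^ 2 * x)))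
      atTop (Metric.ball (0:ℝ) R) :=
    tendstoUniformlyOn_tsum_nat hub_sum (fun k x hx => hbound k x hx)
  have htmem : t ∈ Metric.ball (0:ℝ) R := by
    rw [Metric.mem_ball, Real.dist_eq, sub_zero]; exact lt_add_one _
  have key := hasDerivAt_of_tendstoUniformlyOn Metric.isOpen_ball huniform hderiv hptwise htmem
  have hsum' : Summable (fun k : ℕ =>
      b k * ((k : ℝ) * (c ^ 2 * t ^ 2 - u ^ 2) ^ (k - 1) * (2 * c ^ 2 * t))) :=
    Summable.of_norm_bounded hub_sum (fun k => hbound k t htmem)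
  have e2 : (∑' k : ℕ, b k * ((k : ℝ) * (c ^ 2 * t ^ 2 - u ^ 2) ^ (k - 1) * (2 * c ^ 2 * t)))
      = 2 * c ^ 2 * t * S (fun k => ((k : ℝ) + 1) * b (k + 1)) c u t := by
    rw [hsum'.tsum_eq_zero_add]
    simp only [Nat.cast_zero, zero_mul, mul_zero, zero_add, Nat.cast_succ, Nat.add_sub_cancel]
    rw [S, ← tsum_mul_left]
    exact tsum_congr (fun k => by push_cast; ring)
  rw [e2] at key
  exact key

lemma integral_term (b : ℕ → ℝ) {c t : ℝ} (k : ℕ) :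
    ∫ u in (0:ℝ)..(c * t), u * (b k * (c ^ 2 * t ^ 2 - u ^ 2) ^ k)
      = b k * (c ^ 2 * t ^ 2) ^ (k + 1) / (2 * ((k : ℝ) + 1)) := by
  have hderiv : ∀ x : ℝ, HasDerivAt
      (fun u : ℝ => -(b k) * (c ^ 2 * t ^ 2 - u ^ 2) ^ (k + 1) / (2 * ((k : ℝ) + 1)))
      (x * (b k * (c ^ 2 * t ^ 2 - x ^ 2) ^ k)) x := by
    intro x
    have h1 : HasDerivAt (fun u : ℝ => c ^ 2 * t ^ 2 - u ^ 2) (-(2 * x)) x := by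
      have h := (hasDerivAt_pow 2 x).const_sub (c ^ 2 * t ^ 2)
      refine h.congr_deriv ?_
      push_cast; ring
    have h2 := (((hasDerivAt_pow (k + 1) _).comp x h1).const_mul (-(b k))).div_const
      (2 * ((k : ℝ) + 1))
    refine h2.congr_deriv ?_
    rw [Nat.succ_sub_one]
    push_cast
    have hne : 2 * ((k : ℝ) + 1) ≠ 0 := by positivity
    field_simp
  have hcont : Continuous fun u : ℝ => u * (b k * (c ^ 2 * t ^ 2 - u ^ 2) ^ k) := by
    continuity
  have h := intervalIntegral.integral_eq_sub_of_hasDerivAt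
    (f := fun u : ℝ => -(b k) * (c ^ 2 * t ^ 2 - u ^ 2) ^ (k + 1) / (2 * ((k : ℝ) + 1)))
    (fun x _ => hderiv x) (hcont.intervalIntegrable 0 (c * t))
  rw [h]
  have hct : c ^ 2 * t ^ 2 - (c * t) ^ 2 = 0 := by ring
  simp only [hct, zero_pow (Nat.succ_ne_zero k)]
  ring

lemma integral_S {b : ℕ → ℝ} {M B : ℝ} (hM : 0 ≤ M) (hB : 0 ≤ B) (hb : Gr b M B)
    {c t : ℝ} (hc : 0 < c) (ht : 0 < t) :
    ∫ u in (0:ℝ)..(c * t), u * S b c u t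
      = ∑' k : ℕ, b k * (c ^ 2 * t ^ 2) ^ (k + 1) / (2 * ((k : ℝ) + 1)) := by
  have ha : (0:ℝ) ≤ c * t := by positivity
  have hsw : ∑' k : ℕ, (∫ u in Set.Ioc (0:ℝ) (c*t), u * (b k * (c ^ 2 * t ^ 2 - u ^ 2) ^ k))
      = ∫ u in Set.Ioc (0:ℝ) (c*t), ∑' k : ℕ, u * (b k * (c ^ 2 * t ^ 2 - u ^ 2) ^ k) := by
    apply integral_tsum_of_summable_integral_norm
    · intro k
      exact (Continuous.mul continuous_id (by continuity)).integrableOn_Ioc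
    · have hboundk : ∀ k : ℕ, (∫ u in Set.Ioc (0:ℝ) (c*t),
          ‖u * (b k * (c ^ 2 * t ^ 2 - u ^ 2) ^ k)‖)
          ≤ M * B ^ k / (Nat.factorial k : ℝ) * (c ^ 2 * t ^ 2) ^ k * ((c*t) * (c*t)) := by
        intro k
        have hle : ∀ u ∈ Set.Ioc (0:ℝ) (c*t),
            ‖u * (b k * (c ^ 2 * t ^ 2 - u ^ 2) ^ k)‖
            ≤ (c*t) * (M * B ^ k / (Nat.factorial k : ℝ) * (c ^ 2 * t ^ 2) ^ k) := by
          intro u hu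
          obtain ⟨hu0, hu1⟩ := hu
          have hX0 : 0 ≤ c ^ 2 * t ^ 2 - u ^ 2 := by nlinarith
          have hX1 : c ^ 2 * t ^ 2 - u ^ 2 ≤ c ^ 2 * t ^ 2 := by nlinarith
          rw [Real.norm_eq_abs, abs_mul, abs_mul, abs_pow,
            abs_of_pos hu0, abs_of_nonneg hX0]
          have h1 : (c ^ 2 * t ^ 2 - u ^ 2) ^ k ≤ (c ^ 2 * t ^ 2) ^ k :=
            pow_le_pow_left₀ hX0 hX1 k
          have h2 : |b k| * (c ^ 2 * t ^ 2 - u ^ 2) ^ k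
              ≤ M * B ^ k / (Nat.factorial k : ℝ) * (c ^ 2 * t ^ 2) ^ k :=
            mul_le_mul (hb k) h1 (by positivity) (by positivity)
          exact mul_le_mul hu1 h2 (by positivity) (by positivity)
        have hint : IntegrableOn (fun u : ℝ =>
            ‖u * (b k * (c ^ 2 * t ^ 2 - u ^ 2) ^ k)‖) (Set.Ioc (0:ℝ) (c*t)) :=
          ((Continuous.mul continuous_id (by continuity)).norm).integrableOn_Ioc
        have hmono : (∫ u in Set.Ioc (0:ℝ) (c*t), ‖u * (b k * (c ^ 2 * t ^ 2 - u ^ 2) ^ k)‖)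
            ≤ ∫ _ in Set.Ioc (0:ℝ) (c*t),
              (c*t) * (M * B ^ k / (Nat.factorial k : ℝ) * (c ^ 2 * t ^ 2) ^ k) := by
          refine setIntegral_mono_on hint (integrableOn_const ?_)
            measurableSet_Ioc hle
          simp [Real.volume_Ioc]
        have hconst : (∫ _ in Set.Ioc (0:ℝ) (c*t),
              ((c*t) * (M * B ^ k / (Nat.factorial k : ℝ) * (c ^ 2 * t ^ 2) ^ k)) : ℝ)
            = M * B ^ k / (Nat.factorial k : ℝ) * (c ^ 2 * t ^ 2) ^ k * ((c*t) * (c*t)) := by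
          rw [setIntegral_const]
          simp only [Real.volume_real_Ioc_of_le ha, sub_zero, smul_eq_mul]
          ring
        linarith
      refine Summable.of_nonneg_of_le (fun k => ?_) hboundk ?_
      · positivity
      · exact ((summable_bound M B (c^2*t^2)).mul_right ((c*t)*(c*t)))
  have e0 : ∫ u in (0:ℝ)..(c * t), u * S b c u t
      = ∫ u in Set.Ioc (0:ℝ) (c*t), ∑' k : ℕ, u * (b k * (c ^ 2 * t ^ 2 - u ^ 2) ^ k) := by
    rw [intervalIntegral.integral_of_le ha]
    refine setIntegral_congr_fun measurableSet_Ioc (fun u _ => ?_)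
    rw [S, ← tsum_mul_left]
  rw [e0, ← hsw]
  refine tsum_congr (fun k => ?_)
  rw [← intervalIntegral.integral_of_le ha]
  exact integral_term b k

-- ============ Bessel series facts ============

lemma summable_I0 (x : ℝ) :
    Summable (fun k : ℕ => (x / 2) ^ (2 * k) / ((Nat.factorial k : ℝ)) ^ 2) := by
  refine Summable.of_norm_bounded (Real.summable_pow_div_factorial ((x/2)^2)) (fun k => ?_)
  have hf1 : (1:ℝ) ≤ (Nat.factorial k : ℝ) := by
    exact_mod_cast Nat.one_le_iff_ne_zero.2 (Nat.factorial_ne_zero k)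
  rw [Real.norm_eq_abs, pow_mul, abs_div, abs_pow, abs_of_nonneg (sq_nonneg (x/2)),
    abs_of_nonneg (by positivity : (0:ℝ) ≤ ((Nat.factorial k : ℝ)) ^ 2)]
  gcongr <;> first | positivity | nlinarith [hf1]

lemma summable_I1 (x : ℝ) :
    Summable (fun k : ℕ => (x / 2) ^ (2 * k + 1) /
      ((Nat.factorial k : ℝ) * (Nat.factorial (k + 1) : ℝ))) := by
  refine Summable.of_norm_bounded
    (((Real.summable_pow_div_factorial ((x/2)^2)).mul_left |x/2|)) (fun k => ?_)
  have hf1 : (1:ℝ) ≤ (Nat.factorial (k+1) : ℝ) := by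
    exact_mod_cast Nat.one_le_iff_ne_zero.2 (Nat.factorial_ne_zero (k+1))
  have hfk : (0:ℝ) < (Nat.factorial k : ℝ) := Nat.cast_pos.2 (Nat.factorial_pos k)
  have hfk1 : (0:ℝ) < (Nat.factorial (k+1) : ℝ) := Nat.cast_pos.2 (Nat.factorial_pos (k+1))
  rw [Real.norm_eq_abs, abs_div, abs_mul, abs_of_pos hfk, abs_of_pos hfk1,
    pow_succ, pow_mul, abs_mul, abs_pow, abs_of_nonneg (sq_nonneg (x/2))]
  have e : |x/2| * (((x/2)^2) ^ k / (Nat.factorial k : ℝ))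
      = ((x/2)^2) ^ k * |x/2| / ((Nat.factorial k : ℝ) * 1) := by ring
  rw [e]
  gcongr <;> first | positivity | nlinarith [hf1]

lemma I0_shift (x : ℝ) :
    ∑' k : ℕ, (x/2)^(2*(k+1)) / ((Nat.factorial (k+1) : ℝ))^2 = besselI0 x - 1 := by
  have h := (summable_I0 x).tsum_eq_zero_add
  rw [besselI0, h]
  norm_num

lemma I1_shift (x : ℝ) :
    ∑' k : ℕ, (x/2)^(2*(k+1)+1) / ((Nat.factorial (k+1) : ℝ) * (Nat.factorial (k+1+1) : ℝ))
      = besselI1 x - x/2 := by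
  have h := (summable_I1 x).tsum_eq_zero_add
  rw [besselI1, h]
  norm_num

lemma pow_id {lam c t : ℝ} (hc : c ≠ 0) (m : ℕ) :
    (lam/(2*c))^(2*m) * (c^2*t^2)^m = ((lam*t)/2)^(2*m) := by
  rw [pow_mul, pow_mul, ← mul_pow]
  congr 1
  field_simp

lemma summable_J {b : ℕ → ℝ} {M B : ℝ} (hb : Gr b M B) (c t : ℝ) :
    Summable (fun k : ℕ => b k * (c^2*t^2)^(k+1) / (2*((k:ℝ)+1))) := by
  refine Summable.of_norm_bounded
    ((summable_bound M B (c^2*t^2)).mul_right (c^2*t^2/2)) (fun k => ?_)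
  have hy : (0:ℝ) ≤ c^2*t^2 := by positivity
  have h1 : ‖b k * (c^2*t^2)^(k+1) / (2*((k:ℝ)+1))‖
      = |b k| * (c^2*t^2)^(k+1) / (2*((k:ℝ)+1)) := by
    rw [Real.norm_eq_abs, abs_div, abs_mul, abs_pow, abs_of_nonneg hy,
      abs_of_pos (by positivity : (0:ℝ) < 2*((k:ℝ)+1))]
  rw [h1]
  have hMk : (0:ℝ) ≤ M * B^k / (Nat.factorial k : ℝ) := le_trans (abs_nonneg _) (hb k)
  have h2 : |b k| * (c^2*t^2)^(k+1) / (2*((k:ℝ)+1))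
      ≤ (M * B^k / (Nat.factorial k : ℝ)) * (c^2*t^2)^(k+1) / 2 := by
    gcongr <;> first
      | exact hb k
      | exact mul_nonneg hMk (by positivity)
      | nlinarith [Nat.cast_nonneg (α := ℝ) k]
  refine h2.trans (le_of_eq ?_)
  rw [pow_succ]
  ring

theorem mean_value_U
    (lam c t : ℝ) (hlam : 0 < lam) (hc : 0 < c) (ht : 0 < t) :
    (∫ u in (0 : ℝ)..(c * t), u * planarDensity lam c u t) +
        c * t * (Real.exp (-(lam * t)) * (1 + lam * t)) =
      Real.exp (-(lam * t)) *
        ((c * t + 2 * c / lam) * besselI0 (lam * t) + c * t * besselI1 (lam * t) -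
          2 * c / lam) := by
  have hcne : c ≠ 0 := ne_of_gt hc
  have hlne : lam ≠ 0 := ne_of_gt hlam
  have htne : t ≠ 0 := ne_of_gt ht
  set B : ℝ := (lam/(2*c))^2 with hBdef
  have hB : (0:ℝ) ≤ B := sq_nonneg _
  set b0 : ℕ → ℝ := fun k => (lam/(2*c))^(2*k) / ((Nat.factorial k : ℝ))^2 with hb0def
  set b1 : ℕ → ℝ := fun k => ((k:ℝ)+1) * b0 (k+1) with hb1def
  set b2 : ℕ → ℝ := fun k => ((k:ℝ)+1) * b1 (k+1) with hb2def
  have hGr0 : Gr b0 1 B := by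
    intro k
    have hf1 : (1:ℝ) ≤ (Nat.factorial k : ℝ) := by
      exact_mod_cast Nat.one_le_iff_ne_zero.2 (Nat.factorial_ne_zero k)
    simp only [hb0def, hBdef]
    rw [pow_mul, abs_div, abs_pow, abs_of_nonneg (sq_nonneg (lam/(2*c))),
      abs_of_nonneg (by positivity : (0:ℝ) ≤ ((Nat.factorial k : ℝ)) ^ 2), one_mul]
    gcongr <;> first | positivity | nlinarith [hf1]
  have hGr1 : Gr b1 (1*B) B := by rw [hb1def]; exact hGr0.shift
  have hGr2 : Gr b2 (1*B*B) B := by rw [hb2def]; exact hGr1.shift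
  have hFS : ∀ u s : ℝ, F lam c u s = S b0 c u s := fun u s =>
    tsum_congr (fun k => by simp only [hb0def]; ring)
  have hD1 : ∀ u s : ℝ, HasDerivAt (fun s' => F lam c u s') (2*c^2*s * S b1 c u s) s := by
    intro u s
    have e : (fun s' => F lam c u s') = fun s' => S b0 c u s' := funext (hFS u)
    rw [e, hb1def]
    exact hasDerivAt_S zero_le_one hB hGr0 c u s
  have hderiv1 : ∀ u s : ℝ, deriv (fun s' => F lam c u s') s = 2*c^2*s * S b1 c u s :=
    fun u s => (hD1 u s).deriv
  have hD2 : ∀ u s : ℝ, HasDerivAt (fun s' => 2*c^2*s' * S b1 c u s')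
      (2*c^2 * S b1 c u s + 2*c^2*s * (2*c^2*s * S b2 c u s)) s := by
    intro u s
    have h1 : HasDerivAt (fun s' : ℝ => 2*c^2*s') (2*c^2) s := by
      simpa using (hasDerivAt_id s).const_mul (2*c^2)
    have h2 : HasDerivAt (fun s' => S b1 c u s') (2*c^2*s * S b2 c u s) s := by
      rw [hb2def]
      exact hasDerivAt_S (by positivity) hB hGr1 c u s
    exact h1.mul h2
  have hiter : ∀ u : ℝ, iteratedDeriv 2 (fun s' => F lam c u s') t
      = 2*c^2 * S b1 c u t + 2*c^2*t * (2*c^2*t * S b2 c u t) := by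
    intro u
    rw [show (2:ℕ) = 1 + 1 from rfl, iteratedDeriv_succ, iteratedDeriv_one]
    have e : deriv (fun s' => F lam c u s') = fun s' => 2*c^2*s' * S b1 c u s' :=
      funext (fun s => hderiv1 u s)
    rw [e]
    exact (hD2 u t).deriv
  set a1 : ℝ := 2*c^2*t + (2/lam)*(2*c^2) with ha1def
  set a2 : ℝ := (2/lam)*(2*c^2*t*(2*c^2*t)) with ha2def
  set bc : ℕ → ℝ := fun k => -lam * b0 k + (a1 * b1 k + a2 * b2 k) with hbcdef
  have hGrc : Gr bc (|(-lam)| * 1 + (|a1| * (1*B) + |a2| * (1*B*B))) B := by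
    rw [hbcdef]
    exact (hGr0.const_mul (-lam)).add ((hGr1.const_mul a1).add (hGr2.const_mul a2))
  have hplan : ∀ u : ℝ, planarDensity lam c u t
      = Real.exp (-(lam*t))/c * S bc c u t := by
    intro u
    have s0 := hGr0.summable (c^2*t^2 - u^2)
    have s1 := hGr1.summable (c^2*t^2 - u^2)
    have s2 := hGr2.summable (c^2*t^2 - u^2)
    have hSc : S bc c u t = -lam * S b0 c u t + (a1 * S b1 c u t + a2 * S b2 c u t) := by
      rw [S, S, S, S, ← tsum_mul_left, ← tsum_mul_left, ← tsum_mul_left,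
        ← Summable.tsum_add (s1.mul_left a1) (s2.mul_left a2),
        ← Summable.tsum_add (s0.mul_left (-lam)) ((s1.mul_left a1).add (s2.mul_left a2))]
      exact tsum_congr (fun k => by simp only [hbcdef]; ring)
    rw [planarDensity, hderiv1 u t, hiter u, hFS u t, hSc]
    ring
  have hMc : (0:ℝ) ≤ |(-lam)| * 1 + (|a1| * (1*B) + |a2| * (1*B*B)) := by positivity
  have hint : ∫ u in (0:ℝ)..(c*t), u * planarDensity lam c u t
      = Real.exp (-(lam*t))/c * ∑' k : ℕ, bc k * (c^2*t^2)^(k+1) / (2*((k:ℝ)+1)) := by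
    have e2 : ∫ u in (0:ℝ)..(c*t), u * planarDensity lam c u t
        = ∫ u in (0:ℝ)..(c*t), Real.exp (-(lam*t))/c * (u * S bc c u t) :=
      intervalIntegral.integral_congr (fun u _ => by rw [hplan u]; ring)
    rw [e2, intervalIntegral.integral_const_mul, integral_S hMc hB hGrc hc ht]
  -- evaluate the three component sums
  have hJ0 : ∑' k : ℕ, b0 k * (c^2*t^2)^(k+1) / (2*((k:ℝ)+1))
      = (c^2*t/lam) * besselI1 (lam*t) := by
    have e : ∀ k : ℕ, b0 k * (c^2*t^2)^(k+1) / (2*((k:ℝ)+1))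
        = (c^2*t/lam) * (((lam*t)/2)^(2*k+1) /
            ((Nat.factorial k : ℝ) * (Nat.factorial (k+1) : ℝ))) := by
      intro k
      have hp := pow_id (lam := lam) (t := t) hcne k
      have hfs : ((Nat.factorial (k+1) : ℕ) : ℝ) = ((k:ℝ)+1) * (Nat.factorial k : ℝ) := by
        rw [Nat.factorial_succ]; push_cast; ring
      have hfk : ((Nat.factorial k : ℝ)) ≠ 0 := Nat.cast_ne_zero.2 (Nat.factorial_ne_zero k)
      simp only [hb0def]
      rw [pow_succ (c^2*t^2) k, pow_succ ((lam*t)/2) (2*k), hfs]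
      rw [show (lam/(2*c))^(2*k) / ((Nat.factorial k : ℝ))^2 * ((c^2*t^2)^k * (c^2*t^2))
            / (2*((k:ℝ)+1))
          = ((lam/(2*c))^(2*k) * (c^2*t^2)^k) *
            ((c^2*t^2) / ((Nat.factorial k : ℝ))^2 / (2*((k:ℝ)+1))) from by ring, hp]
      have hk1 : ((k:ℝ)+1) ≠ 0 := by positivity
      generalize ((lam*t)/2)^(2*k) = q
      field_simp
    rw [tsum_congr e, tsum_mul_left, besselI1]
  have hJ1 : ∑' k : ℕ, b1 k * (c^2*t^2)^(k+1) / (2*((k:ℝ)+1))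
      = (besselI0 (lam*t) - 1) / 2 := by
    have e : ∀ k : ℕ, b1 k * (c^2*t^2)^(k+1) / (2*((k:ℝ)+1))
        = (1/2) * (((lam*t)/2)^(2*(k+1)) / ((Nat.factorial (k+1) : ℝ))^2) := by
      intro k
      have hp := pow_id (lam := lam) (t := t) hcne (k+1)
      have hfk : ((Nat.factorial (k+1) : ℝ)) ≠ 0 := Nat.cast_ne_zero.2 (Nat.factorial_ne_zero _)
      have hk1 : ((k:ℝ)+1) ≠ 0 := by positivity
      simp only [hb1def, hb0def]
      push_cast
      rw [show ((k:ℝ)+1) * ((lam/(2*c))^(2*(k+1)) / ((Nat.factorial (k+1) : ℝ))^2)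
            * (c^2*t^2)^(k+1) / (2*((k:ℝ)+1))
          = ((lam/(2*c))^(2*(k+1)) * (c^2*t^2)^(k+1)) *
            (((k:ℝ)+1) / ((Nat.factorial (k+1) : ℝ))^2 / (2*((k:ℝ)+1))) from by ring, hp]
      generalize ((lam*t)/2)^(2*(k+1)) = q
      field_simp
    rw [tsum_congr e, tsum_mul_left, I0_shift]
    ring
  have hJ2 : ∑' k : ℕ, b2 k * (c^2*t^2)^(k+1) / (2*((k:ℝ)+1))
      = (B/2) * ∑' k : ℕ, ((lam*t)/2)^(2*(k+1)) /
          ((Nat.factorial (k+1) : ℝ) * (Nat.factorial (k+1+1) : ℝ)) := by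
    have e : ∀ k : ℕ, b2 k * (c^2*t^2)^(k+1) / (2*((k:ℝ)+1))
        = (B/2) * (((lam*t)/2)^(2*(k+1)) /
            ((Nat.factorial (k+1) : ℝ) * (Nat.factorial (k+1+1) : ℝ))) := by
      intro k
      have hp := pow_id (lam := lam) (t := t) hcne (k+1)
      have hfk : ((Nat.factorial (k+1) : ℝ)) ≠ 0 := Nat.cast_ne_zero.2 (Nat.factorial_ne_zero _)
      have hfk2 : ((Nat.factorial (k+2) : ℝ)) ≠ 0 := Nat.cast_ne_zero.2 (Nat.factorial_ne_zero _)
      have hfs2 : ((Nat.factorial (k+2) : ℕ) : ℝ) = ((k:ℝ)+2) * (Nat.factorial (k+1) : ℝ) := by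
        rw [Nat.factorial_succ]; push_cast; ring
      have hk1 : ((k:ℝ)+1) ≠ 0 := by positivity
      have hk2 : ((k:ℝ)+2) ≠ 0 := by positivity
      simp only [hb2def, hb1def, hb0def, hBdef]
      push_cast
      rw [show 2*(k+1+1) = 2*(k+1)+2 from by omega, pow_add]
      rw [show ((k:ℝ)+1) * ((((k:ℝ)+1)+1) * ((lam/(2*c))^(2*(k+1)) * (lam/(2*c))^2
              / ((Nat.factorial (k+1+1) : ℝ))^2)) * (c^2*t^2)^(k+1) / (2*((k:ℝ)+1))
          = ((lam/(2*c))^(2*(k+1)) * (c^2*t^2)^(k+1)) *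
            ((lam/(2*c))^2 * (((k:ℝ)+1) * (((k:ℝ)+2))
              / ((Nat.factorial (k+1+1) : ℝ))^2 / (2*((k:ℝ)+1)))) from by push_cast; ring, hp]
      rw [show (k+1+1) = (k+2) from rfl, hfs2]
      generalize ((lam*t)/2)^(2*(k+1)) = q
      field_simp
    rw [tsum_congr e, tsum_mul_left]
  have hT : ((lam*t)/2) * (∑' k : ℕ, ((lam*t)/2)^(2*(k+1)) /
        ((Nat.factorial (k+1) : ℝ) * (Nat.factorial (k+1+1) : ℝ)))
      = besselI1 (lam*t) - (lam*t)/2 := by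
    rw [← I1_shift (lam*t), ← tsum_mul_left]
    refine tsum_congr (fun k => ?_)
    rw [pow_succ]
    ring
  -- split the combined sum
  have j0 := summable_J hGr0 c t
  have j1 := summable_J hGr1 c t
  have j2 := summable_J hGr2 c t
  have hsplit : ∑' k : ℕ, bc k * (c^2*t^2)^(k+1) / (2*((k:ℝ)+1))
      = -lam * (∑' k : ℕ, b0 k * (c^2*t^2)^(k+1) / (2*((k:ℝ)+1)))
        + (a1 * (∑' k : ℕ, b1 k * (c^2*t^2)^(k+1) / (2*((k:ℝ)+1)))
          + a2 * (∑' k : ℕ, b2 k * (c^2*t^2)^(k+1) / (2*((k:ℝ)+1)))) := by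
    rw [← tsum_mul_left, ← tsum_mul_left, ← tsum_mul_left,
      ← Summable.tsum_add (j1.mul_left a1) (j2.mul_left a2),
      ← Summable.tsum_add (j0.mul_left (-lam)) ((j1.mul_left a1).add (j2.mul_left a2))]
    exact tsum_congr (fun k => by simp only [hbcdef]; ring)
  rw [hint, hsplit, hJ0, hJ1, hJ2]
  set T : ℝ := ∑' k : ℕ, ((lam*t)/2)^(2*(k+1)) /
      ((Nat.factorial (k+1) : ℝ) * (Nat.factorial (k+1+1) : ℝ)) with hTdef
  have hTval : T = (besselI1 (lam*t) - (lam*t)/2) * 2 / (lam*t) := by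
    have hzt : lam*t ≠ 0 := mul_ne_zero hlne htne
    field_simp
    linarith [hT]
  rw [hTval, ha1def, ha2def, hBdef]
  field_simp
  ring
end

section
/- Let λ > 0, c > 0, t > 0, let m ≥ 1 be an integer, and define p(u,t) = (e^{−λt}/c) [ −λ F(u,t) + (∂F/∂t)(u,t) + (2/λ)(∂²F/∂t²)(u,t) ], where F(u,t) = ∑_{k=0}^∞ (λ/(2c))^{2k} (c²t² − u²)^k / (k!)². Then the m-th moment of 𝒰(t), namely ∫₀^{ct} u^m p(u,t) du + (ct)^m e^{−λt}(1 + λt), equals (e^{−λt}/c) [ (λ/2) Γ((m+1)/2) (2c²t/λ)^{(m+1)/2} I_{(m+1)/2}(λt) − (2/λ) m c² (ct)^{m−1} + Γ((m+1)/2) I_{(m−1)/2}(λt) ( (λ/2)(2c²t/λ)^{(m+1)/2} + (2mc²/λ)(2c²t/λ)^{(m−1)/2} ) ]. -/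
/-- The modified Bessel function of the first kind of order `ν`:
`I_ν(x) = ∑_{k=0}^∞ (x/2)^{2k+ν} / (k! Γ(k+ν+1))`. -/
noncomputable def besselI (ν x : ℝ) : ℝ :=
  ∑' k : ℕ, (x / 2) ^ (2 * (k : ℝ) + ν) /
    ((Nat.factorial k : ℝ) * Real.Gamma ((k : ℝ) + ν + 1))

open scoped Nat
open Filter MeasureTheory

lemma gamma_fact_le (μ : ℝ) (hμ : 0 ≤ μ) :
    ∀ k : ℕ, (k ! : ℝ) * Real.Gamma (μ + 1) ≤ Real.Gamma ((k : ℝ) + μ + 1) := by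
  intro k
  induction k with
  | zero => simp
  | succ n ih =>
    have h2 : Real.Gamma ((n : ℝ) + 1 + μ + 1) = ((n : ℝ) + μ + 1) * Real.Gamma ((n : ℝ) + μ + 1) := by
      have := Real.Gamma_add_one (s := (n : ℝ) + μ + 1) (by positivity)
      rw [← this]; ring_nf
    push_cast [Nat.factorial_succ]
    rw [h2]
    have hg : 0 < Real.Gamma ((n : ℝ) + μ + 1) := Real.Gamma_pos_of_pos (by positivity)
    calc ((n : ℝ) + 1) * (n !) * Real.Gamma (μ + 1)
        ≤ ((n : ℝ) + 1) * Real.Gamma ((n : ℝ) + μ + 1) := by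
          rw [mul_assoc]
          exact mul_le_mul_of_nonneg_left ih (by positivity)
      _ ≤ ((n : ℝ) + μ + 1) * Real.Gamma ((n : ℝ) + μ + 1) := by
          apply mul_le_mul_of_nonneg_right _ hg.le
          linarith

lemma summable_shape (q μ : ℝ) (hq : 0 ≤ q) (hμ : 0 ≤ μ) (j : ℕ) :
    Summable (fun k : ℕ => q ^ k / (((k + j)! : ℝ) * Real.Gamma ((k : ℝ) + μ + 1))) := by
  have hΓ1 : 0 < Real.Gamma (μ + 1) := Real.Gamma_pos_of_pos (by positivity)
  apply Summable.of_nonneg_of_le (f := fun k => (1 / Real.Gamma (μ + 1)) * (q ^ k / (k ! : ℝ)))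
  · intro k
    have : 0 < Real.Gamma ((k : ℝ) + μ + 1) := Real.Gamma_pos_of_pos (by positivity)
    positivity
  · intro k
    have hΓ : 0 < Real.Gamma ((k : ℝ) + μ + 1) := Real.Gamma_pos_of_pos (by positivity)
    have hfk : (0 : ℝ) < (k ! : ℝ) := by exact_mod_cast k.factorial_pos
    have hfk1 : (1 : ℝ) ≤ (k ! : ℝ) := by exact_mod_cast k.factorial_pos
    have hkj : (0:ℝ) < ((k+j)! :ℝ) := by exact_mod_cast (k+j).factorial_pos
    have hle : (k ! : ℝ) * ((k ! : ℝ) * Real.Gamma (μ + 1)) ≤ ((k + j)! : ℝ) * Real.Gamma ((k : ℝ) + μ + 1) := by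
      apply mul_le_mul _ (gamma_fact_le μ hμ k) (by positivity) (by positivity)
      exact_mod_cast Nat.factorial_le (Nat.le_add_right k j)
    calc q ^ k / (((k + j)! : ℝ) * Real.Gamma ((k : ℝ) + μ + 1))
        ≤ q ^ k / ((k ! : ℝ) * ((k ! : ℝ) * Real.Gamma (μ + 1))) := by
          apply div_le_div_of_nonneg_left (by positivity) (by positivity) hle
      _ ≤ 1 / Real.Gamma (μ + 1) * (q ^ k / (k ! : ℝ)) := by
          rw [one_div, div_le_iff₀ (by positivity)]
          have heq : (Real.Gamma (μ + 1))⁻¹ * (q ^ k / (k ! : ℝ)) *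
              ((k ! : ℝ) * ((k ! : ℝ) * Real.Gamma (μ + 1))) = q ^ k * (k ! : ℝ) := by
            field_simp
          rw [heq]
          nlinarith [pow_nonneg hq k]
  · exact (Real.summable_pow_div_factorial q).mul_left _


lemma summable_sm (q ν : ℝ) (hq : 0 ≤ q) (hν : 1 ≤ ν) :
    Summable (fun k : ℕ => q ^ k / ((k ! : ℝ) * Real.Gamma ((k : ℝ) + ν))) := by
  apply (summable_shape q (ν - 1) hq (by linarith) 0).congr
  intro k
  rw [Nat.add_zero, show (k : ℝ) + (ν - 1) + 1 = (k : ℝ) + ν by ring]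

lemma summable_s1m (q ν : ℝ) (hq : 0 ≤ q) (hν : 1 ≤ ν) :
    Summable (fun k : ℕ => q ^ k / (((k + 1)! : ℝ) * Real.Gamma ((k : ℝ) + ν))) := by
  apply (summable_shape q (ν - 1) hq (by linarith) 1).congr
  intro k
  rw [show (k : ℝ) + (ν - 1) + 1 = (k : ℝ) + ν by ring]

lemma tsum_id_one (q ν : ℝ) (hq : 0 ≤ q) (hν : 1 ≤ ν) :
    q * ∑' k : ℕ, q ^ k / (((k + 1)! : ℝ) * Real.Gamma ((k : ℝ) + ν + 1))
      = (∑' k : ℕ, q ^ k / ((k ! : ℝ) * Real.Gamma ((k : ℝ) + ν))) - 1 / Real.Gamma ν := by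
  rw [(summable_sm q ν hq hν).tsum_eq_zero_add]
  simp only [pow_zero, Nat.cast_zero, Nat.factorial_zero, Nat.cast_one, zero_add, one_mul]
  rw [← tsum_mul_left]
  rw [add_sub_cancel_left]
  apply tsum_congr
  intro k
  push_cast
  rw [show (k : ℝ) + 1 + ν = (k : ℝ) + ν + 1 by ring]
  rw [pow_succ]
  ring

lemma tsum_id_two (q ν : ℝ) (hq : 0 ≤ q) (hν : 1 ≤ ν) :
    q * ∑' k : ℕ, q ^ k / (((k + 2)! : ℝ) * Real.Gamma ((k : ℝ) + ν + 1))
      = ν * (∑' k : ℕ, q ^ k / (((k + 1)! : ℝ) * Real.Gamma ((k : ℝ) + ν + 1)))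
        + (∑' k : ℕ, q ^ k / ((k ! : ℝ) * Real.Gamma ((k : ℝ) + ν + 1)))
        - (∑' k : ℕ, q ^ k / (((k + 1)! : ℝ) * Real.Gamma ((k : ℝ) + ν + 1)))
        - 1 / Real.Gamma ν := by
  have hT : (∑' k : ℕ, q ^ k / (((k + 1)! : ℝ) * Real.Gamma ((k : ℝ) + ν)))
      = 1 / Real.Gamma ν + q * ∑' k : ℕ, q ^ k / (((k + 2)! : ℝ) * Real.Gamma ((k : ℝ) + ν + 1)) := by
    rw [(summable_s1m q ν hq hν).tsum_eq_zero_add]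
    congr 1
    · norm_num
    · rw [← tsum_mul_left]
      apply tsum_congr
      intro k
      push_cast
      rw [show (k : ℝ) + 1 + ν = (k : ℝ) + ν + 1 by ring]
      rw [show k + 1 + 1 = k + 2 by ring, pow_succ]
      ring
  have hT2 : (∑' k : ℕ, q ^ k / (((k + 1)! : ℝ) * Real.Gamma ((k : ℝ) + ν)))
      = ν * (∑' k : ℕ, q ^ k / (((k + 1)! : ℝ) * Real.Gamma ((k : ℝ) + ν + 1)))
        + ((∑' k : ℕ, q ^ k / ((k ! : ℝ) * Real.Gamma ((k : ℝ) + ν + 1)))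
          - (∑' k : ℕ, q ^ k / (((k + 1)! : ℝ) * Real.Gamma ((k : ℝ) + ν + 1)))) := by
    have hterm : ∀ k : ℕ, q ^ k / (((k + 1)! : ℝ) * Real.Gamma ((k : ℝ) + ν))
        = ν * (q ^ k / (((k + 1)! : ℝ) * Real.Gamma ((k : ℝ) + ν + 1)))
          + (q ^ k / ((k ! : ℝ) * Real.Gamma ((k : ℝ) + ν + 1))
            - q ^ k / (((k + 1)! : ℝ) * Real.Gamma ((k : ℝ) + ν + 1))) := by
      intro k
      have hkν : (0 : ℝ) < (k : ℝ) + ν := by positivity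
      have hΓ : Real.Gamma ((k : ℝ) + ν + 1) = ((k : ℝ) + ν) * Real.Gamma ((k : ℝ) + ν) :=
        Real.Gamma_add_one (ne_of_gt hkν)
      have hΓpos : 0 < Real.Gamma ((k : ℝ) + ν) := Real.Gamma_pos_of_pos hkν
      have hf1 : ((k + 1)! : ℝ) = ((k : ℝ) + 1) * (k ! : ℝ) := by
        push_cast [Nat.factorial_succ]; ring
      have hfk : (0 : ℝ) < (k ! : ℝ) := by exact_mod_cast k.factorial_pos
      rw [hΓ, hf1]
      field_simp
      ring
    rw [tsum_congr hterm]
    rw [Summable.tsum_add ((summable_shape q ν hq (by linarith) 1).mul_left ν)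
      (((summable_shape q ν hq (by linarith) 0).congr (fun k => by rw [Nat.add_zero])).sub
        (summable_shape q ν hq (by linarith) 1))]
    rw [tsum_mul_left, Summable.tsum_sub ((summable_shape q ν hq (by linarith) 0).congr (fun k => by rw [Nat.add_zero]))
      (summable_shape q ν hq (by linarith) 1)]
  rw [hT] at hT2
  linarith

lemma besselI_conv (w μ : ℝ) (hw : 0 < w) :
    (∑' k : ℕ, (w : ℝ) ^ (2 * (k : ℝ) + μ) / ((k ! : ℝ) * Real.Gamma ((k : ℝ) + μ + 1)))
      = w ^ μ * ∑' k : ℕ, (w ^ 2) ^ k / ((k ! : ℝ) * Real.Gamma ((k : ℝ) + μ + 1)) := by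
  rw [← tsum_mul_left]
  apply tsum_congr
  intro k
  have h1 : (w : ℝ) ^ (2 * (k : ℝ) + μ) = w ^ (2 * (k : ℝ)) * w ^ μ := by
    rw [← Real.rpow_add hw]
  have h2 : w ^ (2 * (k : ℝ)) = (w ^ 2) ^ k := by
    rw [show (2 : ℝ) * (k : ℝ) = ((2 * k : ℕ) : ℝ) by push_cast; ring]
    rw [Real.rpow_natCast, pow_mul]
  rw [h1, h2]
  ring


lemma hasDerivAt_tsum_poly (b : ℕ → ℝ) (C D : ℝ)
    (hb : ∀ R : ℝ, 0 ≤ R → Summable (fun k => |b k| * R ^ k))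
    (hb' : ∀ R : ℝ, 0 ≤ R → Summable (fun k : ℕ => ((k : ℝ) + 1) * |b (k + 1)| * R ^ k))
    (x : ℝ) :
    HasDerivAt (fun s => ∑' k : ℕ, b k * (C * s ^ 2 - D) ^ k)
      (2 * C * x * ∑' k : ℕ, ((k : ℝ) + 1) * b (k + 1) * (C * x ^ 2 - D) ^ k) x := by
  set R : ℝ := |C| * (|x| + 1) ^ 2 + |D| with hR
  have hR0 : 0 ≤ R := by positivity
  set E : ℝ := 2 * |C| * (|x| + 1) with hE
  have hE0 : 0 ≤ E := by positivity
  set S : Set ℝ := Metric.ball x 1 with hS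
  have hxS : x ∈ S := Metric.mem_ball_self one_pos
  have hyabs : ∀ y ∈ S, |y| ≤ |x| + 1 := by
    intro y hy
    have : |y - x| < 1 := by rw [hS, Metric.mem_ball, Real.dist_eq] at hy; exact hy
    calc |y| = |x + (y - x)| := by ring_nf
      _ ≤ |x| + |y - x| := abs_add_le _ _
      _ ≤ |x| + 1 := by linarith
  have hA : ∀ y ∈ S, |C * y ^ 2 - D| ≤ R := by
    intro y hy
    have h1 := hyabs y hy
    have h2 : |C * y ^ 2| ≤ |C| * (|x| + 1) ^ 2 := by
      rw [abs_mul, abs_pow]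
      apply mul_le_mul_of_nonneg_left _ (abs_nonneg C)
      exact pow_le_pow_left₀ (abs_nonneg y) h1 2
    calc |C * y ^ 2 - D| ≤ |C * y ^ 2| + |D| := abs_sub _ _
      _ ≤ R := by rw [hR]; linarith
  -- the terms and their derivatives
  set f : ℕ → ℝ → ℝ := fun n y => b n * (C * y ^ 2 - D) ^ n with hf
  set f' : ℕ → ℝ → ℝ := fun n y => b n * ((n : ℝ) * (C * y ^ 2 - D) ^ (n - 1) * (2 * C * y)) with hf'
  have hder : ∀ n : ℕ, ∀ y : ℝ, HasDerivAt (f n) (f' n y) y := by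
    intro n y
    have h1 : HasDerivAt (fun y : ℝ => C * y ^ 2 - D) (2 * C * y) y := by
      have := ((hasDerivAt_pow 2 y).const_mul C).sub_const D
      simpa [mul_comm, mul_assoc, mul_left_comm] using this
    exact (h1.pow n).const_mul (b n)
  -- summable bound for derivatives on S
  set v : ℕ → ℝ := fun n => (n : ℝ) * |b n| * R ^ (n - 1) * E with hv
  have hvsum : Summable v := by
    rw [← summable_nat_add_iff 1]
    have : (fun n : ℕ => v (n + 1)) = fun n : ℕ => (((n : ℝ) + 1) * |b (n + 1)| * R ^ n) * E := by
      funext n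
      simp only [hv]
      push_cast
      ring_nf
    rw [this]
    exact (hb' R hR0).mul_right E
  have hbound : ∀ n : ℕ, ∀ y ∈ S, ‖f' n y‖ ≤ v n := by
    intro n y hy
    simp only [hf', hv, Real.norm_eq_abs]
    rw [abs_mul, abs_mul, abs_mul]
    rw [mul_comm (↑n * |b n| * R ^ (n-1)) E]
    rw [show |b n| * (|(n:ℝ)| * |(C * y ^ 2 - D) ^ (n-1)| * |2 * C * y|)
        = |2 * C * y| * (|(n:ℝ)| * |b n| * |(C * y ^ 2 - D) ^ (n-1)|) from by ring]
    apply mul_le_mul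
    · rw [abs_mul, abs_mul]
      simp only [abs_two]
      rw [hE, mul_assoc, mul_assoc]
      apply mul_le_mul_of_nonneg_left _ (by norm_num)
      exact mul_le_mul_of_nonneg_left (hyabs y hy) (abs_nonneg C)
    · rw [Nat.abs_cast, abs_pow]
      apply mul_le_mul_of_nonneg_left _ (by positivity)
      exact pow_le_pow_left₀ (abs_nonneg _) (hA y hy) _
    · positivity
    · exact hE0
  -- pointwise summability of f on S
  have hfsum : ∀ y ∈ S, Summable (fun n => f n y) := by
    intro y hy
    apply Summable.of_norm
    apply Summable.of_nonneg_of_le (fun n => norm_nonneg _) _ (hb R hR0)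
    intro n
    simp only [hf, Real.norm_eq_abs, abs_mul, abs_pow]
    exact mul_le_mul_of_nonneg_left (pow_le_pow_left₀ (abs_nonneg _) (hA y hy) n) (abs_nonneg _)
  -- summability of f' at x
  have hf'sum : Summable (fun n => f' n x) := by
    apply Summable.of_norm
    apply Summable.of_nonneg_of_le (fun n => norm_nonneg _) _ hvsum
    intro n
    exact hbound n x hxS
  -- main uniform-limit argument
  have hmain : HasDerivAt (fun y => ∑' n, f n y) (∑' n, f' n x) x := by
    apply hasDerivAt_of_tendstoUniformlyOn Metric.isOpen_ball
      (tendstoUniformlyOn_tsum_nat hvsum hbound)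
      (Eventually.of_forall fun N y _ => HasDerivAt.sum fun n _ => hder n y)
      _ hxS
    intro y hy
    simp only [Finset.sum_apply]
    exact (hfsum y hy).hasSum.tendsto_sum_nat
  -- rewrite the derivative
  have hrw : ∑' n, f' n x = 2 * C * x * ∑' k : ℕ, ((k : ℝ) + 1) * b (k + 1) * (C * x ^ 2 - D) ^ k := by
    rw [hf'sum.tsum_eq_zero_add]
    have h0 : f' 0 x = 0 := by simp [hf']
    rw [h0, zero_add]
    rw [← tsum_mul_left]
    apply tsum_congr
    intro n
    simp only [hf']
    push_cast
    ring
  rw [hrw] at hmain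
  exact hmain


lemma Jk_closed (c t : ℝ) (hc : 0 < c) (ht : 0 < t) (m : ℕ) (hm : 1 ≤ m) :
    ∀ k : ℕ, ∫ u in (0:ℝ)..(c*t), u ^ m * (c ^ 2 * t ^ 2 - u ^ 2) ^ k =
      (c*t) ^ (m+1) * (c ^ 2 * t ^ 2) ^ k *
        ((k ! : ℝ) * Real.Gamma (((m:ℝ)+1)/2) / (2 * Real.Gamma ((k:ℝ) + ((m:ℝ)+1)/2 + 1))) := by
  set ν : ℝ := ((m:ℝ)+1)/2 with hν
  have hν0 : 0 < ν := by positivity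
  have hint : ∀ (a : ℕ) (j : ℕ), IntervalIntegrable (fun u : ℝ => u ^ a * (c^2*t^2 - u^2) ^ j)
      MeasureTheory.volume 0 (c*t) := by
    intro a j
    have hcont : Continuous fun u : ℝ => u ^ a * (c^2*t^2 - u^2) ^ j := by fun_prop
    exact hcont.intervalIntegrable 0 (c*t)
  intro k
  induction k with
  | zero =>
    simp only [pow_zero, mul_one, Nat.factorial_zero, Nat.cast_zero, Nat.cast_one, zero_add, one_mul]
    rw [integral_pow]
    have hΓ : Real.Gamma (ν + 1) = ν * Real.Gamma ν := Real.Gamma_add_one (ne_of_gt hν0)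
    rw [hΓ]
    have hΓν : 0 < Real.Gamma ν := Real.Gamma_pos_of_pos hν0
    have : ((m:ℝ) + 1) ≠ 0 := by positivity
    field_simp
    rw [hν]
    ring
  | succ k ih =>
    -- key integration by parts identity
    have hg : ∀ u : ℝ, (((m:ℝ) + 2*(k:ℝ) + 3) * (u ^ m * (c^2*t^2 - u^2) ^ (k+1))
        - (2*((k:ℝ)+1)*(c^2*t^2)) * (u ^ m * (c^2*t^2 - u^2) ^ k)) =
        ((m:ℝ)+1) * u ^ (m+1-1) * (c^2*t^2 - u^2) ^ (k+1)
          + u^(m+1) * ((((k:ℝ)+1)) * (c^2*t^2 - u^2)^(k+1-1) * (-(2 * u ^ (2-1)))) := by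
      intro u
      simp only [Nat.add_sub_cancel]
      ring
    have hd : ∀ u ∈ Set.uIcc (0:ℝ) (c*t), HasDerivAt (fun u : ℝ => u ^ (m+1) * (c^2*t^2 - u^2)^(k+1))
        (((m:ℝ) + 2*(k:ℝ) + 3) * (u ^ m * (c^2*t^2 - u^2) ^ (k+1))
        - (2*((k:ℝ)+1)*(c^2*t^2)) * (u ^ m * (c^2*t^2 - u^2) ^ k)) u := by
      intro u _
      rw [hg u]
      have h1 : HasDerivAt (fun u : ℝ => c^2*t^2 - u^2) (-(2 * u ^ (2-1))) u := by
        have := (hasDerivAt_pow 2 u).const_sub (c^2*t^2)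
        push_cast at this ⊢
        convert this using 1
      have h2 := h1.pow (k+1)
      have h3 := (hasDerivAt_pow (m+1) u).mul h2
      push_cast at h3 ⊢
      refine h3.congr_deriv ?_
      simp only [Pi.pow_apply]
    have hibp := intervalIntegral.integral_eq_sub_of_hasDerivAt hd (by
      apply IntervalIntegrable.sub
      · exact ((hint m (k+1)).const_mul _)
      · exact ((hint m k).const_mul _))
    have hboundary : ((c*t) ^ (m+1) * (c^2*t^2 - (c*t)^2)^(k+1)) - ((0:ℝ) ^ (m+1) * (c^2*t^2 - 0^2)^(k+1)) = 0 := by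
      have : c^2*t^2 - (c*t)^2 = 0 := by ring
      rw [this]
      simp
    rw [hboundary] at hibp
    rw [intervalIntegral.integral_sub ((hint m (k+1)).const_mul _) ((hint m k).const_mul _),
        intervalIntegral.integral_const_mul, intervalIntegral.integral_const_mul] at hibp
    have hrec : (((m:ℝ) + 2*(k:ℝ) + 3)) * (∫ u in (0:ℝ)..(c*t), u ^ m * (c^2*t^2-u^2)^(k+1))
        = (2*((k:ℝ)+1)*(c^2*t^2)) * (∫ u in (0:ℝ)..(c*t), u ^ m * (c^2*t^2-u^2)^k) := by
      linarith [hibp]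
    have hcoef : ((m:ℝ) + 2*(k:ℝ) + 3) ≠ 0 := by positivity
    have hJ : (∫ u in (0:ℝ)..(c*t), u ^ m * (c^2*t^2-u^2)^(k+1))
        = (2*((k:ℝ)+1)*(c^2*t^2)) / ((m:ℝ) + 2*(k:ℝ) + 3)
            * (∫ u in (0:ℝ)..(c*t), u ^ m * (c^2*t^2-u^2)^k) := by
      field_simp
      linarith [hrec]
    rw [hJ, ih]
    have hΓrec : Real.Gamma (((k:ℝ)+1) + ν + 1) = ((k:ℝ) + ν + 1) * Real.Gamma ((k:ℝ) + ν + 1) := by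
      have h := Real.Gamma_add_one (s := (k:ℝ) + ν + 1) (by positivity)
      rw [show (k:ℝ) + 1 + ν + 1 = ((k:ℝ) + ν + 1) + 1 by ring, h]
    have hΓpos : 0 < Real.Gamma ((k:ℝ) + ν + 1) := Real.Gamma_pos_of_pos (by positivity)
    have hkν : (m:ℝ) + 2*(k:ℝ) + 3 = 2 * ((k:ℝ) + ν + 1) := by rw [hν]; ring
    push_cast [Nat.factorial_succ]
    rw [hΓrec, hkν]
    have h1 : ((k:ℝ) + ν + 1) ≠ 0 := by positivity
    field_simp
    ring


noncomputable def bb (lam c : ℝ) : ℕ → ℝ := fun k => (lam / (2 * c)) ^ (2 * k) / ((k ! : ℝ)) ^ 2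

noncomputable def bb1 (lam c : ℝ) : ℕ → ℝ := fun k => ((k : ℝ) + 1) * bb lam c (k + 1)

noncomputable def bb2 (lam c : ℝ) : ℕ → ℝ := fun k => ((k : ℝ) + 1) * bb1 lam c (k + 1)

lemma bb_eq' (lam c : ℝ) (k : ℕ) :
    bb lam c k = ((lam / (2 * c)) ^ 2) ^ k / ((k ! : ℝ)) ^ 2 := by
  show (lam / (2 * c)) ^ (2 * k) / ((k ! : ℝ)) ^ 2 = _
  rw [pow_mul]

lemma bb_nonneg (lam c : ℝ) (k : ℕ) : 0 ≤ bb lam c k := by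
  rw [bb_eq']; positivity


lemma fact_cast_pos (k : ℕ) : (0 : ℝ) < (k ! : ℝ) := by exact_mod_cast k.factorial_pos

lemma fact_cast_one_le (k : ℕ) : (1 : ℝ) ≤ (k ! : ℝ) := by exact_mod_cast k.factorial_pos

lemma bbsum0 (lam c R : ℝ) (hR : 0 ≤ R) :
    Summable (fun k : ℕ => |bb lam c k| * R ^ k) := by
  set r2 : ℝ := (lam / (2 * c)) ^ 2 with hr2
  have hr20 : 0 ≤ r2 := by positivity
  apply Summable.of_nonneg_of_le (fun k => by positivity)
    (f := fun k : ℕ => (r2 * R) ^ k / (k ! : ℝ)) _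
    (Real.summable_pow_div_factorial (r2 * R))
  intro k
  rw [abs_of_nonneg (bb_nonneg lam c k), bb_eq', ← hr2, mul_pow]
  rw [div_mul_eq_mul_div, div_le_div_iff₀ (by positivity) (fact_cast_pos k)]
  have h1 : (k ! : ℝ) ≤ ((k ! : ℝ)) ^ 2 := by nlinarith [fact_cast_one_le k, fact_cast_pos k]
  have : 0 ≤ r2 ^ k * R ^ k := by positivity
  nlinarith [this, fact_cast_pos k]

lemma bbsum1 (lam c R : ℝ) (hR : 0 ≤ R) :
    Summable (fun k : ℕ => ((k : ℝ) + 1) * |bb lam c (k + 1)| * R ^ k) := by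
  set r2 : ℝ := (lam / (2 * c)) ^ 2 with hr2
  have hr20 : 0 ≤ r2 := by positivity
  apply Summable.of_nonneg_of_le (fun k => by positivity)
    (f := fun k : ℕ => r2 * ((r2 * R) ^ k / (k ! : ℝ))) _
    ((Real.summable_pow_div_factorial (r2 * R)).mul_left r2)
  intro k
  rw [abs_of_nonneg (bb_nonneg lam c (k + 1)), bb_eq', ← hr2, mul_pow]
  have hf1 : ((k + 1)! : ℝ) = ((k : ℝ) + 1) * (k ! : ℝ) := by push_cast [Nat.factorial_succ]; ring
  have heq : ((k : ℝ) + 1) * (r2 ^ (k + 1) / (((k + 1)! : ℝ)) ^ 2) * R ^ k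
      = (r2 * (r2 ^ k * R ^ k)) / (((k : ℝ) + 1) * ((k ! : ℝ)) ^ 2) := by
    rw [hf1, pow_succ]
    have : ((k : ℝ) + 1) ≠ 0 := by positivity
    field_simp
  rw [heq, mul_div_assoc]
  apply mul_le_mul_of_nonneg_left _ hr20
  rw [div_le_div_iff₀ (by positivity) (fact_cast_pos k)]
  have h1 : (k ! : ℝ) ≤ ((k : ℝ) + 1) * ((k ! : ℝ)) ^ 2 := by
    nlinarith [fact_cast_one_le k, fact_cast_pos k]
  have h2 : 0 ≤ r2 ^ k * R ^ k := by positivity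
  nlinarith [h2]

lemma bbsum2 (lam c R : ℝ) (hR : 0 ≤ R) :
    Summable (fun k : ℕ => ((k : ℝ) + 1) * |bb1 lam c (k + 1)| * R ^ k) := by
  set r2 : ℝ := (lam / (2 * c)) ^ 2 with hr2
  have hr20 : 0 ≤ r2 := by positivity
  apply Summable.of_nonneg_of_le (fun k => by positivity)
    (f := fun k : ℕ => (r2 * r2) * ((r2 * R) ^ k / (k ! : ℝ))) _
    ((Real.summable_pow_div_factorial (r2 * R)).mul_left (r2 * r2))
  intro k
  have habs : |bb1 lam c (k + 1)| = ((((k + 1) : ℕ) : ℝ) + 1) * |bb lam c (k + 2)| := by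
    show |((((k + 1) : ℕ) : ℝ) + 1) * bb lam c (k + 1 + 1)| = _
    rw [abs_mul, abs_of_nonneg (by positivity : (0:ℝ) ≤ (((k + 1 : ℕ)) : ℝ) + 1)]
  rw [habs, abs_of_nonneg (bb_nonneg lam c (k + 2)), bb_eq', ← hr2, mul_pow]
  have hf2 : ((k + 2)! : ℝ) = ((k : ℝ) + 2) * (((k : ℝ) + 1) * (k ! : ℝ)) := by
    push_cast [Nat.factorial_succ]; ring
  have heq : ((k : ℝ) + 1) * (((((k + 1) : ℕ) : ℝ) + 1) * (r2 ^ (k + 2) / (((k + 2)! : ℝ)) ^ 2)) * R ^ k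
      = ((r2 * r2) * (r2 ^ k * R ^ k)) / (((k : ℝ) + 2) * (((k : ℝ) + 1) * ((k ! : ℝ)) ^ 2)) := by
    rw [hf2]
    have h1 : ((k : ℝ) + 1) ≠ 0 := by positivity
    have h2 : ((k : ℝ) + 2) ≠ 0 := by positivity
    push_cast
    field_simp
    ring
  rw [heq, mul_div_assoc]
  apply mul_le_mul_of_nonneg_left _ (by positivity)
  rw [div_le_div_iff₀ (by positivity) (fact_cast_pos k)]
  have h1 : (k ! : ℝ) ≤ ((k : ℝ) + 2) * (((k : ℝ) + 1) * ((k ! : ℝ)) ^ 2) := by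
    have hs : (k ! : ℝ) * 1 ≤ (k ! : ℝ) * (k ! : ℝ) :=
      mul_le_mul_of_nonneg_left (fact_cast_one_le k) (fact_cast_pos k).le
    have ha : (1 : ℝ) ≤ ((k : ℝ) + 2) * ((k : ℝ) + 1) := by
      nlinarith [Nat.cast_nonneg (α := ℝ) k]
    calc (k ! : ℝ) ≤ (k ! : ℝ) ^ 2 := by nlinarith [hs]
      _ = 1 * (k ! : ℝ) ^ 2 := by ring
      _ ≤ (((k : ℝ) + 2) * ((k : ℝ) + 1)) * (k ! : ℝ) ^ 2 :=
          mul_le_mul_of_nonneg_right ha (by positivity)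
      _ = ((k : ℝ) + 2) * (((k : ℝ) + 1) * ((k ! : ℝ)) ^ 2) := by ring
  have h2 : 0 ≤ r2 ^ k * R ^ k := by positivity
  nlinarith [h2]

lemma F_eq_tsum (lam c u : ℝ) (s : ℝ) :
    F lam c u s = ∑' k : ℕ, bb lam c k * (c ^ 2 * s ^ 2 - u ^ 2) ^ k := by
  unfold F bb
  apply tsum_congr
  intro k
  ring

lemma hasDerivAt_F (lam c u : ℝ) (s : ℝ) :
    HasDerivAt (fun s => F lam c u s)
      (2 * c ^ 2 * s * ∑' k : ℕ, bb1 lam c k * (c ^ 2 * s ^ 2 - u ^ 2) ^ k) s := by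
  have h := hasDerivAt_tsum_poly (bb lam c) (c ^ 2) (u ^ 2)
    (fun R hR => bbsum0 lam c R hR) (fun R hR => bbsum1 lam c R hR) s
  have hfun : (fun s => F lam c u s) = fun s => ∑' k : ℕ, bb lam c k * (c ^ 2 * s ^ 2 - u ^ 2) ^ k :=
    funext (F_eq_tsum lam c u)
  rw [hfun]
  exact h

lemma hasDerivAt_G1 (lam c u : ℝ) (s : ℝ) :
    HasDerivAt (fun s => ∑' k : ℕ, bb1 lam c k * (c ^ 2 * s ^ 2 - u ^ 2) ^ k)
      (2 * c ^ 2 * s * ∑' k : ℕ, bb2 lam c k * (c ^ 2 * s ^ 2 - u ^ 2) ^ k) s := by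
  have hb : ∀ R : ℝ, 0 ≤ R → Summable (fun k : ℕ => |bb1 lam c k| * R ^ k) := by
    intro R hR
    apply (bbsum1 lam c R hR).congr
    intro k
    congr 1
    unfold bb1
    rw [abs_mul, abs_of_nonneg (by positivity : (0:ℝ) ≤ (k:ℝ)+1)]
  have h := hasDerivAt_tsum_poly (bb1 lam c) (c ^ 2) (u ^ 2) hb
    (fun R hR => bbsum2 lam c R hR) s
  exact h

lemma planarDensity_eq (lam c u t : ℝ) :
    planarDensity lam c u t = Real.exp (-(lam * t)) / c *
      (-(lam * ∑' k : ℕ, bb lam c k * (c ^ 2 * t ^ 2 - u ^ 2) ^ k)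
        + 2 * c ^ 2 * t * (∑' k : ℕ, bb1 lam c k * (c ^ 2 * t ^ 2 - u ^ 2) ^ k)
        + 2 / lam * (2 * c ^ 2 * (∑' k : ℕ, bb1 lam c k * (c ^ 2 * t ^ 2 - u ^ 2) ^ k)
          + 2 * c ^ 2 * t * (2 * c ^ 2 * t *
              (∑' k : ℕ, bb2 lam c k * (c ^ 2 * t ^ 2 - u ^ 2) ^ k)))) := by
  have h2 : iteratedDeriv 2 (fun s => F lam c u s) t
      = 2 * c ^ 2 * (∑' k : ℕ, bb1 lam c k * (c ^ 2 * t ^ 2 - u ^ 2) ^ k)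
          + 2 * c ^ 2 * t * (2 * c ^ 2 * t * (∑' k : ℕ, bb2 lam c k * (c ^ 2 * t ^ 2 - u ^ 2) ^ k)) := by
    rw [show (2 : ℕ) = 1 + 1 from rfl, iteratedDeriv_succ, iteratedDeriv_one]
    have hder : deriv (fun s => F lam c u s)
        = fun s => 2 * c ^ 2 * s * ∑' k : ℕ, bb1 lam c k * (c ^ 2 * s ^ 2 - u ^ 2) ^ k :=
      funext fun s => (hasDerivAt_F lam c u s).deriv
    rw [hder]
    have hprod : HasDerivAt (fun s : ℝ => 2 * c ^ 2 * s * ∑' k : ℕ, bb1 lam c k * (c ^ 2 * s ^ 2 - u ^ 2) ^ k)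
        (2 * c ^ 2 * (∑' k : ℕ, bb1 lam c k * (c ^ 2 * t ^ 2 - u ^ 2) ^ k)
          + 2 * c ^ 2 * t * (2 * c ^ 2 * t * (∑' k : ℕ, bb2 lam c k * (c ^ 2 * t ^ 2 - u ^ 2) ^ k))) t := by
      have h1 : HasDerivAt (fun s : ℝ => 2 * c ^ 2 * s) (2 * c ^ 2) t := by
        simpa using (hasDerivAt_id t).const_mul (2 * c ^ 2)
      exact h1.mul (hasDerivAt_G1 lam c u t)
    exact hprod.deriv
  unfold planarDensity
  rw [h2, (hasDerivAt_F lam c u t).deriv, F_eq_tsum]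


noncomputable def Wc (lam c t : ℝ) (k : ℕ) : ℝ :=
  Real.exp (-(lam * t)) / c * (-(lam * bb lam c k) + 2 * c ^ 2 * t * bb1 lam c k
    + 2 / lam * (2 * c ^ 2 * bb1 lam c k + 2 * c ^ 2 * t * (2 * c ^ 2 * t * bb2 lam c k)))

lemma bb1_abs (lam c : ℝ) (k : ℕ) : |bb1 lam c k| = ((k : ℝ) + 1) * |bb lam c (k + 1)| := by
  show |((k : ℝ) + 1) * bb lam c (k + 1)| = _
  rw [abs_mul, abs_of_nonneg (by positivity : (0:ℝ) ≤ (k : ℝ) + 1)]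

lemma bb2_abs (lam c : ℝ) (k : ℕ) : |bb2 lam c k| = ((k : ℝ) + 1) * |bb1 lam c (k + 1)| := by
  show |((k : ℝ) + 1) * bb1 lam c (k + 1)| = _
  rw [abs_mul, abs_of_nonneg (by positivity : (0:ℝ) ≤ (k : ℝ) + 1)]

set_option maxHeartbeats 2000000 in
lemma moment_eq (lam c t : ℝ) (hlam : 0 < lam) (hc : 0 < c) (ht : 0 < t) (m : ℕ) (hm : 1 ≤ m) :
    (∫ u in (0:ℝ)..(c*t), u ^ m * planarDensity lam c u t)
      = (Real.exp (-(lam*t)) * lam * Real.Gamma (((m:ℝ)+1)/2) * (c*t)^(m+1) / (2*c)) *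
        (-(∑' k : ℕ, ((lam*t/2)^2) ^ k / ((k ! : ℝ) * Real.Gamma ((k:ℝ) + ((m:ℝ)+1)/2 + 1)))
          + (1 + lam*t/2) * (∑' k : ℕ, ((lam*t/2)^2) ^ k / (((k+1)! : ℝ) * Real.Gamma ((k:ℝ) + ((m:ℝ)+1)/2 + 1)))
          + 2 * ((lam*t/2)^2 * ∑' k : ℕ, ((lam*t/2)^2) ^ k / (((k+2)! : ℝ) * Real.Gamma ((k:ℝ) + ((m:ℝ)+1)/2 + 1)))) := by
  have hct : (0:ℝ) < c * t := by positivity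
  set ν : ℝ := ((m:ℝ)+1)/2 with hν
  have hν1 : (1:ℝ) ≤ ν := by
    rw [hν]
    have : (1:ℝ) ≤ (m:ℝ) := by exact_mod_cast hm
    linarith
  set q : ℝ := (lam*t/2)^2 with hq
  have hq0 : (0:ℝ) ≤ q := by positivity
  -- Step 1: pointwise tsum representation of the integrand
  have hpd : ∀ u : ℝ, u ^ m * planarDensity lam c u t
      = ∑' k : ℕ, Wc lam c t k * (u ^ m * (c ^ 2 * t ^ 2 - u ^ 2) ^ k) := by
    intro u
    set X : ℝ := c ^ 2 * t ^ 2 - u ^ 2 with hX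
    have hs0 : Summable (fun k : ℕ => bb lam c k * X ^ k) := by
      apply Summable.of_norm
      apply (bbsum0 lam c |X| (abs_nonneg _)).congr
      intro k
      rw [Real.norm_eq_abs, abs_mul, abs_pow]
    have hs1 : Summable (fun k : ℕ => bb1 lam c k * X ^ k) := by
      apply Summable.of_norm
      apply (bbsum1 lam c |X| (abs_nonneg _)).congr
      intro k
      rw [Real.norm_eq_abs, abs_mul, abs_pow, bb1_abs]
    have hs2 : Summable (fun k : ℕ => bb2 lam c k * X ^ k) := by
      apply Summable.of_norm
      apply (bbsum2 lam c |X| (abs_nonneg _)).congr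
      intro k
      rw [Real.norm_eq_abs, abs_mul, abs_pow, bb2_abs]
    set C0 : ℝ := Real.exp (-(lam * t)) / c * (-lam) * u ^ m with hC0
    set C1 : ℝ := Real.exp (-(lam * t)) / c * (2 * c ^ 2 * t + 2 / lam * (2 * c ^ 2)) * u ^ m with hC1
    set C2 : ℝ := Real.exp (-(lam * t)) / c * (2 / lam * (2 * c ^ 2 * t * (2 * c ^ 2 * t))) * u ^ m with hC2
    have hcalc : ∑' k : ℕ, Wc lam c t k * (u ^ m * X ^ k)
        = C0 * (∑' k : ℕ, bb lam c k * X ^ k)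
          + (C1 * (∑' k : ℕ, bb1 lam c k * X ^ k) + C2 * (∑' k : ℕ, bb2 lam c k * X ^ k)) := by
      rw [← tsum_mul_left, ← tsum_mul_left, ← tsum_mul_left,
        ← Summable.tsum_add (hs1.mul_left C1) (hs2.mul_left C2),
        ← Summable.tsum_add (hs0.mul_left C0) ((hs1.mul_left C1).add (hs2.mul_left C2))]
      apply tsum_congr
      intro k
      show Wc lam c t k * (u ^ m * X ^ k) = _
      unfold Wc
      rw [hC0, hC1, hC2]
      ring
    rw [hcalc, planarDensity_eq]
    rw [hC0, hC1, hC2]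
    ring
  -- Step 2: interchange sum and integral
  rw [intervalIntegral.integral_congr (g := fun u => ∑' k : ℕ, Wc lam c t k * (u ^ m * (c ^ 2 * t ^ 2 - u ^ 2) ^ k))
    (fun u _ => hpd u)]
  rw [intervalIntegral.integral_of_le hct.le]
  have hWabs : ∀ k : ℕ, |Wc lam c t k| ≤ Real.exp (-(lam*t)) / c *
      (lam * |bb lam c k| + 2 * c ^ 2 * t * |bb1 lam c k|
        + 2 / lam * (2 * c ^ 2 * |bb1 lam c k| + 4 * c ^ 4 * t ^ 2 * |bb2 lam c k|)) := by
    intro k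
    unfold Wc
    rw [abs_mul, abs_of_nonneg (by positivity : (0:ℝ) ≤ Real.exp (-(lam*t)) / c)]
    apply mul_le_mul_of_nonneg_left _ (by positivity)
    calc |(-(lam * bb lam c k) + 2 * c ^ 2 * t * bb1 lam c k
          + 2 / lam * (2 * c ^ 2 * bb1 lam c k + 2 * c ^ 2 * t * (2 * c ^ 2 * t * bb2 lam c k)))|
        ≤ |(-(lam * bb lam c k)) + 2 * c ^ 2 * t * bb1 lam c k|
          + |2 / lam * (2 * c ^ 2 * bb1 lam c k + 2 * c ^ 2 * t * (2 * c ^ 2 * t * bb2 lam c k))| :=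
          abs_add_le _ _
      _ ≤ (|(-(lam * bb lam c k))| + |2 * c ^ 2 * t * bb1 lam c k|)
          + |2 / lam * (2 * c ^ 2 * bb1 lam c k + 2 * c ^ 2 * t * (2 * c ^ 2 * t * bb2 lam c k))| := by
          have := abs_add_le (-(lam * bb lam c k)) (2 * c ^ 2 * t * bb1 lam c k)
          linarith
      _ ≤ lam * |bb lam c k| + 2 * c ^ 2 * t * |bb1 lam c k|
          + 2 / lam * (2 * c ^ 2 * |bb1 lam c k| + 4 * c ^ 4 * t ^ 2 * |bb2 lam c k|) := by
          have e1 : |(-(lam * bb lam c k))| = lam * |bb lam c k| := by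
            rw [abs_neg, abs_mul, abs_of_nonneg hlam.le]
          have e2 : |2 * c ^ 2 * t * bb1 lam c k| = 2 * c ^ 2 * t * |bb1 lam c k| := by
            rw [abs_mul, abs_of_nonneg (by positivity : (0:ℝ) ≤ 2 * c ^ 2 * t)]
          have e3 : |2 / lam * (2 * c ^ 2 * bb1 lam c k + 2 * c ^ 2 * t * (2 * c ^ 2 * t * bb2 lam c k))|
              ≤ 2 / lam * (2 * c ^ 2 * |bb1 lam c k| + 4 * c ^ 4 * t ^ 2 * |bb2 lam c k|) := by
            rw [abs_mul, abs_of_nonneg (by positivity : (0:ℝ) ≤ 2 / lam)]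
            apply mul_le_mul_of_nonneg_left _ (by positivity)
            calc |2 * c ^ 2 * bb1 lam c k + 2 * c ^ 2 * t * (2 * c ^ 2 * t * bb2 lam c k)|
                ≤ |2 * c ^ 2 * bb1 lam c k| + |2 * c ^ 2 * t * (2 * c ^ 2 * t * bb2 lam c k)| := abs_add_le _ _
              _ ≤ 2 * c ^ 2 * |bb1 lam c k| + 4 * c ^ 4 * t ^ 2 * |bb2 lam c k| := by
                  have f1 : |2 * c ^ 2 * bb1 lam c k| = 2 * c ^ 2 * |bb1 lam c k| := by
                    rw [abs_mul, abs_of_nonneg (by positivity : (0:ℝ) ≤ 2 * c ^ 2)]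
                  have h23 : (0:ℝ) ≤ 2 * c ^ 2 * t := by positivity
                  have f2 : |2 * c ^ 2 * t * (2 * c ^ 2 * t * bb2 lam c k)|
                      = 4 * c ^ 4 * t ^ 2 * |bb2 lam c k| := by
                    rw [abs_mul, abs_of_nonneg h23, abs_mul, abs_of_nonneg h23]
                    ring
                  linarith
          linarith
  have hWabs_sum : Summable (fun k : ℕ => |Wc lam c t k| * (c ^ 2 * t ^ 2) ^ k) := by
    have hc2t2 : (0:ℝ) ≤ c ^ 2 * t ^ 2 := by positivity
    set D : ℝ := Real.exp (-(lam*t)) / c with hD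
    have hD0 : 0 ≤ D := by positivity
    apply Summable.of_nonneg_of_le (fun k => by positivity)
      (f := fun k : ℕ => (D * lam) * (|bb lam c k| * (c^2*t^2) ^ k)
        + ((D * (2*c^2*t) + D * (2/lam*(2*c^2))) * (((k:ℝ)+1) * |bb lam c (k+1)| * (c^2*t^2) ^ k)
          + (D * (2/lam*(4*c^4*t^2))) * (((k:ℝ)+1) * |bb1 lam c (k+1)| * (c^2*t^2) ^ k)))
    · intro k
      have h1 := hWabs k
      have h2 : |Wc lam c t k| * (c ^ 2 * t ^ 2) ^ k
          ≤ (D * (lam * |bb lam c k| + 2 * c ^ 2 * t * |bb1 lam c k|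
            + 2 / lam * (2 * c ^ 2 * |bb1 lam c k| + 4 * c ^ 4 * t ^ 2 * |bb2 lam c k|))) * (c ^ 2 * t ^ 2) ^ k := by
        apply mul_le_mul_of_nonneg_right _ (by positivity)
        exact h1
      refine h2.trans (le_of_eq ?_)
      rw [bb1_abs, bb2_abs]
      ring
    · apply Summable.add
      · exact ((bbsum0 lam c _ hc2t2).mul_left _)
      · exact (((bbsum1 lam c _ hc2t2).mul_left _).add ((bbsum2 lam c _ hc2t2).mul_left _))
  have hint : ∀ k : ℕ, Integrable
      (fun u => Wc lam c t k * (u ^ m * (c ^ 2 * t ^ 2 - u ^ 2) ^ k))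
      (volume.restrict (Set.Ioc (0:ℝ) (c*t))) := by
    intro k
    have hcont : Continuous (fun u : ℝ => Wc lam c t k * (u ^ m * (c ^ 2 * t ^ 2 - u ^ 2) ^ k)) := by
      fun_prop
    exact hcont.integrableOn_Ioc
  have hnormbound : ∀ k : ℕ,
      (∫ u in Set.Ioc (0:ℝ) (c*t), ‖Wc lam c t k * (u ^ m * (c ^ 2 * t ^ 2 - u ^ 2) ^ k)‖)
        ≤ ((c*t)^m * (c*t)) * (|Wc lam c t k| * (c ^ 2 * t ^ 2) ^ k) := by
    intro k
    have hptwise : ∀ u ∈ Set.Ioc (0:ℝ) (c*t),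
        ‖Wc lam c t k * (u ^ m * (c ^ 2 * t ^ 2 - u ^ 2) ^ k)‖
          ≤ |Wc lam c t k| * ((c*t)^m * (c ^ 2 * t ^ 2) ^ k) := by
      intro u hu
      obtain ⟨hu0, hu1⟩ := hu
      rw [Real.norm_eq_abs, abs_mul]
      apply mul_le_mul_of_nonneg_left _ (abs_nonneg _)
      have h1 : u ^ 2 ≤ c^2*t^2 := by nlinarith
      have h2 : (0:ℝ) ≤ c^2*t^2 - u^2 := by linarith
      rw [abs_mul, abs_pow, abs_pow, abs_of_nonneg hu0.le, abs_of_nonneg h2]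
      apply mul_le_mul (pow_le_pow_left₀ hu0.le hu1 m)
        (pow_le_pow_left₀ h2 (by nlinarith [sq_nonneg u]) k) (by positivity) (by positivity)
    calc (∫ u in Set.Ioc (0:ℝ) (c*t), ‖Wc lam c t k * (u ^ m * (c ^ 2 * t ^ 2 - u ^ 2) ^ k)‖)
        ≤ (∫ _u in Set.Ioc (0:ℝ) (c*t), |Wc lam c t k| * ((c*t)^m * (c ^ 2 * t ^ 2) ^ k)) := by
          apply setIntegral_mono_on (hint k).norm (integrableOn_const measure_Ioc_lt_top.ne)
            measurableSet_Ioc hptwise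
      _ = ((c*t)^m * (c*t)) * (|Wc lam c t k| * (c ^ 2 * t ^ 2) ^ k) := by
          rw [setIntegral_const]
          rw [Real.volume_real_Ioc_of_le hct.le, sub_zero]
          simp [smul_eq_mul]
          ring
  have hF_sum : Summable (fun k : ℕ =>
      ∫ u in Set.Ioc (0:ℝ) (c*t), ‖Wc lam c t k * (u ^ m * (c ^ 2 * t ^ 2 - u ^ 2) ^ k)‖) := by
    apply Summable.of_nonneg_of_le
      (fun k => integral_nonneg (fun u => norm_nonneg _)) hnormbound
      (hWabs_sum.mul_left _)
  rw [← MeasureTheory.integral_tsum_of_summable_integral_norm hint hF_sum]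
  -- Step 3: evaluate each integral and sum
  have hterm : ∀ k : ℕ, (∫ u in Set.Ioc (0:ℝ) (c*t), Wc lam c t k * (u ^ m * (c ^ 2 * t ^ 2 - u ^ 2) ^ k))
      = Wc lam c t k * ((c*t) ^ (m+1) * (c ^ 2 * t ^ 2) ^ k *
        ((k ! : ℝ) * Real.Gamma ν / (2 * Real.Gamma ((k:ℝ) + ν + 1)))) := by
    intro k
    rw [MeasureTheory.integral_const_mul]
    congr 1
    rw [← intervalIntegral.integral_of_le hct.le]
    exact Jk_closed c t hc ht m hm k
  rw [tsum_congr hterm]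
  -- Step 4: termwise identification
  set κ : ℝ := Real.exp (-(lam*t)) * lam * Real.Gamma ν * (c*t)^(m+1) / (2*c) with hκ
  have hsplit : ∀ k : ℕ, Wc lam c t k * ((c*t) ^ (m+1) * (c ^ 2 * t ^ 2) ^ k *
        ((k ! : ℝ) * Real.Gamma ν / (2 * Real.Gamma ((k:ℝ) + ν + 1))))
      = (-κ) * (q ^ k / ((k ! : ℝ) * Real.Gamma ((k:ℝ) + ν + 1)))
        + ((κ * (1 + lam*t/2)) * (q ^ k / (((k+1)! : ℝ) * Real.Gamma ((k:ℝ) + ν + 1)))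
          + (κ * (2*q)) * (q ^ k / (((k+2)! : ℝ) * Real.Gamma ((k:ℝ) + ν + 1)))) := by
    intro k
    have hr2q : (lam / (2*c))^2 * (c^2*t^2) = q := by
      rw [hq]
      field_simp
    have hΓpos : 0 < Real.Gamma ((k:ℝ) + ν + 1) := Real.Gamma_pos_of_pos (by positivity)
    unfold Wc
    rw [show bb1 lam c k = ((k : ℝ) + 1) * bb lam c (k + 1) from rfl,
      show bb2 lam c k = ((k : ℝ) + 1) * (((k+1 : ℕ) : ℝ) + 1) * bb lam c (k + 1 + 1) from by
        show ((k : ℝ) + 1) * (((((k+1) : ℕ) : ℝ) + 1) * bb lam c ((k+1) + 1)) = _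
        ring]
    rw [bb_eq', bb_eq', bb_eq']
    rw [show ((lam / (2*c))^2)^(k+1) = ((lam / (2*c))^2)^k * (lam / (2*c))^2 from pow_succ _ _,
      show ((lam / (2*c))^2)^(k+1+1) = ((lam / (2*c))^2)^k * (lam / (2*c))^2 * (lam / (2*c))^2 from by
        rw [pow_succ, pow_succ]]
    have hLT : (((lam / (2*c))^2)^k) * ((c^2*t^2) ^ k) = q ^ k := by
      rw [← mul_pow, hr2q]
    have hL0 : (0:ℝ) < ((lam / (2*c))^2)^k := by positivity
    have hf1 : ((k+1)! : ℝ) = ((k : ℝ) + 1) * (k ! : ℝ) := by push_cast [Nat.factorial_succ]; ring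
    have hf2 : ((k+2)! : ℝ) = ((k : ℝ) + 2) * (((k : ℝ) + 1) * (k ! : ℝ)) := by
      push_cast [Nat.factorial_succ]; ring
    have hfk := fact_cast_pos k
    rw [hκ, hf1, hf2]
    generalize hLgen : ((lam / (2*c))^2)^k = L at hLT hL0 ⊢
    generalize hQgen : q ^ k = Q at hLT ⊢
    have hTeq : (c^2*t^2) ^ k = Q / L := by
      rw [eq_div_iff (ne_of_gt hL0), mul_comm]
      exact hLT
    rw [hTeq]
    have hΓν : 0 < Real.Gamma ν := Real.Gamma_pos_of_pos (by positivity)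
    field_simp
    rw [hq]; push_cast; ring
  rw [tsum_congr hsplit]
  have hν0 : (0:ℝ) ≤ ν := by linarith
  have hsum0 : Summable (fun k : ℕ => q ^ k / ((k ! : ℝ) * Real.Gamma ((k:ℝ) + ν + 1))) :=
    (summable_shape q ν hq0 hν0 0).congr (fun k => by rw [Nat.add_zero])
  have hsum1 : Summable (fun k : ℕ => q ^ k / (((k+1)! : ℝ) * Real.Gamma ((k:ℝ) + ν + 1))) :=
    summable_shape q ν hq0 hν0 1
  have hsum2 : Summable (fun k : ℕ => q ^ k / (((k+2)! : ℝ) * Real.Gamma ((k:ℝ) + ν + 1))) :=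
    summable_shape q ν hq0 hν0 2
  rw [Summable.tsum_add (hsum0.mul_left _) ((hsum1.mul_left _).add (hsum2.mul_left _)),
    Summable.tsum_add (hsum1.mul_left _) (hsum2.mul_left _), tsum_mul_left, tsum_mul_left, tsum_mul_left]
  rw [hκ]
  ring


set_option maxHeartbeats 2000000 in
theorem mth_moment_U
    (lam c t : ℝ) (hlam : 0 < lam) (hc : 0 < c) (ht : 0 < t) (m : ℕ) (hm : 1 ≤ m) :
    (∫ u in (0 : ℝ)..(c * t), u ^ m * planarDensity lam c u t) +
        (c * t) ^ m * (Real.exp (-(lam * t)) * (1 + lam * t)) =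
      Real.exp (-(lam * t)) / c *
        (lam / 2 * Real.Gamma (((m : ℝ) + 1) / 2) *
            (2 * c ^ 2 * t / lam) ^ (((m : ℝ) + 1) / 2) *
            besselI (((m : ℝ) + 1) / 2) (lam * t) -
          2 / lam * (m : ℝ) * c ^ 2 * (c * t) ^ (m - 1) +
          Real.Gamma (((m : ℝ) + 1) / 2) * besselI (((m : ℝ) - 1) / 2) (lam * t) *
            (lam / 2 * (2 * c ^ 2 * t / lam) ^ (((m : ℝ) + 1) / 2) +
              2 * (m : ℝ) * c ^ 2 / lam *
                (2 * c ^ 2 * t / lam) ^ (((m : ℝ) - 1) / 2))) := by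
  have hct : (0:ℝ) < c * t := by positivity
  have hw0 : (0:ℝ) < lam * t / 2 := by positivity
  have hm1 : (1:ℝ) ≤ (m:ℝ) := by exact_mod_cast hm
  have hν1 : (1:ℝ) ≤ ((m:ℝ)+1)/2 := by linarith
  have hq0 : (0:ℝ) ≤ (lam*t/2)^2 := by positivity
  rw [moment_eq lam c t hlam hc ht m hm]
  -- rewrite besselI
  have harg : ((m:ℝ)-1)/2 = ((m:ℝ)+1)/2 - 1 := by ring
  rw [harg]
  have hbI1 : besselI (((m:ℝ)+1)/2) (lam*t)
      = (lam*t/2) ^ (((m:ℝ)+1)/2) * ∑' k : ℕ, ((lam*t/2)^2) ^ k /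
          ((k ! : ℝ) * Real.Gamma ((k:ℝ) + ((m:ℝ)+1)/2 + 1)) := by
    show (∑' k : ℕ, (lam*t/2) ^ (2*(k:ℝ) + ((m:ℝ)+1)/2) /
        ((k ! : ℝ) * Real.Gamma ((k:ℝ) + ((m:ℝ)+1)/2 + 1))) = _
    exact besselI_conv (lam*t/2) (((m:ℝ)+1)/2) hw0
  have hbI2 : besselI (((m:ℝ)+1)/2 - 1) (lam*t)
      = (lam*t/2) ^ (((m:ℝ)+1)/2 - 1) * ∑' k : ℕ, ((lam*t/2)^2) ^ k /
          ((k ! : ℝ) * Real.Gamma ((k:ℝ) + ((m:ℝ)+1)/2)) := by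
    have h := besselI_conv (lam*t/2) (((m:ℝ)+1)/2 - 1) hw0
    rw [show (∑' k : ℕ, ((lam*t/2)^2) ^ k /
        ((k ! : ℝ) * Real.Gamma ((k:ℝ) + (((m:ℝ)+1)/2 - 1) + 1)))
        = ∑' k : ℕ, ((lam*t/2)^2) ^ k / ((k ! : ℝ) * Real.Gamma ((k:ℝ) + ((m:ℝ)+1)/2)) from
      tsum_congr fun k => by rw [show (k:ℝ) + (((m:ℝ)+1)/2 - 1) + 1 = (k:ℝ) + ((m:ℝ)+1)/2 by ring]] at h
    exact h
  rw [hbI1, hbI2]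
  -- series identities
  rw [tsum_id_two ((lam*t/2)^2) (((m:ℝ)+1)/2) hq0 hν1]
  have hid1 := tsum_id_one ((lam*t/2)^2) (((m:ℝ)+1)/2) hq0 hν1
  have hSm : (∑' k : ℕ, ((lam*t/2)^2) ^ k / ((k ! : ℝ) * Real.Gamma ((k:ℝ) + ((m:ℝ)+1)/2)))
      = (lam*t/2)^2 * (∑' k : ℕ, ((lam*t/2)^2) ^ k /
          (((k+1)! : ℝ) * Real.Gamma ((k:ℝ) + ((m:ℝ)+1)/2 + 1))) + 1 / Real.Gamma (((m:ℝ)+1)/2) := by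
    linarith [hid1]
  rw [hSm]
  -- rpow algebra
  have hZ0 : (0:ℝ) < 2*c^2*t/lam := by positivity
  have hwνpos : (0:ℝ) < (lam*t/2) ^ (((m:ℝ)+1)/2) := Real.rpow_pos_of_pos hw0 _
  have hprod : (2*c^2*t/lam) ^ (((m:ℝ)+1)/2) * (lam*t/2) ^ (((m:ℝ)+1)/2) = (c*t)^(m+1) := by
    rw [← Real.mul_rpow hZ0.le hw0.le]
    rw [show (2*c^2*t/lam) * (lam*t/2) = (c*t)^2 from by field_simp]
    rw [← Real.rpow_natCast (c*t) 2, ← Real.rpow_mul hct.le]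
    rw [show ((2:ℕ):ℝ) * (((m:ℝ)+1)/2) = ((m+1 : ℕ):ℝ) from by push_cast; ring]
    exact Real.rpow_natCast (c*t) (m+1)
  have hA : (2*c^2*t/lam) ^ (((m:ℝ)+1)/2)
      = (c*t)^(m+1) / (lam*t/2) ^ (((m:ℝ)+1)/2) := by
    rw [eq_div_iff hwνpos.ne']
    exact hprod
  have hwν1 : (lam*t/2) ^ (((m:ℝ)+1)/2 - 1)
      = (lam*t/2) ^ (((m:ℝ)+1)/2) / (lam*t/2) := by
    rw [Real.rpow_sub hw0, Real.rpow_one]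
  have hZν1 : (2*c^2*t/lam) ^ (((m:ℝ)+1)/2 - 1)
      = (2*c^2*t/lam) ^ (((m:ℝ)+1)/2) / (2*c^2*t/lam) := by
    rw [Real.rpow_sub hZ0, Real.rpow_one]
  rw [hwν1, hZν1, hA]
  -- nat power bookkeeping
  have hp1 : (c*t)^(m+1) = (c*t)^(m-1) * (c*t)^2 := by
    rw [← pow_add]
    congr 1
    omega
  have hp2 : (c*t)^m = (c*t)^(m-1) * (c*t) := by
    rw [← pow_succ]
    congr 1
    omega
  rw [hp1, hp2]
  have hΓν : (0:ℝ) < Real.Gamma (((m:ℝ)+1)/2) := Real.Gamma_pos_of_pos (by positivity)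
  field_simp
  ring
end

section
/- Let λ > 0, c > 0, t > 0, 0 < u < ct, and define F(u,t) = ∑_{k=0}^∞ (λ/(2c))^{2k} (c²t² − u²)^k / (k!)². Then the planar density in the second form satisfies the decomposition (e^{−λt}/c) [ λ F(u,t) + (∂F/∂t)(u,t) + (2c²/λ)(∂²F/∂u²)(u,t) ] = ∑_{k=0}^∞ e^{−λt} ((λt)^{2k+2}/(2k+2)!) · ((2k+2)!/(k!(k+1)!)) · (c²t² − u²)^k / (2ct)^{2k+1} + ∑_{k=1}^∞ e^{−λt} ((λt)^{2k+1}/(2k+1)!) · ((2k+1)!/(2^{2k}(ct)^{2k+1}(k−1)!(k+1)!)) · (c²t² − u²)^{k−1}(c²t² + u²). -/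
open Real

private lemma succ_le_two_pow (k : ℕ) : (k + 1 : ℝ) ≤ 2 ^ k := by
  have h : k < 2 ^ k := Nat.lt_two_pow_self
  have : (k + 1 : ℕ) ≤ 2 ^ k := h
  exact_mod_cast this

private lemma summable_fb (f : ℕ → ℝ) (C q : ℝ)
    (h : ∀ k, |f k| ≤ C * q ^ k / (Nat.factorial k : ℝ)) : Summable f := by
  apply Summable.of_norm_bounded (g := fun k => C * q ^ k / (Nat.factorial k : ℝ))
  · simpa [mul_div_assoc] using (Real.summable_pow_div_factorial q).mul_left C
  · intro k; simpa using h k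

/-- general lemma: term-by-term differentiation of a power series with rapidly
decaying coefficients. -/
private lemma hasDerivAt_tsum_pow (b : ℕ → ℝ)
    (hb : ∀ R : ℝ, 0 < R → Summable fun k : ℕ => (k + 1 : ℝ) * |b k| * R ^ k) (x : ℝ) :
    HasDerivAt (fun y : ℝ => ∑' k : ℕ, b k * y ^ k)
      (∑' k : ℕ, (k + 1 : ℝ) * b (k + 1) * x ^ k) x := by
  have hR0 : (0:ℝ) < |x| + 1 := by positivity
  have hR1 : (1:ℝ) ≤ |x| + 1 := by linarith [abs_nonneg x]
  set R : ℝ := |x| + 1 with hR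
  have hu : Summable fun k : ℕ => (k + 1 : ℝ) * |b k| * R ^ k := hb R hR0
  have hmem : x ∈ Metric.ball (0:ℝ) R := by
    simp only [Metric.mem_ball, Real.dist_eq, sub_zero, hR]
    linarith
  have hbound : ∀ (n : ℕ) (y : ℝ), y ∈ Metric.ball (0:ℝ) R →
      ‖b n * ((n : ℝ) * y ^ (n - 1))‖ ≤ (n + 1 : ℝ) * |b n| * R ^ n := by
    intro n y hy
    have hyR : |y| ≤ R := by
      simp only [Metric.mem_ball, Real.dist_eq, sub_zero] at hy
      exact le_of_lt hy
    have h1 : |y| ^ (n - 1) ≤ R ^ n := by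
      calc |y| ^ (n - 1) ≤ R ^ (n - 1) := by
            exact pow_le_pow_left₀ (abs_nonneg y) hyR _
        _ ≤ R ^ n := pow_le_pow_right₀ hR1 (Nat.sub_le n 1)
    calc ‖b n * ((n : ℝ) * y ^ (n - 1))‖ = |b n| * ((n : ℝ) * |y| ^ (n - 1)) := by
          rw [Real.norm_eq_abs, abs_mul, abs_mul, abs_pow]
          simp [abs_of_nonneg (n.cast_nonneg (α := ℝ))]
      _ ≤ |b n| * ((n + 1 : ℝ) * R ^ n) := by
          apply mul_le_mul_of_nonneg_left _ (abs_nonneg _)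
          apply mul_le_mul (by linarith) h1 (by positivity) (by linarith [abs_nonneg (b n)])
          -- n ≤ n+1 and |y|^(n-1) ≤ R^n
      _ = (n + 1 : ℝ) * |b n| * R ^ n := by ring
  have key : HasDerivAt (fun y : ℝ => ∑' k : ℕ, b k * y ^ k)
      (∑' k : ℕ, b k * ((k : ℝ) * x ^ (k - 1))) x := by
    apply hasDerivAt_tsum_of_isPreconnected hu Metric.isOpen_ball
      ((convex_ball (0:ℝ) R).isPreconnected) (fun n y _ => (hasDerivAt_pow n y).const_mul (b n))
      hbound hmem _ hmem
    · -- Summable fun n => b n * x ^ n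
      apply Summable.of_norm_bounded hu
      intro n
      have hx : |x| ≤ R := by rw [hR]; linarith
      calc ‖b n * x ^ n‖ = |b n| * |x| ^ n := by rw [Real.norm_eq_abs, abs_mul, abs_pow]
        _ ≤ |b n| * R ^ n := by
            apply mul_le_mul_of_nonneg_left (pow_le_pow_left₀ (abs_nonneg x) hx n) (abs_nonneg _)
        _ ≤ (n + 1 : ℝ) * |b n| * R ^ n := by
            have h0 : (0:ℝ) ≤ |b n| * R ^ n := by positivity
            nlinarith [mul_nonneg (show (0:ℝ) ≤ (n:ℝ) from n.cast_nonneg) h0]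
  have hsum : Summable fun k : ℕ => b k * ((k : ℝ) * x ^ (k - 1)) := by
    apply Summable.of_norm_bounded hu
    intro n
    exact hbound n x hmem
  have heq : (∑' k : ℕ, b k * ((k : ℝ) * x ^ (k - 1)))
      = ∑' k : ℕ, (k + 1 : ℝ) * b (k + 1) * x ^ k := by
    rw [hsum.tsum_eq_zero_add]
    simp only [Nat.cast_zero, zero_mul, mul_zero, zero_add]
    apply tsum_congr
    intro k
    have : (k + 1) - 1 = k := rfl
    rw [this]
    push_cast
    ring
  exact heq ▸ key


/-- coefficient of the series for `F` -/
private noncomputable def P0 (lam c : ℝ) (k : ℕ) : ℝ :=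
  (lam / (2 * c)) ^ (2 * k) / ((Nat.factorial k : ℝ) * (Nat.factorial k : ℝ))

private noncomputable def P1 (lam c : ℝ) (k : ℕ) : ℝ := (k + 1 : ℝ) * P0 lam c (k + 1)

private noncomputable def P2 (lam c : ℝ) (k : ℕ) : ℝ := (k + 1 : ℝ) * P1 lam c (k + 1)

private lemma P1_eq (lam c : ℝ) (k : ℕ) :
    P1 lam c k = (lam / (2 * c)) ^ (2 * k + 2) /
      ((Nat.factorial k : ℝ) * (Nat.factorial (k + 1) : ℝ)) := by
  unfold P1 P0
  have e : ((Nat.factorial (k+1) : ℝ)) = ((k:ℝ)+1) * (Nat.factorial k : ℝ) := by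
    rw [Nat.factorial_succ]; push_cast; ring
  have hk : (0:ℝ) < (Nat.factorial k : ℝ) := Nat.cast_pos.mpr k.factorial_pos
  rw [show 2*(k+1) = 2*k+2 from by ring, e, mul_div_assoc',
    div_eq_div_iff (by positivity) (by positivity)]
  push_cast
  ring

private lemma P2_eq (lam c : ℝ) (k : ℕ) :
    P2 lam c k = (lam / (2 * c)) ^ (2 * k + 4) /
      ((Nat.factorial k : ℝ) * (Nat.factorial (k + 2) : ℝ)) := by
  unfold P2
  rw [P1_eq]
  have e : ((Nat.factorial (k+1) : ℝ)) = ((k:ℝ)+1) * (Nat.factorial k : ℝ) := by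
    rw [Nat.factorial_succ]; push_cast; ring
  have hk : (0:ℝ) < (Nat.factorial k : ℝ) := Nat.cast_pos.mpr k.factorial_pos
  have hk2 : (0:ℝ) < (Nat.factorial (k+2) : ℝ) := Nat.cast_pos.mpr (k+2).factorial_pos
  rw [show 2*(k+1)+2 = 2*k+4 from by ring, e, mul_div_assoc',
    div_eq_div_iff (by positivity) (by positivity)]
  push_cast
  ring

private lemma summable_kmul_pow (b : ℕ → ℝ)
    (hb : ∀ R : ℝ, 0 < R → Summable fun k : ℕ => (k + 1 : ℝ) * |b k| * R ^ k) (x : ℝ) :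
    Summable (fun k : ℕ => b k * x ^ k) ∧
      Summable fun k : ℕ => (k : ℝ) * b k * x ^ k := by
  have hR : (0:ℝ) < |x| + 1 := by positivity
  have hsum := hb (|x| + 1) hR
  have hxp : ∀ k : ℕ, |x| ^ k ≤ (|x| + 1) ^ k := fun k =>
    pow_le_pow_left₀ (abs_nonneg x) (by linarith) k
  constructor
  · apply Summable.of_norm_bounded hsum
    intro k
    have h2 : (1:ℝ) ≤ (k:ℝ) + 1 := by linarith [k.cast_nonneg (α := ℝ)]
    calc ‖b k * x ^ k‖ = |b k| * |x| ^ k := by rw [Real.norm_eq_abs, abs_mul, abs_pow]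
      _ ≤ |b k| * (|x| + 1) ^ k := mul_le_mul_of_nonneg_left (hxp k) (abs_nonneg _)
      _ ≤ ((k:ℝ) + 1) * (|b k| * (|x| + 1) ^ k) := le_mul_of_one_le_left (by positivity) h2
      _ = ((k:ℝ) + 1) * |b k| * (|x| + 1) ^ k := by ring
  · apply Summable.of_norm_bounded hsum
    intro k
    calc ‖(k:ℝ) * b k * x ^ k‖ = (k:ℝ) * |b k| * |x| ^ k := by
          rw [Real.norm_eq_abs, abs_mul, abs_mul, abs_pow,
            abs_of_nonneg (k.cast_nonneg (α := ℝ))]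
      _ ≤ ((k:ℝ) + 1) * |b k| * (|x| + 1) ^ k := by
          have h2 : (k:ℝ) ≤ (k:ℝ) + 1 := by linarith
          exact mul_le_mul (mul_le_mul_of_nonneg_right h2 (abs_nonneg _)) (hxp k)
            (by positivity) (by positivity)

set_option maxHeartbeats 1000000 in
/-- The planar density decomposes as a Poisson mixture of the conditional
densities of the half-diagonal `𝒰(t)` given `N(t) = 2k+2` (`k ≥ 0`) and
`N(t) = 2k+1` (`k ≥ 1`, written with the shift `k ↦ k+1`). -/
theorem planarDensity_conditional_decomposition
    (lam c t u : ℝ) (hlam : 0 < lam) (hc : 0 < c) (ht : 0 < t)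
    (hu0 : 0 < u) (huct : u < c * t) :
    Real.exp (-(lam * t)) / c *
        (lam * F lam c u t + deriv (fun s => F lam c u s) t +
          2 * c ^ 2 / lam * iteratedDeriv 2 (fun v => F lam c v t) u) =
      (∑' k : ℕ, Real.exp (-(lam * t)) * (lam * t) ^ (2 * k + 2) /
          (Nat.factorial (2 * k + 2) : ℝ) *
          ((Nat.factorial (2 * k + 2) : ℝ) /
            ((Nat.factorial k : ℝ) * (Nat.factorial (k + 1) : ℝ))) *
          (c ^ 2 * t ^ 2 - u ^ 2) ^ k / (2 * c * t) ^ (2 * k + 1)) +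
      (∑' k : ℕ, Real.exp (-(lam * t)) * (lam * t) ^ (2 * (k + 1) + 1) /
          (Nat.factorial (2 * (k + 1) + 1) : ℝ) *
          ((Nat.factorial (2 * (k + 1) + 1) : ℝ) /
            (2 ^ (2 * (k + 1)) * (c * t) ^ (2 * (k + 1) + 1) *
              (Nat.factorial k : ℝ) * (Nat.factorial (k + 2) : ℝ))) *
          (c ^ 2 * t ^ 2 - u ^ 2) ^ k * (c ^ 2 * t ^ 2 + u ^ 2)) := by
  have hc' : c ≠ 0 := ne_of_gt hc
  have ht' : t ≠ 0 := ne_of_gt ht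
  have hlam' : lam ≠ 0 := ne_of_gt hlam
  have hr : 0 < lam / (2 * c) := by positivity
  set E := Real.exp (-(lam * t)) with hE
  have hE0 : 0 < E := Real.exp_pos _
  set X := c ^ 2 * t ^ 2 - u ^ 2 with hX
  -- summability of the (weighted) coefficients on every ball
  have hb0 : ∀ R : ℝ, 0 < R → Summable fun k : ℕ => (k + 1 : ℝ) * |P0 lam c k| * R ^ k := by
    intro R hR
    apply summable_fb _ 1 (2 * (lam / (2 * c)) ^ 2 * R)
    intro k
    have hf1 : (1:ℝ) ≤ (Nat.factorial k : ℝ) := Nat.one_le_cast.mpr k.factorial_pos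
    have hfp : (0:ℝ) < (Nat.factorial k : ℝ) := by linarith
    have h2p := succ_le_two_pow k
    rw [abs_of_nonneg (by positivity),
      abs_of_nonneg (show (0:ℝ) ≤ P0 lam c k from by unfold P0; positivity)]
    unfold P0
    calc ((k:ℝ) + 1) * ((lam / (2 * c)) ^ (2 * k) /
            ((Nat.factorial k : ℝ) * (Nat.factorial k : ℝ))) * R ^ k
        ≤ 2 ^ k * ((lam / (2 * c)) ^ (2 * k) / ((Nat.factorial k : ℝ) * 1)) * R ^ k := by
          gcongr
      _ = 1 * (2 * (lam / (2 * c)) ^ 2 * R) ^ k / (Nat.factorial k : ℝ) := by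
          rw [pow_mul]
          simp only [div_pow, mul_pow]
          field_simp
  have hb1 : ∀ R : ℝ, 0 < R → Summable fun k : ℕ => (k + 1 : ℝ) * |P1 lam c k| * R ^ k := by
    intro R hR
    apply summable_fb _ ((lam / (2 * c)) ^ 2) (2 * (lam / (2 * c)) ^ 2 * R)
    intro k
    have hf1 : (1:ℝ) ≤ (Nat.factorial k : ℝ) := Nat.one_le_cast.mpr k.factorial_pos
    have hf2 : (1:ℝ) ≤ (Nat.factorial (k + 1) : ℝ) := Nat.one_le_cast.mpr (k + 1).factorial_pos
    have hfp : (0:ℝ) < (Nat.factorial k : ℝ) := by linarith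
    have h2p := succ_le_two_pow k
    rw [abs_of_nonneg (by positivity),
      abs_of_nonneg (show (0:ℝ) ≤ P1 lam c k from by rw [P1_eq]; positivity), P1_eq]
    calc ((k:ℝ) + 1) * ((lam / (2 * c)) ^ (2 * k + 2) /
            ((Nat.factorial k : ℝ) * (Nat.factorial (k + 1) : ℝ))) * R ^ k
        ≤ 2 ^ k * ((lam / (2 * c)) ^ (2 * k + 2) / ((Nat.factorial k : ℝ) * 1)) * R ^ k := by
          gcongr
      _ = (lam / (2 * c)) ^ 2 * (2 * (lam / (2 * c)) ^ 2 * R) ^ k / (Nat.factorial k : ℝ) := by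
          rw [pow_add, pow_mul]
          simp only [div_pow, mul_pow]
          field_simp
  have hb2 : ∀ R : ℝ, 0 < R → Summable fun k : ℕ => (k + 1 : ℝ) * |P2 lam c k| * R ^ k := by
    intro R hR
    apply summable_fb _ ((lam / (2 * c)) ^ 4) (2 * (lam / (2 * c)) ^ 2 * R)
    intro k
    have hf1 : (1:ℝ) ≤ (Nat.factorial k : ℝ) := Nat.one_le_cast.mpr k.factorial_pos
    have hf2 : (1:ℝ) ≤ (Nat.factorial (k + 2) : ℝ) := Nat.one_le_cast.mpr (k + 2).factorial_pos
    have hfp : (0:ℝ) < (Nat.factorial k : ℝ) := by linarith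
    have h2p := succ_le_two_pow k
    rw [abs_of_nonneg (by positivity),
      abs_of_nonneg (show (0:ℝ) ≤ P2 lam c k from by rw [P2_eq]; positivity), P2_eq]
    calc ((k:ℝ) + 1) * ((lam / (2 * c)) ^ (2 * k + 4) /
            ((Nat.factorial k : ℝ) * (Nat.factorial (k + 2) : ℝ))) * R ^ k
        ≤ 2 ^ k * ((lam / (2 * c)) ^ (2 * k + 4) / ((Nat.factorial k : ℝ) * 1)) * R ^ k := by
          gcongr
      _ = (lam / (2 * c)) ^ 4 * (2 * (lam / (2 * c)) ^ 2 * R) ^ k / (Nat.factorial k : ℝ) := by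
          rw [pow_add, pow_mul]
          simp only [div_pow, mul_pow]
          field_simp
  -- term-by-term differentiation of the power series
  have hg : ∀ y : ℝ, HasDerivAt (fun z : ℝ => ∑' k : ℕ, P0 lam c k * z ^ k)
      (∑' k : ℕ, P1 lam c k * y ^ k) y := by
    intro y
    have h := hasDerivAt_tsum_pow (P0 lam c) hb0 y
    have he : (∑' k : ℕ, ((k : ℝ) + 1) * P0 lam c (k + 1) * y ^ k)
        = ∑' k : ℕ, P1 lam c k * y ^ k := tsum_congr fun k => rfl
    rwa [he] at h
  have hg1 : ∀ y : ℝ, HasDerivAt (fun z : ℝ => ∑' k : ℕ, P1 lam c k * z ^ k)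
      (∑' k : ℕ, P2 lam c k * y ^ k) y := by
    intro y
    have h := hasDerivAt_tsum_pow (P1 lam c) hb1 y
    have he : (∑' k : ℕ, ((k : ℝ) + 1) * P1 lam c (k + 1) * y ^ k)
        = ∑' k : ℕ, P2 lam c k * y ^ k := tsum_congr fun k => rfl
    rwa [he] at h
  -- `F` as a composition
  have hFfun : ∀ w s : ℝ, F lam c w s = ∑' k : ℕ, P0 lam c k * (c ^ 2 * s ^ 2 - w ^ 2) ^ k := by
    intro w s
    unfold F P0
    exact tsum_congr fun k => by rw [pow_two]; ring
  have hF0 : F lam c u t = ∑' k : ℕ, P0 lam c k * X ^ k := by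
    rw [hX]; exact hFfun u t
  -- the time derivative
  have hinner_t : HasDerivAt (fun s : ℝ => c ^ 2 * s ^ 2 - u ^ 2) (2 * c ^ 2 * t) t := by
    have h := ((hasDerivAt_pow 2 t).const_mul (c ^ 2)).sub_const (u ^ 2)
    refine h.congr_deriv ?_
    push_cast
    ring
  have hderiv_t : deriv (fun s => F lam c u s) t
      = (∑' k : ℕ, P1 lam c k * X ^ k) * (2 * c ^ 2 * t) := by
    rw [hX]
    have hfe : (fun s => F lam c u s)
        = ((fun z : ℝ => ∑' k : ℕ, P0 lam c k * z ^ k) ∘ (fun s : ℝ => c ^ 2 * s ^ 2 - u ^ 2)) := by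
      funext s
      simp only [Function.comp]
      exact hFfun u s
    rw [hfe]
    exact ((hg (c ^ 2 * t ^ 2 - u ^ 2)).comp t hinner_t).deriv
  -- the space derivative(s)
  have hinner_u : ∀ v : ℝ, HasDerivAt (fun w : ℝ => c ^ 2 * t ^ 2 - w ^ 2) (-(2 * v)) v := by
    intro v
    have h := (hasDerivAt_pow 2 v).const_sub (c ^ 2 * t ^ 2)
    refine h.congr_deriv ?_
    push_cast
    ring
  have hd1 : ∀ v : ℝ, HasDerivAt (fun w => F lam c w t)
      ((∑' k : ℕ, P1 lam c k * (c ^ 2 * t ^ 2 - v ^ 2) ^ k) * (-(2 * v))) v := by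
    intro v
    have hfe : (fun w => F lam c w t)
        = ((fun z : ℝ => ∑' k : ℕ, P0 lam c k * z ^ k) ∘ (fun w : ℝ => c ^ 2 * t ^ 2 - w ^ 2)) := by
      funext w
      simp only [Function.comp]
      exact hFfun w t
    rw [hfe]
    exact (hg (c ^ 2 * t ^ 2 - v ^ 2)).comp v (hinner_u v)
  have hderiv_u : deriv (fun w => F lam c w t)
      = fun v => (∑' k : ℕ, P1 lam c k * (c ^ 2 * t ^ 2 - v ^ 2) ^ k) * (-(2 * v)) :=
    funext fun v => (hd1 v).deriv
  have h2' : HasDerivAt (fun v : ℝ => -(2 * v)) (-2 : ℝ) u := by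
    have hfg : (fun v : ℝ => -(2 * v)) = fun v : ℝ => (-2 : ℝ) * v := by funext v; ring
    rw [hfg]
    simpa using (hasDerivAt_id u).const_mul (-2 : ℝ)
  have hiter : iteratedDeriv 2 (fun v => F lam c v t) u
      = ((∑' k : ℕ, P2 lam c k * X ^ k) * (-(2 * u))) * (-(2 * u))
        + (∑' k : ℕ, P1 lam c k * X ^ k) * (-2) := by
    rw [show (2 : ℕ) = 1 + 1 from rfl, iteratedDeriv_succ, iteratedDeriv_one, hderiv_u, hX]
    have h1 : HasDerivAt (fun v : ℝ => ∑' k : ℕ, P1 lam c k * (c ^ 2 * t ^ 2 - v ^ 2) ^ k)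
        ((∑' k : ℕ, P2 lam c k * (c ^ 2 * t ^ 2 - u ^ 2) ^ k) * (-(2 * u))) u := by
      have hfe : (fun v : ℝ => ∑' k : ℕ, P1 lam c k * (c ^ 2 * t ^ 2 - v ^ 2) ^ k)
          = ((fun z : ℝ => ∑' k : ℕ, P1 lam c k * z ^ k)
              ∘ (fun v : ℝ => c ^ 2 * t ^ 2 - v ^ 2)) := rfl
      rw [hfe]
      exact (hg1 (c ^ 2 * t ^ 2 - u ^ 2)).comp u (hinner_u u)
    exact (h1.mul h2').deriv
  -- summability of the individual series
  have hS0 : Summable fun k : ℕ => P0 lam c k * X ^ k := (summable_kmul_pow _ hb0 X).1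
  have hS1 : Summable fun k : ℕ => P1 lam c k * X ^ k := (summable_kmul_pow _ hb1 X).1
  have hS1k : Summable fun k : ℕ => (k : ℝ) * P1 lam c k * X ^ k := (summable_kmul_pow _ hb1 X).2
  have hS2 : Summable fun k : ℕ => P2 lam c k * X ^ k := (summable_kmul_pow _ hb2 X).1
  have hAter : Summable fun k : ℕ => 2 * c * t * E * (P1 lam c k * X ^ k) := hS1.mul_left _
  have hV : Summable fun k : ℕ => 4 * c * E / lam * (P2 lam c k * X ^ k) * X :=
    (hS2.mul_left _).mul_right _
  have hGam : Summable fun k : ℕ => 4 * c * E / lam * (P2 lam c k * X ^ k) * (2 * u ^ 2) :=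
    (hS2.mul_left _).mul_right _
  have hW : Summable fun k : ℕ => 4 * c * E / lam * ((k : ℝ) * P1 lam c k * X ^ k) :=
    hS1k.mul_left _
  -- the shifted series identity
  have hWV : (∑' k : ℕ, 4 * c * E / lam * ((k : ℝ) * P1 lam c k * X ^ k))
      = ∑' k : ℕ, 4 * c * E / lam * (P2 lam c k * X ^ k) * X := by
    rw [hW.tsum_eq_zero_add]
    simp only [Nat.cast_zero, zero_mul, mul_zero, zero_add]
    exact tsum_congr fun k => by unfold P2; push_cast; ring
  -- the termwise identity
  have main : ∀ k : ℕ, E / c * (lam * (P0 lam c k * X ^ k)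
        + 2 * c ^ 2 * t * (P1 lam c k * X ^ k)
        + 2 * c ^ 2 / lam * (4 * u ^ 2 * (P2 lam c k * X ^ k) - 2 * (P1 lam c k * X ^ k)))
      = 2 * c * t * E * (P1 lam c k * X ^ k)
        + 4 * c * E / lam * (P2 lam c k * X ^ k) * (2 * u ^ 2)
        + 4 * c * E / lam * ((k : ℝ) * P1 lam c k * X ^ k) := by
    intro k
    have e1 : ((Nat.factorial (k + 1) : ℝ)) = ((k : ℝ) + 1) * (Nat.factorial k : ℝ) := by
      rw [Nat.factorial_succ]; push_cast; ring
    have e2 : ((Nat.factorial (k + 2) : ℝ))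
        = ((k : ℝ) + 2) * (((k : ℝ) + 1) * (Nat.factorial k : ℝ)) := by
      rw [Nat.factorial_succ, Nat.factorial_succ]; push_cast; ring
    have hfk : ((Nat.factorial k : ℝ)) ≠ 0 := Nat.cast_ne_zero.mpr k.factorial_ne_zero
    have hk1 : ((k : ℝ) + 1) ≠ 0 := by positivity
    have hk2 : ((k : ℝ) + 2) ≠ 0 := by positivity
    rw [P1_eq, P2_eq]
    unfold P0
    rw [e1, e2]
    simp only [div_pow, mul_pow]
    field_simp
    ring
  -- identify the two given series
  have hAorig : (∑' k : ℕ, E * (lam * t) ^ (2 * k + 2) /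
          (Nat.factorial (2 * k + 2) : ℝ) *
          ((Nat.factorial (2 * k + 2) : ℝ) /
            ((Nat.factorial k : ℝ) * (Nat.factorial (k + 1) : ℝ))) *
          X ^ k / (2 * c * t) ^ (2 * k + 1))
      = ∑' k : ℕ, 2 * c * t * E * (P1 lam c k * X ^ k) := by
    refine tsum_congr fun k => ?_
    have hfk : ((Nat.factorial k : ℝ)) ≠ 0 := Nat.cast_ne_zero.mpr k.factorial_ne_zero
    have hfk1 : ((Nat.factorial (k + 1) : ℝ)) ≠ 0 := Nat.cast_ne_zero.mpr (k + 1).factorial_ne_zero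
    have hfk2 : ((Nat.factorial (2 * k + 2) : ℝ)) ≠ 0 :=
      Nat.cast_ne_zero.mpr (2 * k + 2).factorial_ne_zero
    rw [P1_eq]
    simp only [div_pow, mul_pow]
    field_simp
    ring
  have hBorig : (∑' k : ℕ, E * (lam * t) ^ (2 * (k + 1) + 1) /
          (Nat.factorial (2 * (k + 1) + 1) : ℝ) *
          ((Nat.factorial (2 * (k + 1) + 1) : ℝ) /
            (2 ^ (2 * (k + 1)) * (c * t) ^ (2 * (k + 1) + 1) *
              (Nat.factorial k : ℝ) * (Nat.factorial (k + 2) : ℝ))) *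
          X ^ k * (c ^ 2 * t ^ 2 + u ^ 2))
      = (∑' k : ℕ, 4 * c * E / lam * (P2 lam c k * X ^ k) * X)
        + ∑' k : ℕ, 4 * c * E / lam * (P2 lam c k * X ^ k) * (2 * u ^ 2) := by
    rw [← hV.tsum_add hGam]
    refine tsum_congr fun k => ?_
    have hfk : ((Nat.factorial k : ℝ)) ≠ 0 := Nat.cast_ne_zero.mpr k.factorial_ne_zero
    have hfk2 : ((Nat.factorial (k + 2) : ℝ)) ≠ 0 := Nat.cast_ne_zero.mpr (k + 2).factorial_ne_zero
    have hfk3 : ((Nat.factorial (2 * (k + 1) + 1) : ℝ)) ≠ 0 :=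
      Nat.cast_ne_zero.mpr (2 * (k + 1) + 1).factorial_ne_zero
    have hsplit : 4 * c * E / lam * (P2 lam c k * X ^ k) * X
          + 4 * c * E / lam * (P2 lam c k * X ^ k) * (2 * u ^ 2)
        = 4 * c * E / lam * (P2 lam c k * X ^ k) * (c ^ 2 * t ^ 2 + u ^ 2) := by
      rw [hX]; ring
    rw [hsplit, P2_eq]
    simp only [div_pow, mul_pow]
    field_simp
    ring
  -- combine the three series on the left
  have e1 : (∑' k : ℕ, (lam * (P0 lam c k * X ^ k)
        + 2 * c ^ 2 * t * (P1 lam c k * X ^ k)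
        + 2 * c ^ 2 / lam * (4 * u ^ 2 * (P2 lam c k * X ^ k) - 2 * (P1 lam c k * X ^ k))))
      = lam * (∑' k : ℕ, P0 lam c k * X ^ k)
        + 2 * c ^ 2 * t * (∑' k : ℕ, P1 lam c k * X ^ k)
        + 2 * c ^ 2 / lam * (4 * u ^ 2 * (∑' k : ℕ, P2 lam c k * X ^ k)
            - 2 * (∑' k : ℕ, P1 lam c k * X ^ k)) := by
    rw [Summable.tsum_add ((hS0.mul_left lam).add (hS1.mul_left (2 * c ^ 2 * t)))
        (((hS2.mul_left (4 * u ^ 2)).sub (hS1.mul_left 2)).mul_left (2 * c ^ 2 / lam)),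
      Summable.tsum_add (hS0.mul_left lam) (hS1.mul_left (2 * c ^ 2 * t)),
      tsum_mul_left, tsum_mul_left, tsum_mul_left,
      Summable.tsum_sub (hS2.mul_left (4 * u ^ 2)) (hS1.mul_left 2),
      tsum_mul_left, tsum_mul_left]
  rw [hF0, hderiv_t, hiter, hAorig, hBorig, ← hWV]
  calc E / c * (lam * (∑' k : ℕ, P0 lam c k * X ^ k)
        + (∑' k : ℕ, P1 lam c k * X ^ k) * (2 * c ^ 2 * t)
        + 2 * c ^ 2 / lam * ((∑' k : ℕ, P2 lam c k * X ^ k) * (-(2 * u)) * (-(2 * u))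
            + (∑' k : ℕ, P1 lam c k * X ^ k) * (-2)))
      = E / c * (lam * (∑' k : ℕ, P0 lam c k * X ^ k)
        + 2 * c ^ 2 * t * (∑' k : ℕ, P1 lam c k * X ^ k)
        + 2 * c ^ 2 / lam * (4 * u ^ 2 * (∑' k : ℕ, P2 lam c k * X ^ k)
            - 2 * (∑' k : ℕ, P1 lam c k * X ^ k))) := by ring
    _ = E / c * ∑' k : ℕ, (lam * (P0 lam c k * X ^ k)
        + 2 * c ^ 2 * t * (P1 lam c k * X ^ k)
        + 2 * c ^ 2 / lam * (4 * u ^ 2 * (P2 lam c k * X ^ k)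
            - 2 * (P1 lam c k * X ^ k))) := by rw [e1]
    _ = ∑' k : ℕ, E / c * (lam * (P0 lam c k * X ^ k)
        + 2 * c ^ 2 * t * (P1 lam c k * X ^ k)
        + 2 * c ^ 2 / lam * (4 * u ^ 2 * (P2 lam c k * X ^ k)
            - 2 * (P1 lam c k * X ^ k))) := tsum_mul_left.symm
    _ = ∑' k : ℕ, (2 * c * t * E * (P1 lam c k * X ^ k)
        + 4 * c * E / lam * (P2 lam c k * X ^ k) * (2 * u ^ 2)
        + 4 * c * E / lam * ((k : ℝ) * P1 lam c k * X ^ k)) := tsum_congr main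
    _ = (∑' k : ℕ, 2 * c * t * E * (P1 lam c k * X ^ k))
        + (∑' k : ℕ, 4 * c * E / lam * (P2 lam c k * X ^ k) * (2 * u ^ 2))
        + ∑' k : ℕ, 4 * c * E / lam * ((k : ℝ) * P1 lam c k * X ^ k) := by
          rw [Summable.tsum_add (hAter.add hGam) hW, Summable.tsum_add hAter hGam]
    _ = (∑' k : ℕ, 2 * c * t * E * (P1 lam c k * X ^ k))
        + ((∑' k : ℕ, 4 * c * E / lam * ((k : ℝ) * P1 lam c k * X ^ k))
          + ∑' k : ℕ, 4 * c * E / lam * (P2 lam c k * X ^ k) * (2 * u ^ 2)) := by ring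
end

section
/- Let λ > 0, c > 0, t > 0, and define the three-dimensional density p₃(u,t) = (e^{−λt}/c) [ −λ F(u,t) − 3(∂F/∂t)(u,t) + (2/λ)(∂²F/∂t²)(u,t) + (4/λ²)(∂³F/∂t³)(u,t) ], where F(u,t) = ∑_{k=0}^∞ (λ/(2c))^{2k} (c²t² − u²)^k / (k!)². Then ∫₀^{ct} p₃(u,t) du = 1 − e^{−λt} − λt e^{−λt} − (λ²t²/2) e^{−λt}. -/
open Real MeasureTheory

noncomputable def gg (m : ℕ) (x : ℝ) : ℝ :=
  ∑' k : ℕ, x ^ k / ((Nat.factorial k : ℝ) * (Nat.factorial (k + m) : ℝ))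

noncomputable def TT (m : ℕ) (z : ℝ) : ℝ :=
  ∑' k : ℕ, z^(2*k) * (Nat.factorial k : ℝ) /
    ((Nat.factorial (2*k+1) : ℝ) * (Nat.factorial (k+m) : ℝ))



lemma fact_ge_one (n : ℕ) : (1:ℝ) ≤ (Nat.factorial n : ℝ) := by
  exact_mod_cast Nat.one_le_iff_ne_zero.mpr (Nat.factorial_ne_zero _)

lemma gg_summable (m : ℕ) (x : ℝ) :
    Summable (fun k : ℕ => x ^ k / ((Nat.factorial k : ℝ) * (Nat.factorial (k + m) : ℝ))) := by
  apply Summable.of_norm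
  apply Summable.of_nonneg_of_le (fun k => norm_nonneg _)
    (fun k => ?_) (Real.summable_pow_div_factorial |x|)
  have h1 := fact_ge_one (k + m)
  have h2 : (0:ℝ) < (Nat.factorial k : ℝ) := lt_of_lt_of_le one_pos (fact_ge_one k)
  rw [norm_div, norm_pow, norm_mul]
  simp only [Real.norm_eq_abs, Nat.abs_cast]
  rw [div_le_div_iff₀ (by positivity) h2]
  nlinarith [mul_nonneg (mul_nonneg (pow_nonneg (abs_nonneg x) k) h2.le) (by linarith : (0:ℝ) ≤ (Nat.factorial (k+m) : ℝ) - 1)]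


lemma gg_deriv_bound (m k : ℕ) {y R : ℝ} (hR1 : (1:ℝ) ≤ R) (hy' : |y| ≤ R) :
    ‖(k : ℝ) * y ^ (k-1) / ((Nat.factorial k : ℝ) * (Nat.factorial (k + m) : ℝ))‖
      ≤ (2*R) ^ k / (Nat.factorial k : ℝ) := by
    have h1 := fact_ge_one (k + m)
    have h2 := fact_ge_one k
    rw [norm_div, norm_mul]
    simp only [Real.norm_eq_abs, abs_mul, abs_pow, Nat.abs_cast]
    have hb : |y| ^ (k-1) ≤ R ^ k :=
      le_trans (pow_le_pow_left₀ (abs_nonneg y) hy' _)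
        (pow_le_pow_right₀ hR1 (Nat.sub_le k 1))
    have hk : (k:ℝ) ≤ 2 ^ k := by exact_mod_cast (Nat.lt_two_pow_self (n := k)).le
    rw [div_le_div_iff₀ (by positivity) (by positivity)]
    have key : (k:ℝ) * |y| ^ (k-1) ≤ 2^k * R^k := by
      have hk0 : (0:ℝ) ≤ (k:ℝ) := Nat.cast_nonneg k
      have h2k : (0:ℝ) ≤ (2:ℝ)^k := by positivity
      nlinarith [pow_nonneg (abs_nonneg y) (k-1)]
    calc (k:ℝ) * |y| ^ (k-1) * (Nat.factorial k : ℝ)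
        ≤ (2^k * R ^ k) * ((Nat.factorial k : ℝ) * (Nat.factorial (k+m) : ℝ)) := by
          have hM : (0:ℝ) ≤ 2^k * R^k := by positivity
          nlinarith [mul_le_mul_of_nonneg_right key (by linarith : (0:ℝ) ≤ (Nat.factorial k : ℝ)),
            mul_nonneg (mul_nonneg hM (by linarith : (0:ℝ) ≤ (Nat.factorial k : ℝ)))
              (by linarith : (0:ℝ) ≤ (Nat.factorial (k+m) : ℝ) - 1)]
      _ = (2*R) ^ k * ((Nat.factorial k : ℝ) * (Nat.factorial (k+m) : ℝ)) := by rw [mul_pow]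

lemma gg_deriv_summable (m : ℕ) (x : ℝ) :
    Summable (fun k : ℕ => (k : ℝ) * x ^ (k-1) / ((Nat.factorial k : ℝ) * (Nat.factorial (k + m) : ℝ))) := by
  apply Summable.of_norm
  exact Summable.of_nonneg_of_le (fun k => norm_nonneg _)
    (fun k => gg_deriv_bound m k (R := |x| + 1) (by linarith [abs_nonneg x]) (by linarith))
    (Real.summable_pow_div_factorial (2*(|x|+1)))

lemma gg_deriv_aux (m : ℕ) (x : ℝ) :
    HasDerivAt (gg m)
      (∑' k : ℕ, (k : ℝ) * x ^ (k-1) / ((Nat.factorial k : ℝ) * (Nat.factorial (k + m) : ℝ))) x := by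
  set R : ℝ := |x| + 1 with hR
  have hR1 : (1:ℝ) ≤ R := by have := abs_nonneg x; simp only [hR]; linarith
  have hxR : x ∈ Metric.ball (0:ℝ) R := by
    simp only [Metric.mem_ball, Real.dist_eq, sub_zero, hR]
    linarith [lt_of_le_of_lt (le_abs_self x) (by linarith [abs_nonneg x] : |x| < |x| + 1)]
  have hg : ∀ (k : ℕ) (y : ℝ), y ∈ Metric.ball (0:ℝ) R →
      HasDerivAt (fun y : ℝ => y ^ k / ((Nat.factorial k : ℝ) * (Nat.factorial (k + m) : ℝ)))
        ((k : ℝ) * y ^ (k-1) / ((Nat.factorial k : ℝ) * (Nat.factorial (k + m) : ℝ))) y := by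
    intro k y _
    exact (hasDerivAt_pow k y).div_const _
  have hbound : ∀ (k : ℕ) (y : ℝ), y ∈ Metric.ball (0:ℝ) R →
      ‖(k : ℝ) * y ^ (k-1) / ((Nat.factorial k : ℝ) * (Nat.factorial (k + m) : ℝ))‖
        ≤ (2*R) ^ k / (Nat.factorial k : ℝ) := by
    intro k y hy
    have hy' : |y| ≤ R := by
      rw [Metric.mem_ball, Real.dist_eq, sub_zero] at hy; linarith
    exact gg_deriv_bound m k hR1 hy'
  exact hasDerivAt_tsum_of_isPreconnected (Real.summable_pow_div_factorial (2*R))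
    Metric.isOpen_ball (convex_ball (0:ℝ) R).isPreconnected hg hbound hxR
    (gg_summable m x) hxR

lemma gg_hasDerivAt (m : ℕ) (x : ℝ) : HasDerivAt (gg m) (gg (m+1) x) x := by
  have h := gg_deriv_aux m x
  have heq : (∑' k : ℕ, (k : ℝ) * x ^ (k-1) / ((Nat.factorial k : ℝ) * (Nat.factorial (k + m) : ℝ)))
      = gg (m+1) x := by
    have hs : Summable (fun k : ℕ => (k : ℝ) * x ^ (k-1) / ((Nat.factorial k : ℝ) * (Nat.factorial (k + m) : ℝ))) := by
      exact gg_deriv_summable m x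
    rw [hs.tsum_eq_zero_add]
    simp only [Nat.cast_zero, zero_mul, zero_div, zero_add]
    rw [gg]
    congr 1
    funext k
    have h1 : ((k+1 : ℕ) : ℝ) * x ^ (k+1-1) = (k+1 : ℝ) * x ^ k := by push_cast; ring_nf
    rw [h1]
    rw [Nat.factorial_succ]
    push_cast
    have hfk : (0:ℝ) < (Nat.factorial k : ℝ) := lt_of_lt_of_le one_pos (fact_ge_one k)
    have hfkm : (0:ℝ) < (Nat.factorial (k + 1 + m) : ℝ) := lt_of_lt_of_le one_pos (fact_ge_one _)
    have : k + 1 + m = k + (m + 1) := by ring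
    rw [this]
    field_simp
  rwa [heq] at h


lemma fact_pos' (n : ℕ) : (0:ℝ) < (Nat.factorial n : ℝ) := lt_of_lt_of_le one_pos (fact_ge_one n)

lemma hasSum_exp_real (z : ℝ) : HasSum (fun n : ℕ => z ^ n / (Nat.factorial n : ℝ)) (Real.exp z) := by
  rw [Real.exp_eq_exp_ℝ]
  exact NormedSpace.expSeries_div_hasSum_exp z

lemma summable_even_exp (z : ℝ) :
    Summable (fun k : ℕ => z ^ (2*k) / (Nat.factorial (2*k) : ℝ)) := by
  apply Summable.of_nonneg_of_le (fun k => by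
      rw [pow_mul]; positivity)
    (fun k => ?_) (Real.summable_pow_div_factorial (z^2))
  rw [pow_mul]
  apply div_le_div_of_nonneg_left (by positivity) (fact_pos' k)
  exact_mod_cast Nat.factorial_le (by omega)


lemma summable_odd_exp (z : ℝ) :
    Summable (fun k : ℕ => z ^ (2*k+1) / (Nat.factorial (2*k+1) : ℝ)) := by
  apply Summable.of_norm
  apply Summable.of_nonneg_of_le (fun k => norm_nonneg _) (fun k => ?_)
    ((Real.summable_pow_div_factorial (z^2)).mul_left |z|)
  rw [norm_div, Real.norm_eq_abs, Real.norm_eq_abs, Nat.abs_cast, abs_pow]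
  have h : |z| ^ (2*k+1) = |z| * (z^2)^k := by
    rw [pow_add, pow_mul, sq_abs, pow_one]; ring
  rw [h, mul_div_assoc]
  apply mul_le_mul_of_nonneg_left ?_ (abs_nonneg z)
  apply div_le_div_of_nonneg_left (by positivity) (fact_pos' k)
  exact_mod_cast Nat.factorial_le (by omega)

lemma evenodd_aux (z : ℝ) :
    HasSum (fun k : ℕ => z ^ (2*k) / (Nat.factorial (2*k) : ℝ))
      ((Real.exp z + Real.exp (-z)) / 2) ∧
    HasSum (fun k : ℕ => z ^ (2*k+1) / (Nat.factorial (2*k+1) : ℝ))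
      ((Real.exp z - Real.exp (-z)) / 2) := by
  obtain ⟨a, ha⟩ := summable_even_exp z
  obtain ⟨b, hb⟩ := summable_odd_exp z
  have h1 : a + b = Real.exp z :=
    HasSum.unique (HasSum.even_add_odd (f := fun n : ℕ => z ^ n / (Nat.factorial n : ℝ)) ha hb)
      (hasSum_exp_real z)
  have hb' : HasSum (fun k : ℕ => (-z) ^ (2*k+1) / (Nat.factorial (2*k+1) : ℝ)) (-b) := by
    have he : (fun k : ℕ => (-z) ^ (2*k+1) / (Nat.factorial (2*k+1) : ℝ))
        = fun k : ℕ => -(z ^ (2*k+1) / (Nat.factorial (2*k+1) : ℝ)) := by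
      funext k
      rw [Odd.neg_pow ⟨k, by ring⟩]
      ring
    rw [he]
    exact hb.neg
  have ha' : HasSum (fun k : ℕ => (-z) ^ (2*k) / (Nat.factorial (2*k) : ℝ)) a := by
    have he : (fun k : ℕ => (-z) ^ (2*k) / (Nat.factorial (2*k) : ℝ))
        = fun k : ℕ => z ^ (2*k) / (Nat.factorial (2*k) : ℝ) := by
      funext k
      rw [Even.neg_pow ⟨k, by ring⟩]
    rw [he]
    exact ha
  have h2 : a + -b = Real.exp (-z) :=
    HasSum.unique (HasSum.even_add_odd (f := fun n : ℕ => (-z) ^ n / (Nat.factorial n : ℝ)) ha' hb')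
      (hasSum_exp_real (-z))
  constructor
  · have : a = (Real.exp z + Real.exp (-z)) / 2 := by linarith
    exact this ▸ ha
  · have : b = (Real.exp z - Real.exp (-z)) / 2 := by linarith
    exact this ▸ hb

lemma hasSum_even_exp (z : ℝ) :
    HasSum (fun k : ℕ => z ^ (2*k) / (Nat.factorial (2*k) : ℝ))
      ((Real.exp z + Real.exp (-z)) / 2) := (evenodd_aux z).1

lemma hasSum_odd_exp (z : ℝ) :
    HasSum (fun k : ℕ => z ^ (2*k+1) / (Nat.factorial (2*k+1) : ℝ))
      ((Real.exp z - Real.exp (-z)) / 2) := (evenodd_aux z).2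


-- factorial expansion helpers
lemma fact_exp1 (n : ℕ) : ((Nat.factorial (n+1) : ℝ)) = (n+1) * (Nat.factorial n : ℝ) := by
  rw [Nat.factorial_succ]; push_cast; ring

lemma TT0 (z : ℝ) : z * TT 0 z = (Real.exp z - Real.exp (-z)) / 2 := by
  rw [TT, ← tsum_mul_left]
  have he : (fun k : ℕ => z * (z^(2*k) * (Nat.factorial k : ℝ) /
      ((Nat.factorial (2*k+1) : ℝ) * (Nat.factorial (k+0) : ℝ))))
      = fun k : ℕ => z ^ (2*k+1) / (Nat.factorial (2*k+1) : ℝ) := by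
    funext k
    have h1 := fact_pos' k
    have h2 := fact_pos' (2*k+1)
    rw [Nat.add_zero]
    field_simp
    ring
  rw [he]
  exact (hasSum_odd_exp z).tsum_eq

lemma TT1 (z : ℝ) : z^2 * TT 1 z = Real.exp z + Real.exp (-z) - 2 := by
  rw [TT, ← tsum_mul_left]
  have base := (hasSum_nat_add_iff' (f := fun k : ℕ => z ^ (2*k) / (Nat.factorial (2*k) : ℝ)) 1).mpr
    (hasSum_even_exp z)
  simp only [Finset.sum_range_one, Nat.mul_zero, pow_zero, Nat.factorial_zero, Nat.cast_one,
    div_one] at base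
  have h2 := base.mul_left 2
  have he : (fun k : ℕ => z^2 * (z^(2*k) * (Nat.factorial k : ℝ) /
      ((Nat.factorial (2*k+1) : ℝ) * (Nat.factorial (k+1) : ℝ))))
      = fun k : ℕ => 2 * (z ^ (2*(k+1)) / (Nat.factorial (2*(k+1)) : ℝ)) := by
    funext k
    have h1 := fact_pos' k
    have h2 := fact_pos' (2*k+1)
    have e1 : ((Nat.factorial (2*(k+1)) : ℝ)) = (2*k+2) * (Nat.factorial (2*k+1) : ℝ) := by
      rw [show 2*(k+1) = (2*k+1)+1 by ring, fact_exp1]; push_cast; ring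
    have e2 : ((Nat.factorial (k+1) : ℝ)) = (k+1) * (Nat.factorial k : ℝ) := fact_exp1 k
    rw [e1, e2, show 2*(k+1) = 2*k+2 by ring]
    field_simp
    ring
  rw [he]
  have : (2 : ℝ) * ((Real.exp z + Real.exp (-z)) / 2 - 1) = Real.exp z + Real.exp (-z) - 2 := by ring
  rw [← this]
  exact h2.tsum_eq

lemma TT2 (z : ℝ) : z^4 * TT 2 z =
    4*z*((Real.exp z - Real.exp (-z))/2 - z) - 4*((Real.exp z + Real.exp (-z))/2 - 1 - z^2/2) := by
  rw [TT, ← tsum_mul_left]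
  have odd1 := (hasSum_nat_add_iff' (f := fun k : ℕ => z ^ (2*k+1) / (Nat.factorial (2*k+1) : ℝ)) 1).mpr
    (hasSum_odd_exp z)
  have even2 := (hasSum_nat_add_iff' (f := fun k : ℕ => z ^ (2*k) / (Nat.factorial (2*k) : ℝ)) 2).mpr
    (hasSum_even_exp z)
  have hs1 : ∑ i ∈ Finset.range 1, z ^ (2*i+1) / (Nat.factorial (2*i+1) : ℝ) = z := by
    simp [Finset.sum_range_one]
  have hs2 : ∑ i ∈ Finset.range 2, z ^ (2*i) / (Nat.factorial (2*i) : ℝ) = 1 + z^2/2 := by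
    rw [Finset.sum_range_succ, Finset.sum_range_one]
    norm_num [Nat.factorial]
  rw [hs1] at odd1
  rw [hs2] at even2
  have comb := (odd1.mul_left (4*z)).sub (even2.mul_left 4)
  have he : (fun k : ℕ => z^4 * (z^(2*k) * (Nat.factorial k : ℝ) /
      ((Nat.factorial (2*k+1) : ℝ) * (Nat.factorial (k+2) : ℝ))))
      = fun k : ℕ => 4*z * (z ^ (2*(k+1)+1) / (Nat.factorial (2*(k+1)+1) : ℝ))
          - 4 * (z ^ (2*(k+2)) / (Nat.factorial (2*(k+2)) : ℝ)) := by
    funext k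
    have h1 := fact_pos' k
    have h2 := fact_pos' (2*k+1)
    have e1 : ((Nat.factorial (2*(k+1)+1) : ℝ)) = (2*k+3) * ((2*k+2) * (Nat.factorial (2*k+1) : ℝ)) := by
      rw [show 2*(k+1)+1 = ((2*k+1)+1)+1 by ring, fact_exp1, fact_exp1]; push_cast; ring
    have e2 : ((Nat.factorial (2*(k+2)) : ℝ))
        = (2*k+4) * ((2*k+3) * ((2*k+2) * (Nat.factorial (2*k+1) : ℝ))) := by
      rw [show 2*(k+2) = (((2*k+1)+1)+1)+1 by ring, fact_exp1, fact_exp1, fact_exp1]; push_cast; ring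
    have e3 : ((Nat.factorial (k+2) : ℝ)) = (k+2) * ((k+1) * (Nat.factorial k : ℝ)) := by
      rw [show k+2 = (k+1)+1 by ring, fact_exp1, fact_exp1]; push_cast; ring
    rw [e1, e2, e3, show 2*(k+1)+1 = 2*k+3 by ring, show 2*(k+2) = 2*k+4 by ring]
    field_simp
    ring
  rw [he]
  have goal_eq : 4*z*((Real.exp z - Real.exp (-z))/2 - z) - 4*((Real.exp z + Real.exp (-z))/2 - 1 - z^2/2)
      = 4*z*((Real.exp z - Real.exp (-z))/2 - z) - 4*((Real.exp z + Real.exp (-z))/2 - (1 + z^2/2)) := by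
    ring
  rw [goal_eq]
  exact comb.tsum_eq

lemma TT3 (z : ℝ) : z^6 * TT 3 z =
    8*(z^2*((Real.exp z + Real.exp (-z))/2 - 1 - z^2/2)
      - 3*z*((Real.exp z - Real.exp (-z))/2 - z - z^3/6)
      + 3*((Real.exp z + Real.exp (-z))/2 - 1 - z^2/2 - z^4/24)) := by
  rw [TT, ← tsum_mul_left]
  have even2 := (hasSum_nat_add_iff' (f := fun k : ℕ => z ^ (2*k) / (Nat.factorial (2*k) : ℝ)) 2).mpr
    (hasSum_even_exp z)
  have odd2 := (hasSum_nat_add_iff' (f := fun k : ℕ => z ^ (2*k+1) / (Nat.factorial (2*k+1) : ℝ)) 2).mpr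
    (hasSum_odd_exp z)
  have even3 := (hasSum_nat_add_iff' (f := fun k : ℕ => z ^ (2*k) / (Nat.factorial (2*k) : ℝ)) 3).mpr
    (hasSum_even_exp z)
  have hs2 : ∑ i ∈ Finset.range 2, z ^ (2*i) / (Nat.factorial (2*i) : ℝ) = 1 + z^2/2 := by
    rw [Finset.sum_range_succ, Finset.sum_range_one]
    norm_num [Nat.factorial]
  have hs2' : ∑ i ∈ Finset.range 2, z ^ (2*i+1) / (Nat.factorial (2*i+1) : ℝ) = z + z^3/6 := by
    rw [Finset.sum_range_succ, Finset.sum_range_one]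
    norm_num [Nat.factorial]
  have hs3 : ∑ i ∈ Finset.range 3, z ^ (2*i) / (Nat.factorial (2*i) : ℝ) = 1 + z^2/2 + z^4/24 := by
    rw [Finset.sum_range_succ, Finset.sum_range_succ, Finset.sum_range_one]
    norm_num [Nat.factorial]
  rw [hs2] at even2
  rw [hs2'] at odd2
  rw [hs3] at even3
  have comb := ((even2.mul_left (8*z^2)).sub (odd2.mul_left (24*z))).add (even3.mul_left 24)
  have he : (fun k : ℕ => z^6 * (z^(2*k) * (Nat.factorial k : ℝ) /
      ((Nat.factorial (2*k+1) : ℝ) * (Nat.factorial (k+3) : ℝ))))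
      = fun k : ℕ => 8*z^2 * (z ^ (2*(k+2)) / (Nat.factorial (2*(k+2)) : ℝ))
          - 24*z * (z ^ (2*(k+2)+1) / (Nat.factorial (2*(k+2)+1) : ℝ))
          + 24 * (z ^ (2*(k+3)) / (Nat.factorial (2*(k+3)) : ℝ)) := by
    funext k
    have h1 := fact_pos' k
    have h2 := fact_pos' (2*k+1)
    have e2 : ((Nat.factorial (2*(k+2)) : ℝ))
        = (2*k+4) * ((2*k+3) * ((2*k+2) * (Nat.factorial (2*k+1) : ℝ))) := by
      rw [show 2*(k+2) = (((2*k+1)+1)+1)+1 by ring, fact_exp1, fact_exp1, fact_exp1]; push_cast; ring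
    have e2' : ((Nat.factorial (2*(k+2)+1) : ℝ))
        = (2*k+5) * ((2*k+4) * ((2*k+3) * ((2*k+2) * (Nat.factorial (2*k+1) : ℝ)))) := by
      rw [show 2*(k+2)+1 = ((((2*k+1)+1)+1)+1)+1 by ring, fact_exp1, fact_exp1, fact_exp1, fact_exp1]
      push_cast; ring
    have e3 : ((Nat.factorial (2*(k+3)) : ℝ))
        = (2*k+6) * ((2*k+5) * ((2*k+4) * ((2*k+3) * ((2*k+2) * (Nat.factorial (2*k+1) : ℝ))))) := by
      rw [show 2*(k+3) = (((((2*k+1)+1)+1)+1)+1)+1 by ring,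
        fact_exp1, fact_exp1, fact_exp1, fact_exp1, fact_exp1]
      push_cast; ring
    have e4 : ((Nat.factorial (k+3) : ℝ)) = (k+3) * ((k+2) * ((k+1) * (Nat.factorial k : ℝ))) := by
      rw [show k+3 = ((k+1)+1)+1 by ring, fact_exp1, fact_exp1, fact_exp1]; push_cast; ring
    rw [e2, e2', e3, e4]
    field_simp
    ring
  rw [he]
  have goal_eq : 8*(z^2*((Real.exp z + Real.exp (-z))/2 - 1 - z^2/2)
      - 3*z*((Real.exp z - Real.exp (-z))/2 - z - z^3/6)
      + 3*((Real.exp z + Real.exp (-z))/2 - 1 - z^2/2 - z^4/24))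
      = 8*z^2*((Real.exp z + Real.exp (-z))/2 - (1 + z^2/2))
        - 24*z*((Real.exp z - Real.exp (-z))/2 - (z + z^3/6))
        + 24*((Real.exp z + Real.exp (-z))/2 - (1 + z^2/2 + z^4/24)) := by
    ring
  rw [goal_eq]
  exact comb.tsum_eq


/-- The density of the absolutely continuous component of the cyclic motion in ℝ³:
`p₃(u,t) = (e^{−λt}/c)[−λF − 3∂F/∂t + (2/λ)∂²F/∂t² + (4/λ²)∂³F/∂t³]`. -/
noncomputable def density3d (lam c u t : ℝ) : ℝ :=
  Real.exp (-(lam * t)) / c *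
    (-(lam * F lam c u t) - 3 * deriv (fun s => F lam c u s) t +
      2 / lam * iteratedDeriv 2 (fun s => F lam c u s) t +
      4 / lam ^ 2 * iteratedDeriv 3 (fun s => F lam c u s) t)



lemma F_eq_gg (lam c u t : ℝ) :
    F lam c u t = gg 0 ((lam / (2*c))^2 * (c^2*t^2 - u^2)) := by
  rw [F, gg]
  congr 1
  funext k
  rw [mul_pow, ← pow_mul, Nat.add_zero]; ring

section deriv
variable (lam c u : ℝ)

/-- the argument of `gg` as a function of time -/
noncomputable def X (lam c u s : ℝ) : ℝ := (lam / (2*c))^2 * (c^2*s^2 - u^2)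

lemma X_hasDerivAt (s : ℝ) :
    HasDerivAt (fun s => X lam c u s) ((lam / (2*c))^2 * (2*c^2*s)) s := by
  have h : HasDerivAt (fun s : ℝ => c^2*s^2 - u^2) (2*c^2*s) s := by
    have := ((hasDerivAt_pow 2 s).const_mul (c^2)).sub_const (u^2)
    exact this.congr_deriv (by norm_num; ring)
  exact h.const_mul ((lam / (2*c))^2)

lemma FD1 (s : ℝ) :
    HasDerivAt (fun s => F lam c u s)
      (gg 1 (X lam c u s) * ((lam / (2*c))^2 * (2*c^2*s))) s := by
  have h := (gg_hasDerivAt 0 (X lam c u s)).comp s (X_hasDerivAt lam c u s)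
  have : (fun s => F lam c u s) = (fun s => gg 0 (X lam c u s)) := by
    funext s; rw [F_eq_gg]; rfl
  rw [this]
  exact h

lemma deriv_F : deriv (fun s => F lam c u s)
    = fun s => gg 1 (X lam c u s) * ((lam / (2*c))^2 * (2*c^2*s)) := by
  funext s; exact (FD1 lam c u s).deriv

lemma FD2 (s : ℝ) :
    HasDerivAt (fun s => gg 1 (X lam c u s) * ((lam / (2*c))^2 * (2*c^2*s)))
      (gg 2 (X lam c u s) * ((lam / (2*c))^2 * (2*c^2*s))^2
        + gg 1 (X lam c u s) * ((lam / (2*c))^2 * (2*c^2))) s := by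
  have h1 : HasDerivAt (fun s => gg 1 (X lam c u s))
      (gg 2 (X lam c u s) * ((lam / (2*c))^2 * (2*c^2*s))) s :=
    (gg_hasDerivAt 1 (X lam c u s)).comp s (X_hasDerivAt lam c u s)
  have h2 : HasDerivAt (fun s : ℝ => (lam / (2*c))^2 * (2*c^2*s))
      ((lam / (2*c))^2 * (2*c^2)) s := by
    simpa using ((hasDerivAt_id' s).const_mul (2*c^2 : ℝ)).const_mul ((lam / (2*c))^2)
  have := h1.mul h2
  exact this.congr_deriv (by ring)

lemma FD3 (s : ℝ) :
    HasDerivAt (fun s => gg 2 (X lam c u s) * ((lam / (2*c))^2 * (2*c^2*s))^2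
        + gg 1 (X lam c u s) * ((lam / (2*c))^2 * (2*c^2)))
      (gg 3 (X lam c u s) * ((lam / (2*c))^2 * (2*c^2*s))^3
        + 3 * ((lam / (2*c))^2 * (2*c^2))^2 * s * gg 2 (X lam c u s)) s := by
  have h1 : HasDerivAt (fun s => gg 2 (X lam c u s))
      (gg 3 (X lam c u s) * ((lam / (2*c))^2 * (2*c^2*s))) s :=
    (gg_hasDerivAt 2 (X lam c u s)).comp s (X_hasDerivAt lam c u s)
  have h2 : HasDerivAt (fun s : ℝ => ((lam / (2*c))^2 * (2*c^2*s))^2)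
      (2 * ((lam / (2*c))^2 * (2*c^2))^2 * s) s := by
    have hb : HasDerivAt (fun s : ℝ => (lam / (2*c))^2 * (2*c^2*s))
        ((lam / (2*c))^2 * (2*c^2)) s := by
      simpa using ((hasDerivAt_id' s).const_mul (2*c^2 : ℝ)).const_mul ((lam / (2*c))^2)
    have := hb.pow 2
    exact this.congr_deriv (by norm_num; ring)
  have h3 : HasDerivAt (fun s => gg 1 (X lam c u s))
      (gg 2 (X lam c u s) * ((lam / (2*c))^2 * (2*c^2*s))) s :=
    (gg_hasDerivAt 1 (X lam c u s)).comp s (X_hasDerivAt lam c u s)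
  have := (h1.mul h2).add (h3.mul_const ((lam / (2*c))^2 * (2*c^2)))
  exact this.congr_deriv (by ring)

lemma iteratedDeriv_two (t : ℝ) :
    iteratedDeriv 2 (fun s => F lam c u s) t
      = gg 2 (X lam c u t) * ((lam / (2*c))^2 * (2*c^2*t))^2
        + gg 1 (X lam c u t) * ((lam / (2*c))^2 * (2*c^2)) := by
  rw [iteratedDeriv_succ, iteratedDeriv_one, deriv_F]
  exact (FD2 lam c u t).deriv

lemma iteratedDeriv_three (t : ℝ) :
    iteratedDeriv 3 (fun s => F lam c u s) t
      = gg 3 (X lam c u t) * ((lam / (2*c))^2 * (2*c^2*t))^3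
        + 3 * ((lam / (2*c))^2 * (2*c^2))^2 * t * gg 2 (X lam c u t) := by
  rw [iteratedDeriv_succ]
  have : iteratedDeriv 2 (fun s => F lam c u s)
      = fun s => gg 2 (X lam c u s) * ((lam / (2*c))^2 * (2*c^2*s))^2
        + gg 1 (X lam c u s) * ((lam / (2*c))^2 * (2*c^2)) := by
    funext s; exact iteratedDeriv_two lam c u s
  rw [this]
  exact (FD3 lam c u t).deriv

end deriv



lemma cont_pow (a : ℝ) (k : ℕ) : Continuous (fun u : ℝ => (a^2 - u^2)^k) := by
  exact ((continuous_const.sub (continuous_pow 2)).pow k)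

lemma integral_sq_pow (k : ℕ) (a : ℝ) (ha : 0 ≤ a) :
    ∫ u in (0:ℝ)..a, (a^2 - u^2)^k
      = a^(2*k+1) * 4^k * ((Nat.factorial k : ℝ))^2 / (Nat.factorial (2*k+1) : ℝ) := by
  induction k with
  | zero => simp
  | succ k ih =>
    have hderiv : ∀ u ∈ Set.uIcc (0:ℝ) a,
        HasDerivAt (fun u : ℝ => u * (a^2 - u^2)^(k+1))
          ((2*(k:ℝ)+3) * (a^2 - u^2)^(k+1) - (2*(k:ℝ)+2) * a^2 * (a^2 - u^2)^k) u := by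
      intro u _
      have hin : HasDerivAt (fun u : ℝ => a^2 - u^2) (-(2*u)) u := by
        simpa using (hasDerivAt_pow 2 u).const_sub (a^2)
      have hpow : HasDerivAt (fun u : ℝ => (a^2 - u^2)^(k+1))
          (((k:ℝ)+1) * (a^2 - u^2)^k * (-(2*u))) u := by
        exact (hin.pow (k+1)).congr_deriv (by simp)
      have := (hasDerivAt_id' u).mul hpow
      exact this.congr_deriv (by ring)
    have hint : IntervalIntegrable
        (fun u : ℝ => (2*(k:ℝ)+3) * (a^2 - u^2)^(k+1) - (2*(k:ℝ)+2) * a^2 * (a^2 - u^2)^k)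
        MeasureTheory.volume 0 a := by
      apply Continuous.intervalIntegrable
      exact (continuous_const.mul (cont_pow a (k+1))).sub (continuous_const.mul (cont_pow a k))
    have hftc := intervalIntegral.integral_eq_sub_of_hasDerivAt hderiv hint
    have hzero : (fun u : ℝ => u * (a^2 - u^2)^(k+1)) a - (fun u : ℝ => u * (a^2 - u^2)^(k+1)) 0 = 0 := by
      simp
    rw [hzero] at hftc
    rw [intervalIntegral.integral_sub (f := fun u => (2*(k:ℝ)+3) * (a^2 - u^2)^(k+1))
        (g := fun u => (2*(k:ℝ)+2) * a^2 * (a^2 - u^2)^k)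
        ((continuous_const.mul (cont_pow a (k+1))).intervalIntegrable 0 a)
        ((continuous_const.mul (cont_pow a k)).intervalIntegrable 0 a),
      intervalIntegral.integral_const_mul, intervalIntegral.integral_const_mul, ih] at hftc
    have h1 : (0:ℝ) < 2*(k:ℝ)+3 := by positivity
    have e1 : ((Nat.factorial (2*(k+1)+1) : ℝ))
        = (2*(k:ℝ)+3) * ((2*(k:ℝ)+2) * (Nat.factorial (2*k+1) : ℝ)) := by
      rw [show 2*(k+1)+1 = ((2*k+1)+1)+1 by ring, Nat.factorial_succ, Nat.factorial_succ]
      push_cast; ring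
    have e2 : ((Nat.factorial (k+1) : ℝ)) = ((k:ℝ)+1) * (Nat.factorial k : ℝ) := by
      rw [Nat.factorial_succ]; push_cast; ring
    have hf := fact_pos' (2*k+1)
    have hf2 := fact_pos' k
    rw [e1, e2]
    rw [sub_eq_zero] at hftc
    have : (∫ u in (0:ℝ)..a, (a ^ 2 - u ^ 2) ^ (k + 1))
        = (2*(k:ℝ)+2) * a^2 * (a ^ (2 * k + 1) * 4 ^ k * (Nat.factorial k : ℝ) ^ 2
            / (Nat.factorial (2 * k + 1) : ℝ)) / (2*(k:ℝ)+3) := by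
      rw [eq_div_iff (ne_of_gt h1)]
      linarith [hftc]
    rw [this]
    field_simp
    ring



lemma integral_gg (m : ℕ) {lam c t : ℝ} (hlam : 0 < lam) (hc : 0 < c) (ht : 0 < t) :
    ∫ u in (0:ℝ)..(c*t), gg m ((lam/(2*c))^2 * (c^2*t^2 - u^2))
      = (c*t) * TT m (lam*t) := by
  set a : ℝ := c*t with ha_def
  have ha : 0 < a := mul_pos hc ht
  set q2 : ℝ := (lam/(2*c))^2 with hq2_def
  have hq2 : 0 < q2 := by positivity
  -- the summand
  set f : ℕ → ℝ → ℝ := fun k u => (q2 * (c^2*t^2 - u^2)) ^ k /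
      ((Nat.factorial k : ℝ) * (Nat.factorial (k + m) : ℝ)) with hf_def
  have hfa : ∀ u, gg m (q2 * (c^2*t^2 - u^2)) = ∑' k, f k u := fun u => rfl
  have hcongr : c^2*t^2 = a^2 := by rw [ha_def]; ring
  -- each f k is continuous
  have hfc : ∀ k, Continuous (f k) := by
    intro k
    apply Continuous.div_const
    exact ((continuous_const.mul (continuous_const.sub (continuous_pow 2))).pow k)
  -- value of each integral
  have hval : ∀ k : ℕ, ∫ u in (0:ℝ)..a, f k u
      = a * ((lam*t)^(2*k) * (Nat.factorial k : ℝ) /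
          ((Nat.factorial (2*k+1) : ℝ) * (Nat.factorial (k+m) : ℝ))) := by
    intro k
    have : ∀ u : ℝ, f k u = (q2^k / ((Nat.factorial k : ℝ) * (Nat.factorial (k + m) : ℝ)))
        * (a^2 - u^2)^k := by
      intro u
      rw [hf_def]
      simp only [hcongr]
      rw [mul_pow]
      ring
    rw [intervalIntegral.integral_congr (fun u _ => this u),
      intervalIntegral.integral_const_mul, integral_sq_pow k a ha.le]
    have hfk := fact_pos' k
    have hfkm := fact_pos' (k+m)
    have hf2k := fact_pos' (2*k+1)
    have hbase : q2 * (4 * a^2) = (lam*t)^2 := by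
      rw [hq2_def, ha_def]
      field_simp
      ring
    have hbase' : q2 * 4 * a^2 = (lam*t)^2 := by rw [← hbase]; ring
    have hpow : (lam*t)^(2*k) = q2^k * 4^k * a^(2*k) := by
      rw [pow_mul, pow_mul, ← hbase', mul_pow, mul_pow]
    rw [hpow, pow_succ]
    field_simp
  have hnonneg : ∀ k, ∀ u ∈ Set.Ioc (0:ℝ) a, 0 ≤ f k u := by
    intro k u hu
    have harg : 0 ≤ q2 * (c^2*t^2 - u^2) := by
      rw [hcongr]
      have : u^2 ≤ a^2 := by nlinarith [hu.1, hu.2]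
      nlinarith [hq2]
    exact div_nonneg (pow_nonneg harg k) (by positivity)
  have hIoc : ∀ k, ∫ u in Set.Ioc (0:ℝ) a, f k u = ∫ u in (0:ℝ)..a, f k u :=
    fun k => (intervalIntegral.integral_of_le ha.le).symm
  have hInt : ∀ k, IntegrableOn (f k) (Set.Ioc (0:ℝ) a) volume :=
    fun k => (hfc k).integrableOn_Ioc
  have hnorm : ∀ k, (∫ u in Set.Ioc (0:ℝ) a, ‖f k u‖)
      = a * ((lam*t)^(2*k) * (Nat.factorial k : ℝ) /
          ((Nat.factorial (2*k+1) : ℝ) * (Nat.factorial (k+m) : ℝ))) := by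
    intro k
    rw [← hval k, ← hIoc k]
    apply setIntegral_congr_fun measurableSet_Ioc
    intro u hu
    exact Real.norm_of_nonneg (hnonneg k u hu)
  have hsum_norm : Summable (fun k => ∫ u in Set.Ioc (0:ℝ) a, ‖f k u‖) := by
    rw [funext hnorm]
    apply Summable.mul_left
    apply Summable.of_nonneg_of_le (fun k => ?_) (fun k => ?_)
      (Real.summable_pow_div_factorial ((lam*t)^2))
    · have := fact_pos' k
      have := fact_pos' (2*k+1)
      have := fact_pos' (k+m)
      have : (0:ℝ) ≤ (lam*t)^(2*k) := by positivity
      positivity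
    · have hfk := fact_pos' k
      have hf2k := fact_pos' (2*k+1)
      have hfkm := fact_pos' (k+m)
      have h1 : (Nat.factorial k : ℝ) ≤ (Nat.factorial (2*k+1) : ℝ) := by
        exact_mod_cast Nat.factorial_le (by omega)
      have h2 : (Nat.factorial k : ℝ) ≤ (Nat.factorial (k+m) : ℝ) := by
        exact_mod_cast Nat.factorial_le (by omega)
      rw [pow_mul, div_le_div_iff₀ (by positivity) hfk]
      have hz : (0:ℝ) ≤ ((lam*t)^2)^k := by positivity
      nlinarith [mul_le_mul h1 h2 hfk.le hf2k.le]
  have hkey := MeasureTheory.integral_tsum_of_summable_integral_norm hInt hsum_norm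
  calc ∫ u in (0:ℝ)..a, gg m (q2 * (c^2*t^2 - u^2))
      = ∫ u in Set.Ioc (0:ℝ) a, (∑' k, f k u) := by
        rw [intervalIntegral.integral_of_le ha.le]
        rfl
    _ = ∑' k, ∫ u in Set.Ioc (0:ℝ) a, f k u := hkey.symm
    _ = ∑' k, a * ((lam*t)^(2*k) * (Nat.factorial k : ℝ) /
          ((Nat.factorial (2*k+1) : ℝ) * (Nat.factorial (k+m) : ℝ))) := by
        congr 1
        funext k
        rw [hIoc k, hval k]
    _ = a * TT m (lam*t) := by rw [TT, tsum_mul_left]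


theorem integral_density3d
    (lam c t : ℝ) (hlam : 0 < lam) (hc : 0 < c) (ht : 0 < t) :
    ∫ u in (0 : ℝ)..(c * t), density3d lam c u t =
      1 - Real.exp (-(lam * t)) - lam * t * Real.exp (-(lam * t)) -
        lam ^ 2 * t ^ 2 / 2 * Real.exp (-(lam * t)) := by
  have hc' : c ≠ 0 := ne_of_gt hc
  have hlam' : lam ≠ 0 := ne_of_gt hlam
  have ht' : t ≠ 0 := ne_of_gt ht
  have hz : lam * t ≠ 0 := mul_ne_zero hlam' ht'
  have hpoint : ∀ u : ℝ, density3d lam c u t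
      = Real.exp (-(lam*t))/c * ((-lam) * gg 0 ((lam/(2*c))^2 * (c^2*t^2 - u^2))
        + (lam - 3*lam^2*t/2) * gg 1 ((lam/(2*c))^2 * (c^2*t^2 - u^2))
        + (lam^3*t^2/2 + 3*lam^2*t) * gg 2 ((lam/(2*c))^2 * (c^2*t^2 - u^2))
        + (lam^4*t^3/2) * gg 3 ((lam/(2*c))^2 * (c^2*t^2 - u^2))) := by
    intro u
    rw [density3d, (FD1 lam c u t).deriv, iteratedDeriv_two, iteratedDeriv_three, F_eq_gg]
    simp only [X]
    field_simp
    ring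
  have hggcont : ∀ m : ℕ, Continuous (gg m) := fun m =>
    continuous_iff_continuousAt.mpr (fun x => (gg_hasDerivAt m x).continuousAt)
  have hInt : ∀ m : ℕ, IntervalIntegrable
      (fun u => gg m ((lam/(2*c))^2 * (c^2*t^2 - u^2))) volume 0 (c*t) := by
    intro m
    apply Continuous.intervalIntegrable
    exact (hggcont m).comp (continuous_const.mul (continuous_const.sub (continuous_pow 2)))
  rw [intervalIntegral.integral_congr (g := fun u => Real.exp (-(lam*t))/c *
      ((-lam) * gg 0 ((lam/(2*c))^2 * (c^2*t^2 - u^2))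
        + (lam - 3*lam^2*t/2) * gg 1 ((lam/(2*c))^2 * (c^2*t^2 - u^2))
        + (lam^3*t^2/2 + 3*lam^2*t) * gg 2 ((lam/(2*c))^2 * (c^2*t^2 - u^2))
        + (lam^4*t^3/2) * gg 3 ((lam/(2*c))^2 * (c^2*t^2 - u^2))))
    (fun u _ => hpoint u)]
  rw [intervalIntegral.integral_const_mul]
  rw [intervalIntegral.integral_add
      ((((hInt 0).const_mul _).add ((hInt 1).const_mul _)).add ((hInt 2).const_mul _))
      ((hInt 3).const_mul _)]
  rw [intervalIntegral.integral_add
      (((hInt 0).const_mul _).add ((hInt 1).const_mul _)) ((hInt 2).const_mul _)]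
  rw [intervalIntegral.integral_add ((hInt 0).const_mul _) ((hInt 1).const_mul _)]
  simp only [intervalIntegral.integral_const_mul]
  rw [integral_gg 0 hlam hc ht, integral_gg 1 hlam hc ht,
    integral_gg 2 hlam hc ht, integral_gg 3 hlam hc ht]
  have hT0 : TT 0 (lam*t) = ((Real.exp (lam*t) - Real.exp (-(lam*t)))/2) / (lam*t) := by
    rw [eq_div_iff hz, mul_comm]
    exact TT0 (lam*t)
  have hT1 : TT 1 (lam*t) = (Real.exp (lam*t) + Real.exp (-(lam*t)) - 2) / (lam*t)^2 := by
    rw [eq_div_iff (pow_ne_zero 2 hz), mul_comm]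
    exact TT1 (lam*t)
  have hT2 : TT 2 (lam*t) = (4*(lam*t)*((Real.exp (lam*t) - Real.exp (-(lam*t)))/2 - lam*t)
      - 4*((Real.exp (lam*t) + Real.exp (-(lam*t)))/2 - 1 - (lam*t)^2/2)) / (lam*t)^4 := by
    rw [eq_div_iff (pow_ne_zero 4 hz), mul_comm]
    exact TT2 (lam*t)
  have hT3 : TT 3 (lam*t) = (8*((lam*t)^2*((Real.exp (lam*t) + Real.exp (-(lam*t)))/2 - 1 - (lam*t)^2/2)
      - 3*(lam*t)*((Real.exp (lam*t) - Real.exp (-(lam*t)))/2 - lam*t - (lam*t)^3/6)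
      + 3*((Real.exp (lam*t) + Real.exp (-(lam*t)))/2 - 1 - (lam*t)^2/2 - (lam*t)^4/24))) / (lam*t)^6 := by
    rw [eq_div_iff (pow_ne_zero 6 hz), mul_comm]
    exact TT3 (lam*t)
  rw [hT0, hT1, hT2, hT3, Real.exp_neg (lam*t)]
  have hexp := Real.exp_ne_zero (lam*t)
  field_simp
  ring
end

section
/- Let λ > 0, c > 0, t > 0, 0 < u < ct, and define F(u,t) = ∑_{k=0}^∞ (λ/(2c))^{2k} (c²t² − u²)^k / (k!)². Then the three-dimensional density in its second form satisfies the decomposition (e^{−λt}/c) [ λ F + ∂F/∂t + (2c²/λ) ∂²F/∂u² + (4c²/λ²) ∂³F/(∂t ∂u²) ](u,t) = ∑_{k=1}^∞ e^{−λt} ((λt)^{2k+1}/(2k+1)!) · ((2k+1)!/(2^{2k}(ct)^{2k+1}(k−1)!(k+1)!)) · (c²t² − u²)^{k−1}(c²t² + u²) + ∑_{k=1}^∞ e^{−λt} ((λt)^{2k+2}/(2k+2)!) · ((2k+2)!/((k+2)!(k−1)!)) · (c²t² − u²)^{k−1}(c²t² + 3u²) / (2ct)^{2k+1}. -/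
open Real

lemma summable_of_le_pow_div_factorial {f : ℕ → ℝ} (C a : ℝ)
    (h : ∀ k, |f k| ≤ C * a ^ k / (Nat.factorial k : ℝ)) : Summable f := by
  apply Summable.of_norm_bounded ((Real.summable_pow_div_factorial a).mul_left C)
  intro k
  simpa [mul_div_assoc] using h k

noncomputable def G (r z : ℝ) (m : ℕ) : ℝ :=
  ∑' k : ℕ, r ^ (k + m) * z ^ k / ((Nat.factorial k : ℝ) * (Nat.factorial (k + m) : ℝ))

lemma G_term_bound (r z : ℝ) (m : ℕ) (k : ℕ) :
    |r ^ (k + m) * z ^ k / ((Nat.factorial k : ℝ) * (Nat.factorial (k + m) : ℝ))|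
      ≤ |r| ^ m * (|r| * |z|) ^ k / (Nat.factorial k : ℝ) := by
  have h1 : (1:ℝ) ≤ (Nat.factorial (k + m) : ℝ) := by
    exact_mod_cast Nat.one_le_iff_ne_zero.mpr (Nat.factorial_ne_zero _)
  have hk : (0:ℝ) < (Nat.factorial k : ℝ) := by positivity
  have heq : |r ^ (k + m) * z ^ k / ((Nat.factorial k : ℝ) * (Nat.factorial (k + m) : ℝ))|
      = (|r| ^ m * (|r| * |z|) ^ k) / ((Nat.factorial k : ℝ) * (Nat.factorial (k + m) : ℝ)) := by
    rw [abs_div, abs_mul, abs_pow, abs_pow, abs_mul, Nat.abs_cast, Nat.abs_cast,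
      pow_add, mul_pow]
    ring
  rw [heq]
  gcongr
  nlinarith

lemma G_summable (r z : ℝ) (m : ℕ) :
    Summable (fun k : ℕ => r ^ (k + m) * z ^ k /
      ((Nat.factorial k : ℝ) * (Nat.factorial (k + m) : ℝ))) := by
  apply summable_of_le_pow_div_factorial (|r| ^ m) (|r| * |z|)
  intro k
  simpa [mul_div_assoc] using G_term_bound r z m k

lemma G_hasDerivAt (r : ℝ) (m : ℕ) (z : ℝ) :
    HasDerivAt (fun y => G r y m) (G r z (m + 1)) z := by
  set R : ℝ := |z| + 1 with hR
  have hR1 : (1:ℝ) ≤ R := by rw [hR]; linarith [abs_nonneg z]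
  set g : ℕ → ℝ → ℝ := fun k y =>
    r ^ (k + m) * y ^ k / ((Nat.factorial k : ℝ) * (Nat.factorial (k + m) : ℝ)) with hg
  set g' : ℕ → ℝ → ℝ := fun k y =>
    r ^ (k + m) * ((k : ℝ) * y ^ (k - 1)) /
      ((Nat.factorial k : ℝ) * (Nat.factorial (k + m) : ℝ)) with hg'
  set u : ℕ → ℝ := fun k => |r| ^ m * (2 * |r| * R) ^ k / (Nat.factorial k : ℝ) with hu
  have hderiv : ∀ k (y : ℝ), HasDerivAt (g k) (g' k y) y := fun k y =>
    ((hasDerivAt_pow k y).const_mul (r ^ (k + m))).div_const _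
  have hbound : ∀ k (y : ℝ), y ∈ Metric.ball (0:ℝ) R → ‖g' k y‖ ≤ u k := by
    intro k y hy
    have hyR : |y| ≤ R := le_of_lt (by simpa [Real.norm_eq_abs] using hy)
    have hy0 : (0:ℝ) ≤ |y| := abs_nonneg _
    have hfac : (1:ℝ) ≤ (Nat.factorial (k + m) : ℝ) := by
      exact_mod_cast Nat.one_le_iff_ne_zero.mpr (Nat.factorial_ne_zero _)
    have hkfac : (0:ℝ) < (Nat.factorial k : ℝ) := by positivity
    have hk2 : (k : ℝ) ≤ 2 ^ k := by exact_mod_cast (Nat.lt_two_pow_self (n := k)).le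
    have heq : ‖g' k y‖ = |r| ^ (k + m) * ((k : ℝ) * |y| ^ (k - 1)) /
        ((Nat.factorial k : ℝ) * (Nat.factorial (k + m) : ℝ)) := by
      rw [Real.norm_eq_abs, hg', abs_div, abs_mul, abs_pow, abs_mul, abs_pow,
        Nat.abs_cast, abs_mul, Nat.abs_cast, Nat.abs_cast]
    have h2 : (k : ℝ) * |y| ^ (k - 1) ≤ 2 ^ k * R ^ k := by
      have hp1 : |y| ^ (k - 1) ≤ R ^ (k - 1) := pow_le_pow_left₀ hy0 hyR _
      have hp2 : R ^ (k - 1) ≤ R ^ k := pow_le_pow_right₀ hR1 (Nat.sub_le k 1)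
      exact mul_le_mul hk2 (hp1.trans hp2) (by positivity) (by positivity)
    have hnum : |r| ^ m * (2 * |r| * R) ^ k = |r| ^ (k + m) * (2 ^ k * R ^ k) := by
      rw [mul_pow, mul_pow, pow_add]; ring
    rw [heq, hu]
    show _ ≤ |r| ^ m * (2 * |r| * R) ^ k / (Nat.factorial k : ℝ)
    rw [hnum]
    exact div_le_div₀ (by positivity) (mul_le_mul_of_nonneg_left h2 (by positivity))
      hkfac (by nlinarith)
  have hz : z ∈ Metric.ball (0:ℝ) R := by
    simp only [Metric.mem_ball, dist_zero_right, Real.norm_eq_abs, hR]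
    linarith
  have husum : Summable u := by
    apply summable_of_le_pow_div_factorial (|r| ^ m) (2 * |r| * R)
    intro k
    rw [abs_of_nonneg (by positivity)]
  have key := hasDerivAt_tsum_of_isPreconnected husum Metric.isOpen_ball
    (convex_ball (0:ℝ) R).isPreconnected (fun k y _ => hderiv k y) hbound hz
    (G_summable r z m) hz
  have hsum' : Summable fun k => g' k z :=
    Summable.of_norm_bounded husum (fun k => hbound k z hz)
  have hval : (∑' k, g' k z) = G r z (m + 1) := by
    rw [hsum'.tsum_eq_zero_add]
    have h0 : g' 0 z = 0 := by simp [hg']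
    rw [h0, zero_add, G]
    apply tsum_congr; intro k
    simp only [hg']
    have he : k + 1 + m = k + (m + 1) := by omega
    rw [he, Nat.add_sub_cancel]
    have hfs : ((k + 1).factorial : ℝ) = ((k:ℝ) + 1) * (k.factorial : ℝ) := by
      exact_mod_cast Nat.factorial_succ k
    rw [hfs]
    have hkf : ((k.factorial : ℝ)) ≠ 0 := by positivity
    have hmf : ((k + (m+1)).factorial : ℝ) ≠ 0 := by positivity
    have hk1 : ((k:ℝ) + 1) ≠ 0 := by positivity
    field_simp
    push_cast
    ring
  rw [← hval]
  exact key

lemma G_rec (r z : ℝ) (m : ℕ) :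
    z * G r z (m + 2) = r * G r z m - ((m : ℝ) + 1) * G r z (m + 1) := by
  set h : ℕ → ℝ := fun k => (k : ℝ) * r ^ (k + m + 1) * z ^ k /
    ((Nat.factorial k : ℝ) * (Nat.factorial (k + m + 1) : ℝ)) with hh
  have hsumh : Summable h := by
    apply summable_of_le_pow_div_factorial (|r| ^ (m + 1)) (2 * |r| * |z|)
    intro k
    have hfac1 : (1:ℝ) ≤ (Nat.factorial (k + m + 1) : ℝ) := by
      exact_mod_cast Nat.one_le_iff_ne_zero.mpr (Nat.factorial_ne_zero _)
    have hkfac : (0:ℝ) < (Nat.factorial k : ℝ) := by positivity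
    have hk2 : (k : ℝ) ≤ 2 ^ k := by exact_mod_cast (Nat.lt_two_pow_self (n := k)).le
    have heq : |h k| = (k : ℝ) * |r| ^ (k + m + 1) * |z| ^ k /
        ((Nat.factorial k : ℝ) * (Nat.factorial (k + m + 1) : ℝ)) := by
      rw [hh]
      rw [abs_div, abs_mul, abs_mul, abs_pow, abs_pow, Nat.abs_cast, abs_mul,
        Nat.abs_cast, Nat.abs_cast]
    have hnum : |r| ^ (m + 1) * (2 * |r| * |z|) ^ k
        = |r| ^ (k + m + 1) * (2 ^ k * |z| ^ k) := by
      rw [mul_pow, mul_pow, pow_add, pow_add]; ring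
    rw [heq, hnum]
    refine div_le_div₀ (by positivity) ?_ hkfac (by nlinarith)
    have : (k : ℝ) * |z| ^ k ≤ 2 ^ k * |z| ^ k :=
      mul_le_mul_of_nonneg_right hk2 (by positivity)
    nlinarith [pow_nonneg (abs_nonneg r) (k + m + 1)]
  have step1 : r * G r z m - ((m : ℝ) + 1) * G r z (m + 1) = ∑' k, h k := by
    rw [G, G, ← tsum_mul_left, ← tsum_mul_left,
      ← Summable.tsum_sub ((G_summable r z m).mul_left r)
        ((G_summable r z (m + 1)).mul_left _)]
    apply tsum_congr; intro k
    have he : k + (m + 1) = k + m + 1 := by omega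
    rw [hh]
    simp only [he]
    have hfs : ((k + m + 1).factorial : ℝ)
        = ((k : ℝ) + m + 1) * ((k + m).factorial : ℝ) := by
      have := Nat.factorial_succ (k + m)
      push_cast [this]
      ring
    have hkf : ((k.factorial : ℝ)) ≠ 0 := by positivity
    have hmf : (((k + m).factorial : ℝ)) ≠ 0 := by positivity
    have hkm1 : ((k : ℝ) + m + 1) ≠ 0 := by positivity
    rw [pow_add, hfs]
    field_simp
    ring
  have step2 : (∑' k, h k) = z * G r z (m + 2) := by
    rw [hsumh.tsum_eq_zero_add]
    have h0 : h 0 = 0 := by simp [hh]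
    rw [h0, zero_add, G, ← tsum_mul_left]
    apply tsum_congr; intro k
    rw [hh]
    have he : k + 1 + m + 1 = k + (m + 2) := by omega
    simp only [he]
    have hfs : ((k + 1).factorial : ℝ) = ((k : ℝ) + 1) * (k.factorial : ℝ) := by
      exact_mod_cast Nat.factorial_succ k
    rw [hfs]
    have hkf : ((k.factorial : ℝ)) ≠ 0 := by positivity
    have hmf : (((k + (m + 2)).factorial : ℝ)) ≠ 0 := by positivity
    have hk1 : ((k : ℝ) + 1) ≠ 0 := by positivity
    push_cast
    field_simp
    ring
  rw [step1, step2]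

lemma F_eq (lam c u t : ℝ) :
    F lam c u t = G ((lam / (2 * c)) ^ 2) (c ^ 2 * t ^ 2 - u ^ 2) 0 := by
  rw [F, G]
  apply tsum_congr; intro k
  simp [pow_mul, pow_two]

lemma hasDerivAt_F_t (lam c u t : ℝ) :
    HasDerivAt (fun s => F lam c u s)
      (G ((lam / (2 * c)) ^ 2) (c ^ 2 * t ^ 2 - u ^ 2) 1 * (c ^ 2 * (2 * t))) t := by
  have hi : HasDerivAt (fun s : ℝ => c ^ 2 * s ^ 2 - u ^ 2) (c ^ 2 * (2 * t)) t := by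
    simpa using (((hasDerivAt_pow 2 t).const_mul (c ^ 2)).sub_const (u ^ 2))
  have h := (G_hasDerivAt ((lam / (2 * c)) ^ 2) 0 (c ^ 2 * t ^ 2 - u ^ 2)).comp t hi
  have hfe : (fun s => F lam c u s)
      = fun s => G ((lam / (2 * c)) ^ 2) (c ^ 2 * s ^ 2 - u ^ 2) 0 :=
    funext fun s => F_eq lam c u s
  rw [hfe]
  exact h

lemma hasDerivAt_F_u (lam c s v : ℝ) :
    HasDerivAt (fun w => F lam c w s)
      (G ((lam / (2 * c)) ^ 2) (c ^ 2 * s ^ 2 - v ^ 2) 1 * (-(2 * v))) v := by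
  have hi : HasDerivAt (fun w : ℝ => c ^ 2 * s ^ 2 - w ^ 2) (-(2 * v)) v := by
    simpa using ((hasDerivAt_pow 2 v).const_sub (c ^ 2 * s ^ 2))
  have h := (G_hasDerivAt ((lam / (2 * c)) ^ 2) 0 (c ^ 2 * s ^ 2 - v ^ 2)).comp v hi
  have hfe : (fun w => F lam c w s)
      = fun w => G ((lam / (2 * c)) ^ 2) (c ^ 2 * s ^ 2 - w ^ 2) 0 :=
    funext fun w => F_eq lam c w s
  rw [hfe]
  exact h

lemma iter2_F (lam c s u : ℝ) :
    iteratedDeriv 2 (fun v => F lam c v s) u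
      = 4 * u ^ 2 * G ((lam / (2 * c)) ^ 2) (c ^ 2 * s ^ 2 - u ^ 2) 2
        - 2 * G ((lam / (2 * c)) ^ 2) (c ^ 2 * s ^ 2 - u ^ 2) 1 := by
  set r := (lam / (2 * c)) ^ 2 with hr
  have h2 : iteratedDeriv 2 (fun v => F lam c v s)
      = deriv (deriv (fun v => F lam c v s)) := by
    rw [show (2:ℕ) = 1 + 1 from rfl, iteratedDeriv_succ, iteratedDeriv_one]
  rw [h2]
  have hder1 : deriv (fun w => F lam c w s)
      = fun v => G r (c ^ 2 * s ^ 2 - v ^ 2) 1 * (-(2 * v)) :=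
    funext fun v => (hasDerivAt_F_u lam c s v).deriv
  rw [hder1]
  have hi : HasDerivAt (fun w : ℝ => c ^ 2 * s ^ 2 - w ^ 2) (-(2 * u)) u := by
    simpa using ((hasDerivAt_pow 2 u).const_sub (c ^ 2 * s ^ 2))
  have h1 : HasDerivAt (fun v => G r (c ^ 2 * s ^ 2 - v ^ 2) 1)
      (G r (c ^ 2 * s ^ 2 - u ^ 2) 2 * (-(2 * u))) u :=
    by have := (G_hasDerivAt r 1 (c ^ 2 * s ^ 2 - u ^ 2)).comp u hi; exact this
  have h2' : HasDerivAt (fun v : ℝ => -(2 * v)) (-2) u := by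
    simpa using ((hasDerivAt_id u).const_mul (2:ℝ)).fun_neg
  have hmul := h1.fun_mul h2'
  rw [hmul.deriv]
  ring

lemma rhs_term1_eq (lam c t u z : ℝ) (hlam : 0 < lam) (hc : 0 < c) (ht : 0 < t) (k : ℕ) :
    Real.exp (-(lam * t)) * (lam * t) ^ (2 * (k + 1) + 1) /
          (Nat.factorial (2 * (k + 1) + 1) : ℝ) *
          ((Nat.factorial (2 * (k + 1) + 1) : ℝ) /
            (2 ^ (2 * (k + 1)) * (c * t) ^ (2 * (k + 1) + 1) *
              (Nat.factorial k : ℝ) * (Nat.factorial (k + 2) : ℝ))) *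
          z ^ k * (c ^ 2 * t ^ 2 + u ^ 2)
      = (Real.exp (-(lam * t)) * lam * (c ^ 2 * t ^ 2 + u ^ 2) / (c * (lam / (2 * c)) ^ 2)) *
          (((lam / (2 * c)) ^ 2) ^ (k + 2) * z ^ k /
            ((Nat.factorial k : ℝ) * (Nat.factorial (k + 2) : ℝ))) := by
  have h1 : ((2 * (k + 1) + 1).factorial : ℝ) ≠ 0 := by positivity
  have h2 : ((k.factorial : ℝ)) ≠ 0 := by positivity
  have h3 : (((k + 2).factorial : ℝ)) ≠ 0 := by positivity
  have hcn : c ≠ 0 := hc.ne'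
  have htn : t ≠ 0 := ht.ne'
  have hln : lam ≠ 0 := hlam.ne'
  have h4 : (2:ℝ) ^ (2 * (k + 1)) = 4 ^ (k + 1) := by
    rw [pow_mul]; norm_num
  have hr4 : ((lam / (2 * c)) ^ 2) = lam ^ 2 / (4 * c ^ 2) := by
    rw [div_pow, mul_pow]; norm_num
  rw [h4, hr4]
  simp only [div_pow]
  field_simp
  ring

lemma rhs_term2_eq (lam c t u z : ℝ) (hlam : 0 < lam) (hc : 0 < c) (ht : 0 < t) (k : ℕ) :
    Real.exp (-(lam * t)) * (lam * t) ^ (2 * (k + 1) + 2) /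
          (Nat.factorial (2 * (k + 1) + 2) : ℝ) *
          ((Nat.factorial (2 * (k + 1) + 2) : ℝ) /
            ((Nat.factorial (k + 3) : ℝ) * (Nat.factorial k : ℝ))) *
          (z ^ k * (c ^ 2 * t ^ 2 + 3 * u ^ 2)) /
          (2 * c * t) ^ (2 * (k + 1) + 1)
      = (Real.exp (-(lam * t)) * lam ^ 2 * t * (c ^ 2 * t ^ 2 + 3 * u ^ 2) /
          (2 * c * ((lam / (2 * c)) ^ 2) ^ 2)) *
          (((lam / (2 * c)) ^ 2) ^ (k + 3) * z ^ k /
            ((Nat.factorial k : ℝ) * (Nat.factorial (k + 3) : ℝ))) := by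
  have h1 : ((2 * (k + 1) + 2).factorial : ℝ) ≠ 0 := by positivity
  have h2 : ((k.factorial : ℝ)) ≠ 0 := by positivity
  have h3 : (((k + 3).factorial : ℝ)) ≠ 0 := by positivity
  have hcn : c ≠ 0 := hc.ne'
  have htn : t ≠ 0 := ht.ne'
  have hln : lam ≠ 0 := hlam.ne'
  have h4 : (2 * c * t) ^ (2 * (k + 1) + 1)
      = (4:ℝ) ^ (k + 1) * 2 * (c * t) ^ (2 * (k + 1) + 1) := by
    rw [show (2:ℝ) * c * t = 2 * (c * t) by ring, mul_pow, pow_succ, pow_mul]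
    norm_num
  have hr4 : ((lam / (2 * c)) ^ 2) = lam ^ 2 / (4 * c ^ 2) := by
    rw [div_pow, mul_pow]; norm_num
  have h5 : ((c * t):ℝ) ^ (2 * (k + 1) + 1) = (c * t) ^ (2 * k) * (c * t) ^ 3 := by
    rw [← pow_add]; ring_nf
  have h6 : ((c * t):ℝ) ^ (2 * k) = (c ^ 2 * t ^ 2) ^ k := by
    rw [mul_pow, pow_mul, pow_mul, ← mul_pow]
  rw [h4, hr4, h5, h6]
  simp only [div_pow]
  field_simp
  ring

lemma final_algebra (lam c t u z r a b d e : ℝ) (hlam : 0 < lam) (hc : 0 < c)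
    (hz : z ≠ 0) (hzv : z = c ^ 2 * t ^ 2 - u ^ 2) (hrv : r = lam ^ 2 / (4 * c ^ 2))
    (h2 : z * d = r * a - b) (h3 : z * e = r * b - 2 * d) :
    Real.exp (-(lam * t)) / c *
      (lam * a + b * (c ^ 2 * (2 * t)) + 2 * c ^ 2 / lam * (4 * u ^ 2 * d - 2 * b) +
        4 * c ^ 2 / lam ^ 2 *
          (4 * u ^ 2 * (e * (c ^ 2 * (2 * t))) - 2 * (d * (c ^ 2 * (2 * t)))))
    = (Real.exp (-(lam * t)) * lam * (c ^ 2 * t ^ 2 + u ^ 2) / (c * r)) * d +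
      (Real.exp (-(lam * t)) * lam ^ 2 * t * (c ^ 2 * t ^ 2 + 3 * u ^ 2) / (2 * c * r ^ 2)) * e := by
  have hln : lam ≠ 0 := hlam.ne'
  have hcn : c ≠ 0 := hc.ne'
  have hd : d = (r * a - b) / z := by rw [eq_div_iff hz]; linarith [h2]
  have he : e = (r * b - 2 * d) / z := by rw [eq_div_iff hz]; linarith [h3]
  subst hzv hrv
  have hz' : t ^ 2 * c ^ 2 - u ^ 2 ≠ 0 := by rwa [mul_comm] at hz
  rw [he, hd]
  field_simp
  ring

/-- The three-dimensional density decomposes as a Poisson mixture of the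
conditional densities of `𝒰(t)` given `N(t) = 2k+1` and `N(t) = 2k+2`
(`k ≥ 1`; both series are written with the shift `k ↦ k+1`). -/
theorem density3d_conditional_decomposition
    (lam c t u : ℝ) (hlam : 0 < lam) (hc : 0 < c) (ht : 0 < t)
    (hu0 : 0 < u) (huct : u < c * t) :
    Real.exp (-(lam * t)) / c *
        (lam * F lam c u t + deriv (fun s => F lam c u s) t +
          2 * c ^ 2 / lam * iteratedDeriv 2 (fun v => F lam c v t) u +
          4 * c ^ 2 / lam ^ 2 *
            deriv (fun s => iteratedDeriv 2 (fun v => F lam c v s) u) t) =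
      (∑' k : ℕ, Real.exp (-(lam * t)) * (lam * t) ^ (2 * (k + 1) + 1) /
          (Nat.factorial (2 * (k + 1) + 1) : ℝ) *
          ((Nat.factorial (2 * (k + 1) + 1) : ℝ) /
            (2 ^ (2 * (k + 1)) * (c * t) ^ (2 * (k + 1) + 1) *
              (Nat.factorial k : ℝ) * (Nat.factorial (k + 2) : ℝ))) *
          (c ^ 2 * t ^ 2 - u ^ 2) ^ k * (c ^ 2 * t ^ 2 + u ^ 2)) +
      (∑' k : ℕ, Real.exp (-(lam * t)) * (lam * t) ^ (2 * (k + 1) + 2) /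
          (Nat.factorial (2 * (k + 1) + 2) : ℝ) *
          ((Nat.factorial (2 * (k + 1) + 2) : ℝ) /
            ((Nat.factorial (k + 3) : ℝ) * (Nat.factorial k : ℝ))) *
          ((c ^ 2 * t ^ 2 - u ^ 2) ^ k * (c ^ 2 * t ^ 2 + 3 * u ^ 2)) /
          (2 * c * t) ^ (2 * (k + 1) + 1)) := by
  set r : ℝ := (lam / (2 * c)) ^ 2 with hr
  set z : ℝ := c ^ 2 * t ^ 2 - u ^ 2 with hzdef
  have hzpos : 0 < z := by rw [hzdef]; nlinarith
  have hz : z ≠ 0 := hzpos.ne'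
  -- rewrite the four analytic quantities
  have e0 : F lam c u t = G r z 0 := F_eq lam c u t
  have e1 : deriv (fun s => F lam c u s) t = G r z 1 * (c ^ 2 * (2 * t)) :=
    (hasDerivAt_F_t lam c u t).deriv
  have e2 : iteratedDeriv 2 (fun v => F lam c v t) u
      = 4 * u ^ 2 * G r z 2 - 2 * G r z 1 := iter2_F lam c t u
  have e3 : deriv (fun s => iteratedDeriv 2 (fun v => F lam c v s) u) t
      = 4 * u ^ 2 * (G r z 3 * (c ^ 2 * (2 * t))) - 2 * (G r z 2 * (c ^ 2 * (2 * t))) := by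
    have hfun : (fun s => iteratedDeriv 2 (fun v => F lam c v s) u)
        = fun s => 4 * u ^ 2 * G r (c ^ 2 * s ^ 2 - u ^ 2) 2
            - 2 * G r (c ^ 2 * s ^ 2 - u ^ 2) 1 :=
      funext fun s => iter2_F lam c s u
    rw [hfun]
    have hi : HasDerivAt (fun s : ℝ => c ^ 2 * s ^ 2 - u ^ 2) (c ^ 2 * (2 * t)) t := by
      simpa using (((hasDerivAt_pow 2 t).const_mul (c ^ 2)).sub_const (u ^ 2))
    have hA : HasDerivAt (fun s => G r (c ^ 2 * s ^ 2 - u ^ 2) 2)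
        (G r z 3 * (c ^ 2 * (2 * t))) t := by
        have := (G_hasDerivAt r 2 z).comp t hi; exact this
    have hB : HasDerivAt (fun s => G r (c ^ 2 * s ^ 2 - u ^ 2) 1)
        (G r z 2 * (c ^ 2 * (2 * t))) t := by
        have := (G_hasDerivAt r 1 z).comp t hi; exact this
    exact ((hA.const_mul (4 * u ^ 2)).sub (hB.const_mul 2)).deriv
  rw [e0, e1, e2, e3]
  -- rewrite the two series
  have hS1 : (∑' k : ℕ, Real.exp (-(lam * t)) * (lam * t) ^ (2 * (k + 1) + 1) /
          (Nat.factorial (2 * (k + 1) + 1) : ℝ) *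
          ((Nat.factorial (2 * (k + 1) + 1) : ℝ) /
            (2 ^ (2 * (k + 1)) * (c * t) ^ (2 * (k + 1) + 1) *
              (Nat.factorial k : ℝ) * (Nat.factorial (k + 2) : ℝ))) *
          z ^ k * (c ^ 2 * t ^ 2 + u ^ 2))
      = (Real.exp (-(lam * t)) * lam * (c ^ 2 * t ^ 2 + u ^ 2) / (c * r)) * G r z 2 := by
    rw [G, ← tsum_mul_left]
    exact tsum_congr fun k => rhs_term1_eq lam c t u z hlam hc ht k
  have hS2 : (∑' k : ℕ, Real.exp (-(lam * t)) * (lam * t) ^ (2 * (k + 1) + 2) /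
          (Nat.factorial (2 * (k + 1) + 2) : ℝ) *
          ((Nat.factorial (2 * (k + 1) + 2) : ℝ) /
            ((Nat.factorial (k + 3) : ℝ) * (Nat.factorial k : ℝ))) *
          (z ^ k * (c ^ 2 * t ^ 2 + 3 * u ^ 2)) /
          (2 * c * t) ^ (2 * (k + 1) + 1))
      = (Real.exp (-(lam * t)) * lam ^ 2 * t * (c ^ 2 * t ^ 2 + 3 * u ^ 2) /
          (2 * c * r ^ 2)) * G r z 3 := by
    rw [G, ← tsum_mul_left]
    exact tsum_congr fun k => rhs_term2_eq lam c t u z hlam hc ht k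
  rw [hS1, hS2]
  -- the recurrences
  have hrec2 : z * G r z 2 = r * G r z 0 - G r z 1 := by
    have := G_rec r z 0
    push_cast at this
    simpa using this
  have hrec3 : z * G r z 3 = r * G r z 1 - 2 * G r z 2 := by
    have := G_rec r z 1
    push_cast at this
    norm_num at this
    linarith [this]
  have hrv : r = lam ^ 2 / (4 * c ^ 2) := by
    rw [hr, div_pow, mul_pow]; norm_num
  exact final_algebra lam c t u z r (G r z 0) (G r z 1) (G r z 2) (G r z 3)
    hlam hc hz hzdef hrv hrec2 hrec3
end
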